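/- arXiv:1509.00231 — 3 statements merged into one kernel-verified Lean document; each statement's English description precedes it below -/
import Mathlib

section
/- (Characterisation of uniform ergodicity) Let B be a transition matrix on the finite state space S, let X and Y be two independent copies of the Markov chain with transition matrix B (so (X,Y) is the Markov chain on S×S with transition probabilities P((X_{t+1},Y_{t+1})=(e_i,e_k) | (X_t,Y_t)=(e_j,e_l)) = b_{ij}b_{kl}), and let T := inf{t ≥ 1 : X_t = Y_t} be their first meeting time. The following are equivalent: (i) the chain with transition matrix B is uniformly ergodic; (ii) the chain has exactly one closed communicating class (i.e. is irreducible up to transient states) and is aperiodic; (iii) there exists β > 0 such that sup_{x,y∈S} E_{xy}[e^{βT}] < ∞, where E_{xy} denotes expectation conditional on X_0 = x and Y_0 = y. -/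
open MeasureTheory Finset
open scoped ENNReal

noncomputable section

namespace DiscreteEBSDE

/-- A column-stochastic transition matrix on a finite state space. -/
def IsTransMat {S : Type*} [Fintype S] (B : Matrix S S ℝ) : Prop :=
  (∀ i j, 0 ≤ B i j) ∧ ∀ j, ∑ i, B i j = 1

/-- A probability vector on a finite state space. -/
def IsProbVec {S : Type*} [Fintype S] (μ : S → ℝ) : Prop :=
  (∀ i, 0 ≤ μ i) ∧ ∑ i, μ i = 1

/-- Total variation distance between measures on a finite state space. -/
def tvDist {S : Type*} [Fintype S] (μ ν : S → ℝ) : ℝ := (∑ x, |μ x - ν x|) / 2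

/-- The chain induced by the column-stochastic matrix `B` is uniformly ergodic:
`B^t μ → π` in total variation, at exponential rate, uniformly in the initial law `μ`. -/
def UniformlyErgodic {S : Type*} [Fintype S] [DecidableEq S] (B : Matrix S S ℝ) : Prop :=
  ∃ π : S → ℝ, IsProbVec π ∧ ∃ R ρ : ℝ, 0 < R ∧ 0 < ρ ∧
    ∀ (t : ℕ) (μ : S → ℝ), IsProbVec μ →
      tvDist ((B ^ t).mulVec μ) π ≤ R * Real.exp (-ρ * t)

/-- `(X, Y)` is (under `μ`) a pair of independent copies of the Markov chain with
column-stochastic transition matrix `B`: the Markov property on path cylinders, with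
product transition probabilities. -/
def IsPairChain {S : Type*} {Ω : Type*} [MeasurableSpace Ω] (B : Matrix S S ℝ)
    (μ : Measure Ω) (X Y : ℕ → Ω → S) : Prop :=
  ∀ (t : ℕ) (w v : ℕ → S) (i k : S),
    μ ({ω | X (t + 1) ω = i ∧ Y (t + 1) ω = k} ∩
        {ω | ∀ s ≤ t, X s ω = w s ∧ Y s ω = v s}) =
      ENNReal.ofReal (B i (w t) * B k (v t)) *
        μ {ω | ∀ s ≤ t, X s ω = w s ∧ Y s ω = v s}

/-- The first meeting time of `X` and `Y` at or after time `t₀`, valued in `ℕ∞`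
(`⊤` if they never meet). -/
def meetTime {S : Type*} {Ω : Type*} (X Y : ℕ → Ω → S) (t₀ : ℕ) (ω : Ω) : ℕ∞ :=
  sInf {n : ℕ∞ | ∃ t : ℕ, n = (t : ℕ∞) ∧ t₀ ≤ t ∧ X t ω = Y t ω}

/-- `e^{β T}` for `T : ℕ∞`, equal to `∞` when `T = ∞`. -/
def expVal (β : ℝ) : ℕ∞ → ℝ≥0∞ :=
  WithTop.recTopCoe ⊤ fun m : ℕ => ENNReal.ofReal (Real.exp (β * m))

/-- `j` leads to `i` for the chain with column-stochastic matrix `B`. -/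
def Leads {S : Type*} [Fintype S] [DecidableEq S] (B : Matrix S S ℝ) (j i : S) : Prop :=
  ∃ n : ℕ, 0 < (B ^ n) i j

/-- Two states communicate if each leads to the other. -/
def Communicates {S : Type*} [Fintype S] [DecidableEq S] (B : Matrix S S ℝ)
    (i j : S) : Prop :=
  Leads B i j ∧ Leads B j i

/-- `C` is a communicating class of the chain `B`. -/
def IsCommClass {S : Type*} [Fintype S] [DecidableEq S] (B : Matrix S S ℝ)
    (C : Set S) : Prop :=
  C.Nonempty ∧ ∀ i ∈ C, ∀ j, j ∈ C ↔ Communicates B i j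

/-- `C` is a closed communicating class of the chain `B`. -/
def IsClosedCommClass {S : Type*} [Fintype S] [DecidableEq S] (B : Matrix S S ℝ)
    (C : Set S) : Prop :=
  IsCommClass B C ∧ ∀ j ∈ C, ∀ i, Leads B j i → i ∈ C

/-- The chain `B` is aperiodic: every state in a closed communicating class has
period `1` (every common divisor of its return times is `1`). -/
def AperiodicChain {S : Type*} [Fintype S] [DecidableEq S] (B : Matrix S S ℝ) : Prop :=
  ∀ i : S, (∃ C : Set S, IsClosedCommClass B C ∧ i ∈ C) →
    ∀ d : ℕ, (∀ n : ℕ, 1 ≤ n → 0 < (B ^ n) i i → d ∣ n) → d = 1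

/-- The Nummelin split matrix `𝓑` on the split space `S × Bool` (second coordinate
`true` is the layer `S₁`): columns from `S₀` follow `C = (1-γ)⁻¹(B - γA)`, columns from
`S₁` follow `A`, and the result is split between the layers with masses `1-γ` and `γ`. -/
def splitMatrix {N : ℕ} (γ : ℝ) (A B : Matrix (Fin N) (Fin N) ℝ) :
    Matrix (Fin N × Bool) (Fin N × Bool) ℝ := fun p q =>
  (if p.2 then γ else 1 - γ) *
    (if q.2 then A p.1 q.1 else (1 - γ)⁻¹ * (B p.1 q.1 - γ * A p.1 q.1))

variable {N : ℕ}

/-- Pair (product) transition matrix on `Fin N × Fin N`. -/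
def pairK (B : Matrix (Fin N) (Fin N) ℝ) :
    Matrix (Fin N × Fin N) (Fin N × Fin N) ℝ :=
  fun q p => B q.1 p.1 * B q.2 p.2

/-- Pair kernel killed on arrival at the diagonal. -/
def pairD (B : Matrix (Fin N) (Fin N) ℝ) :
    Matrix (Fin N × Fin N) (Fin N × Fin N) ℝ :=
  fun q p => if q.1 = q.2 then 0 else pairK B q p

/-- Projection on the diagonal. -/
def pairΔ : Matrix (Fin N × Fin N) (Fin N × Fin N) ℝ :=
  fun q p => if q = p ∧ q.1 = q.2 then 1 else 0

/-- Total mass of pair paths avoiding the diagonal at times `1..t`. -/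
def offSum (B : Matrix (Fin N) (Fin N) ℝ) (t : ℕ) (x y : Fin N) : ℝ :=
  ∑ q, (pairD B ^ t) q (x, y)

section TransMat
variable {B : Matrix (Fin N) (Fin N) ℝ} (hB : IsTransMat B)

lemma Bpow_nonneg (hB : IsTransMat B) (t : ℕ) (i j : Fin N) : 0 ≤ (B ^ t) i j := by
  induction t generalizing i j with
  | zero => simp [Matrix.one_apply]; positivity
  | succ t ih =>
    rw [pow_succ, Matrix.mul_apply]
    exact Finset.sum_nonneg fun k _ => mul_nonneg (ih i k) (hB.1 k j)

lemma Bpow_colsum (hB : IsTransMat B) (t : ℕ) (j : Fin N) : ∑ i, (B ^ t) i j = 1 := by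
  induction t generalizing j with
  | zero => simp [Matrix.one_apply]
  | succ t ih =>
    rw [pow_succ']
    simp only [Matrix.mul_apply]
    rw [Finset.sum_comm]
    have : ∀ k ∈ Finset.univ, (∑ i, B i k * (B ^ t) k j) = (B ^ t) k j := by
      intro k _
      rw [← Finset.sum_mul, hB.2 k, one_mul]
    rw [Finset.sum_congr rfl this, ih]

lemma pairK_nonneg (hB : IsTransMat B) (q p : Fin N × Fin N) : 0 ≤ pairK B q p :=
  mul_nonneg (hB.1 _ _) (hB.1 _ _)

lemma pairK_colsum (hB : IsTransMat B) (p : Fin N × Fin N) : ∑ q, pairK B q p = 1 := by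
  rw [Fintype.sum_prod_type]
  simp only [pairK]
  rw [← Finset.sum_mul_sum, hB.2, hB.2, one_mul]

lemma pairKpow (hB : IsTransMat B) (t : ℕ) (q p : Fin N × Fin N) :
    (pairK B ^ t) q p = (B ^ t) q.1 p.1 * (B ^ t) q.2 p.2 := by
  induction t generalizing q p with
  | zero => simp [Matrix.one_apply, Prod.ext_iff]; by_cases h1 : q.1 = p.1 <;>
      by_cases h2 : q.2 = p.2 <;> simp [h1, h2]
  | succ t ih =>
    rw [pow_succ', pow_succ', Matrix.mul_apply]
    simp only [ih]
    rw [Fintype.sum_prod_type]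
    simp only [pairK, Matrix.mul_apply]
    rw [Finset.sum_mul_sum]
    apply Finset.sum_congr rfl; intro a _; apply Finset.sum_congr rfl; intro b _
    ring


lemma pairD_nonneg (hB : IsTransMat B) (q p : Fin N × Fin N) : 0 ≤ pairD B q p := by
  unfold pairD; split
  · exact le_refl 0
  · exact pairK_nonneg hB q p

lemma pairDpow_nonneg (hB : IsTransMat B) (t : ℕ) (q p : Fin N × Fin N) :
    0 ≤ (pairD B ^ t) q p := by
  induction t generalizing q p with
  | zero => simp [Matrix.one_apply]; positivity
  | succ t ih =>
    rw [pow_succ, Matrix.mul_apply]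
    exact Finset.sum_nonneg fun k _ => mul_nonneg (ih q k) (pairD_nonneg hB k p)

lemma pairDpow_le_pairKpow (hB : IsTransMat B) (t : ℕ) (q p : Fin N × Fin N) :
    (pairD B ^ t) q p ≤ (pairK B ^ t) q p := by
  induction t generalizing q p with
  | zero => simp
  | succ t ih =>
    rw [pow_succ, pow_succ, Matrix.mul_apply, Matrix.mul_apply]
    apply Finset.sum_le_sum
    intro k _
    have h1 : pairD B k p ≤ pairK B k p := by
      unfold pairD; split
      · exact pairK_nonneg hB k p
      · exact le_refl _
    calc (pairD B ^ t) q k * pairD B k p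
        ≤ (pairK B ^ t) q k * pairD B k p :=
          mul_le_mul_of_nonneg_right (ih q k) (pairD_nonneg hB k p)
      _ ≤ (pairK B ^ t) q k * pairK B k p := by
          apply mul_le_mul_of_nonneg_left h1
          exact le_trans (pairDpow_nonneg hB t q k) (ih q k)

lemma pairDpow_diag_row (hB : IsTransMat B) (t : ℕ) (ht : 1 ≤ t) (q p : Fin N × Fin N)
    (hq : q.1 = q.2) : (pairD B ^ t) q p = 0 := by
  obtain ⟨t, rfl⟩ := Nat.exists_eq_add_of_le ht
  rw [add_comm, pow_succ', Matrix.mul_apply]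
  apply Finset.sum_eq_zero
  intro k _
  have : pairD B q k = 0 := by unfold pairD; simp [hq]
  rw [this, zero_mul]

lemma pairΔ_mul_apply (W : Matrix (Fin N × Fin N) (Fin N × Fin N) ℝ)
    (q p : Fin N × Fin N) :
    ((pairΔ : Matrix (Fin N × Fin N) (Fin N × Fin N) ℝ) * W) q p
      = if q.1 = q.2 then W q p else 0 := by
  rw [Matrix.mul_apply]
  have h : ∀ r ∈ Finset.univ, pairΔ q r * W r p
      = if q = r then (if q.1 = q.2 then W r p else 0) else 0 := by
    intro r _
    by_cases h1 : q = r <;> by_cases h2 : q.1 = q.2 <;> simp [pairΔ, h1, h2]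
  rw [Finset.sum_congr rfl h, Finset.sum_ite_eq]
  simp

/-- `D = K - Δ * K`. -/
lemma pairD_eq : pairD B = pairK B - pairΔ * pairK B := by
  ext q p
  rw [Matrix.sub_apply, pairΔ_mul_apply]
  unfold pairD
  split <;> simp

/-- First-hit decomposition: `K^t - D^t = ∑_{s<t} K^s * (Δ * (K * D^(t-1-s)))`. -/
lemma meet_decomp (hB : IsTransMat B) (t : ℕ) :
    pairK B ^ t - pairD B ^ t
      = ∑ s ∈ Finset.range t, pairK B ^ s * (pairΔ * (pairK B * pairD B ^ (t - 1 - s))) := by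
  induction t with
  | zero => simp
  | succ t ih =>
    have key : pairK B ^ (t+1) - pairD B ^ (t+1)
        = pairK B * (pairK B ^ t - pairD B ^ t) + pairΔ * (pairK B * pairD B ^ t) := by
      rw [pow_succ', pow_succ' (pairD B), mul_sub]
      have : pairD B * pairD B ^ t
          = pairK B * pairD B ^ t - pairΔ * (pairK B * pairD B ^ t) := by
        rw [pairD_eq (B := B), Matrix.sub_mul, Matrix.mul_assoc]
      rw [this]
      abel
    rw [key, ih, Finset.mul_sum, Finset.sum_range_succ']
    congr 1
    · apply Finset.sum_congr rfl
      intro s hs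
      rw [← Matrix.mul_assoc, ← pow_succ']
      have h : t - 1 - s = t + 1 - 1 - (s + 1) := by omega
      rw [h]
    · simp

/-- Symmetry of the met-mass in the two coordinates. -/
lemma meet_symm (hB : IsTransMat B) (t : ℕ) (i : Fin N) (p : Fin N × Fin N) :
    ∑ k, ((pairK B ^ t - pairD B ^ t)) (i, k) p
      = ∑ k, ((pairK B ^ t - pairD B ^ t)) (k, i) p := by
  rw [meet_decomp hB t]
  simp only [Matrix.sum_apply]
  rw [Finset.sum_comm, Finset.sum_comm (s := Finset.univ)]
  apply Finset.sum_congr rfl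
  intro s _
  set W := pairΔ * (pairK B * pairD B ^ (t - 1 - s)) with hW
  have hWd : ∀ (q : Fin N × Fin N) p, W q p = if q.1 = q.2 then (pairK B * pairD B ^ (t - 1 - s)) q p else 0 :=
    fun q p => pairΔ_mul_apply _ q p
  have expand : ∀ a b : Fin N, (pairK B ^ s * W) (a, b) p
      = ∑ r, (if r.1 = r.2 then (pairK B * pairD B ^ (t - 1 - s)) r p else 0)
          * ((B ^ s) a r.1 * (B ^ s) b r.2) := by
    intro a b
    rw [Matrix.mul_apply]
    apply Finset.sum_congr rfl
    intro r _
    rw [hWd, pairKpow hB]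
    ring
  have sum1 : ∀ r : Fin N × Fin N, ∑ k, (B ^ s) i r.1 * (B ^ s) k r.2 = (B ^ s) i r.1 := by
    intro r
    rw [← Finset.mul_sum, Bpow_colsum hB, mul_one]
  have sum2 : ∀ r : Fin N × Fin N, ∑ k, (B ^ s) k r.1 * (B ^ s) i r.2 = (B ^ s) i r.2 := by
    intro r
    rw [← Finset.sum_mul, Bpow_colsum hB, one_mul]
  calc ∑ k, (pairK B ^ s * W) (i, k) p
      = ∑ r, (if r.1 = r.2 then (pairK B * pairD B ^ (t - 1 - s)) r p else 0) * (B ^ s) i r.1 := by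
        simp only [expand]
        rw [Finset.sum_comm]
        apply Finset.sum_congr rfl
        intro r _
        rw [← Finset.mul_sum, sum1]
    _ = ∑ r, (if r.1 = r.2 then (pairK B * pairD B ^ (t - 1 - s)) r p else 0) * (B ^ s) i r.2 := by
        apply Finset.sum_congr rfl
        intro r _
        by_cases h : r.1 = r.2
        · rw [h]
        · simp [h]
    _ = ∑ k, (pairK B ^ s * W) (k, i) p := by
        simp only [expand]
        rw [Finset.sum_comm]
        apply Finset.sum_congr rfl
        intro r _
        rw [← Finset.mul_sum, sum2]


lemma diag_sum (g : Fin N × Fin N → ℝ) :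
    ∑ q : Fin N × Fin N, (if q.1 = q.2 then g q else 0) = ∑ j, g (j, j) := by
  rw [Fintype.sum_prod_type]
  apply Finset.sum_congr rfl
  intro a _
  simp [Finset.sum_ite_eq]

lemma offSum_nonneg (hB : IsTransMat B) (t : ℕ) (x y : Fin N) : 0 ≤ offSum B t x y :=
  Finset.sum_nonneg fun q _ => pairDpow_nonneg hB t q (x, y)

lemma offSum_zero (x y : Fin N) : offSum B 0 x y = 1 := by
  unfold offSum
  simp [Matrix.one_apply, Finset.sum_ite_eq']

lemma colsum_D_le (hB : IsTransMat B) (r : Fin N × Fin N) : ∑ q, pairD B q r ≤ 1 := by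
  calc ∑ q, pairD B q r ≤ ∑ q, pairK B q r := by
        apply Finset.sum_le_sum
        intro q _
        unfold pairD
        split
        · exact pairK_nonneg hB q r
        · exact le_refl _
    _ = 1 := pairK_colsum hB r

lemma colsum_Dpow_le (hB : IsTransMat B) {m : ℕ} (hm : 1 ≤ m) {i0 : Fin N} {δ : ℝ}
    (hδ0 : 0 ≤ δ) (hD : ∀ j, δ ≤ (B ^ m) i0 j) (r : Fin N × Fin N) :
    ∑ q, (pairD B ^ m) q r ≤ 1 - δ ^ 2 := by
  have step : ∀ q : Fin N × Fin N,
      (pairD B ^ m) q r ≤ (pairK B ^ m) q r - (if q.1 = q.2 then (pairK B ^ m) q r else 0) := by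
    intro q
    by_cases h : q.1 = q.2
    · rw [pairDpow_diag_row hB m hm q r h]
      simp [h]
    · simp only [h, if_neg, ite_false, sub_zero]
      exact pairDpow_le_pairKpow hB m q r
  calc ∑ q, (pairD B ^ m) q r
      ≤ ∑ q, ((pairK B ^ m) q r - (if q.1 = q.2 then (pairK B ^ m) q r else 0)) :=
        Finset.sum_le_sum fun q _ => step q
    _ = 1 - ∑ j, (B ^ m) j r.1 * (B ^ m) j r.2 := by
        rw [Finset.sum_sub_distrib]
        have h1 : ∑ q, (pairK B ^ m) q r = 1 := by
          have : ∀ q ∈ Finset.univ, (pairK B ^ m) q r = pairK (B ^ m) q r := by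
            intro q _; rw [pairKpow hB]; rfl
          rw [Finset.sum_congr rfl this]
          exact pairK_colsum ⟨fun i j => Bpow_nonneg hB m i j, fun j => Bpow_colsum hB m j⟩ r
        rw [h1, diag_sum]
        congr 1
        apply Finset.sum_congr rfl
        intro j _
        rw [pairKpow hB]
    _ ≤ 1 - δ ^ 2 := by
        have : δ ^ 2 ≤ ∑ j, (B ^ m) j r.1 * (B ^ m) j r.2 := by
          have h0 : δ * δ ≤ (B ^ m) i0 r.1 * (B ^ m) i0 r.2 := by
            exact mul_le_mul (hD r.1) (hD r.2) hδ0 (Bpow_nonneg hB m i0 r.1)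
          calc δ ^ 2 = δ * δ := sq δ
            _ ≤ (B ^ m) i0 r.1 * (B ^ m) i0 r.2 := h0
            _ ≤ ∑ j, (B ^ m) j r.1 * (B ^ m) j r.2 := by
                apply Finset.single_le_sum (f := fun j => (B ^ m) j r.1 * (B ^ m) j r.2)
                · intro j _
                  exact mul_nonneg (Bpow_nonneg hB m j r.1) (Bpow_nonneg hB m j r.2)
                · exact Finset.mem_univ i0
        linarith

lemma offSum_step (hB : IsTransMat B) {m : ℕ} {c : ℝ}
    (hc : ∀ r, ∑ q, (pairD B ^ m) q r ≤ c) (t : ℕ) (x y : Fin N) :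
    offSum B (t + m) x y ≤ c * offSum B t x y := by
  unfold offSum
  have : pairD B ^ (t + m) = pairD B ^ m * pairD B ^ t := by
    rw [add_comm, pow_add]
  rw [this]
  simp only [Matrix.mul_apply]
  rw [Finset.sum_comm]
  calc ∑ r, ∑ q, (pairD B ^ m) q r * (pairD B ^ t) r (x, y)
      = ∑ r, (∑ q, (pairD B ^ m) q r) * (pairD B ^ t) r (x, y) := by
        apply Finset.sum_congr rfl
        intro r _
        rw [Finset.sum_mul]
    _ ≤ ∑ r, c * (pairD B ^ t) r (x, y) := by
        apply Finset.sum_le_sum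
        intro r _
        exact mul_le_mul_of_nonneg_right (hc r) (pairDpow_nonneg hB t r (x, y))
    _ = c * ∑ r, (pairD B ^ t) r (x, y) := by rw [Finset.mul_sum]

lemma offSum_anti (hB : IsTransMat B) {s t : ℕ} (h : s ≤ t) (x y : Fin N) :
    offSum B t x y ≤ offSum B s x y := by
  obtain ⟨d, rfl⟩ := Nat.exists_eq_add_of_le h
  induction d with
  | zero => simp
  | succ d ih =>
    have h1 : offSum B (s + (d+1)) x y ≤ 1 * offSum B (s + d) x y := by
      have : s + (d + 1) = (s + d) + 1 := by omega
      rw [this]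
      apply offSum_step hB _ (s+d) x y
      intro r
      rw [pow_one]
      exact colsum_D_le hB r
    rw [one_mul] at h1
    exact le_trans h1 (ih (by omega))

lemma offSum_le_one (hB : IsTransMat B) (t : ℕ) (x y : Fin N) : offSum B t x y ≤ 1 := by
  have := offSum_anti hB (Nat.zero_le t) x y
  rwa [offSum_zero] at this

lemma offSum_geom (hB : IsTransMat B) {m : ℕ} (hm : 1 ≤ m) {c : ℝ} (hc0 : 0 ≤ c)
    (hc : ∀ r, ∑ q, (pairD B ^ m) q r ≤ c) (t : ℕ) (x y : Fin N) :
    offSum B t x y ≤ c ^ (t / m) := by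
  induction t using Nat.strong_induction_on with
  | _ t ih =>
    by_cases h : t < m
    · rw [Nat.div_eq_of_lt h, pow_zero]
      exact offSum_le_one hB t x y
    · push_neg at h
      have ht : t = (t - m) + m := by omega
      have h1 : offSum B t x y ≤ c * offSum B (t - m) x y := by
        have := offSum_step hB hc (t - m) x y
        rwa [← ht] at this
      have h2 : offSum B (t - m) x y ≤ c ^ ((t - m) / m) := ih (t - m) (by omega)
      have h3 : t / m = (t - m) / m + 1 := Nat.div_eq_sub_div (by omega) h
      rw [h3, pow_succ]
      calc offSum B t x y ≤ c * offSum B (t - m) x y := h1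
        _ ≤ c * c ^ ((t - m) / m) := mul_le_mul_of_nonneg_left h2 hc0
        _ = c ^ ((t - m) / m) * c := mul_comm _ _

lemma basis_diff (hB : IsTransMat B) (t : ℕ) (x y i : Fin N) :
    |(B ^ t) i x - (B ^ t) i y|
      ≤ (∑ k, (pairD B ^ t) (i, k) (x, y)) + ∑ k, (pairD B ^ t) (k, i) (x, y) := by
  have hx : ∑ k, (pairK B ^ t) (i, k) (x, y) = (B ^ t) i x := by
    have : ∀ k ∈ Finset.univ, (pairK B ^ t) (i, k) (x, y) = (B ^ t) i x * (B ^ t) k y :=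
      fun k _ => pairKpow hB t (i, k) (x, y)
    rw [Finset.sum_congr rfl this, ← Finset.mul_sum, Bpow_colsum hB, mul_one]
  have hy : ∑ k, (pairK B ^ t) (k, i) (x, y) = (B ^ t) i y := by
    have : ∀ k ∈ Finset.univ, (pairK B ^ t) (k, i) (x, y) = (B ^ t) k x * (B ^ t) i y :=
      fun k _ => pairKpow hB t (k, i) (x, y)
    rw [Finset.sum_congr rfl this, ← Finset.sum_mul, Bpow_colsum hB, one_mul]
  have hs := meet_symm hB t i (x, y)
  simp only [Matrix.sub_apply, Finset.sum_sub_distrib, hx, hy] at hs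
  have key : (B ^ t) i x - (B ^ t) i y
      = (∑ k, (pairD B ^ t) (i, k) (x, y)) - ∑ k, (pairD B ^ t) (k, i) (x, y) := by
    linarith
  rw [key]
  calc |(∑ k, (pairD B ^ t) (i, k) (x, y)) - ∑ k, (pairD B ^ t) (k, i) (x, y)|
      ≤ |∑ k, (pairD B ^ t) (i, k) (x, y)| + |∑ k, (pairD B ^ t) (k, i) (x, y)| := abs_sub _ _
    _ = (∑ k, (pairD B ^ t) (i, k) (x, y)) + ∑ k, (pairD B ^ t) (k, i) (x, y) := by
        rw [abs_of_nonneg, abs_of_nonneg]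
        · exact Finset.sum_nonneg fun k _ => pairDpow_nonneg hB t (k, i) (x, y)
        · exact Finset.sum_nonneg fun k _ => pairDpow_nonneg hB t (i, k) (x, y)

lemma tv_basis (hB : IsTransMat B) (t : ℕ) (x y : Fin N) :
    ∑ i, |(B ^ t) i x - (B ^ t) i y| ≤ 2 * offSum B t x y := by
  calc ∑ i, |(B ^ t) i x - (B ^ t) i y|
      ≤ ∑ i, ((∑ k, (pairD B ^ t) (i, k) (x, y)) + ∑ k, (pairD B ^ t) (k, i) (x, y)) :=
        Finset.sum_le_sum fun i _ => basis_diff hB t x y i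
    _ = 2 * offSum B t x y := by
        rw [Finset.sum_add_distrib]
        unfold offSum
        rw [Fintype.sum_prod_type]
        rw [two_mul]
        congr 1
        rw [Finset.sum_comm]

lemma tv_mixture (hB : IsTransMat B) (t : ℕ) {C : ℝ}
    (h : ∀ x y : Fin N, offSum B t x y ≤ C)
    {μ ν : Fin N → ℝ} (hμ : (∀ i, 0 ≤ μ i) ∧ ∑ i, μ i = 1)
    (hν : (∀ i, 0 ≤ ν i) ∧ ∑ i, ν i = 1) :
    tvDist ((B ^ t).mulVec μ) ((B ^ t).mulVec ν) ≤ C := by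
  have key : ∀ i, (B ^ t).mulVec μ i - (B ^ t).mulVec ν i
      = ∑ x, ∑ y, μ x * ν y * ((B ^ t) i x - (B ^ t) i y) := by
    intro i
    have e1 : ∑ x, ∑ y, μ x * ν y * (B ^ t) i x = (B ^ t).mulVec μ i := by
      have inner : ∀ x ∈ Finset.univ, ∑ y, μ x * ν y * (B ^ t) i x
          = (B ^ t) i x * μ x := by
        intro x _
        have : ∀ y ∈ Finset.univ, μ x * ν y * (B ^ t) i x
            = (μ x * (B ^ t) i x) * ν y := fun y _ => by ring
        rw [Finset.sum_congr rfl this, ← Finset.mul_sum, hν.2, mul_one, mul_comm]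
      rw [Finset.sum_congr rfl inner]
      simp [Matrix.mulVec, dotProduct]
    have e2 : ∑ x, ∑ y, μ x * ν y * (B ^ t) i y = (B ^ t).mulVec ν i := by
      have inner : ∀ x ∈ Finset.univ, ∑ y, μ x * ν y * (B ^ t) i y
          = μ x * ∑ y, (B ^ t) i y * ν y := by
        intro x _
        rw [Finset.mul_sum]
        apply Finset.sum_congr rfl
        intro y _
        ring
      rw [Finset.sum_congr rfl inner, ← Finset.sum_mul, hμ.2, one_mul]
      simp [Matrix.mulVec, dotProduct]
    have expand : ∑ x, ∑ y, μ x * ν y * ((B ^ t) i x - (B ^ t) i y)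
        = (∑ x, ∑ y, μ x * ν y * (B ^ t) i x) - ∑ x, ∑ y, μ x * ν y * (B ^ t) i y := by
      rw [← Finset.sum_sub_distrib]
      apply Finset.sum_congr rfl
      intro x _
      rw [← Finset.sum_sub_distrib]
      apply Finset.sum_congr rfl
      intro y _
      ring
    rw [expand, e1, e2]
  have habs : ∀ i, |(B ^ t).mulVec μ i - (B ^ t).mulVec ν i|
      ≤ ∑ x, ∑ y, μ x * ν y * |(B ^ t) i x - (B ^ t) i y| := by
    intro i
    rw [key i]
    calc |∑ x, ∑ y, μ x * ν y * ((B ^ t) i x - (B ^ t) i y)|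
        ≤ ∑ x, |∑ y, μ x * ν y * ((B ^ t) i x - (B ^ t) i y)| :=
          Finset.abs_sum_le_sum_abs _ _
      _ ≤ ∑ x, ∑ y, μ x * ν y * |(B ^ t) i x - (B ^ t) i y| := by
          apply Finset.sum_le_sum
          intro x _
          calc |∑ y, μ x * ν y * ((B ^ t) i x - (B ^ t) i y)|
              ≤ ∑ y, |μ x * ν y * ((B ^ t) i x - (B ^ t) i y)| :=
                Finset.abs_sum_le_sum_abs _ _
            _ = ∑ y, μ x * ν y * |(B ^ t) i x - (B ^ t) i y| := by
                apply Finset.sum_congr rfl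
                intro y _
                rw [abs_mul, abs_of_nonneg (mul_nonneg (hμ.1 x) (hν.1 y))]
  have main : ∑ i, |(B ^ t).mulVec μ i - (B ^ t).mulVec ν i| ≤ 2 * C := by
    calc ∑ i, |(B ^ t).mulVec μ i - (B ^ t).mulVec ν i|
        ≤ ∑ i, ∑ x, ∑ y, μ x * ν y * |(B ^ t) i x - (B ^ t) i y| :=
          Finset.sum_le_sum fun i _ => habs i
      _ = ∑ x, ∑ y, μ x * ν y * ∑ i, |(B ^ t) i x - (B ^ t) i y| := by
          rw [Finset.sum_comm]
          apply Finset.sum_congr rfl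
          intro x _
          rw [Finset.sum_comm]
          apply Finset.sum_congr rfl
          intro y _
          rw [Finset.mul_sum]
      _ ≤ ∑ x, ∑ y, μ x * ν y * (2 * C) := by
          apply Finset.sum_le_sum
          intro x _
          apply Finset.sum_le_sum
          intro y _
          apply mul_le_mul_of_nonneg_left _ (mul_nonneg (hμ.1 x) (hν.1 y))
          exact le_trans (tv_basis hB t x y)
            (by have := h x y; linarith)
      _ = 2 * C := by
          have : ∀ x ∈ Finset.univ, ∑ y, μ x * ν y * (2 * C) = μ x * (2 * C) := by
            intro x _
            have : ∀ y ∈ Finset.univ, μ x * ν y * (2 * C) = (μ x * (2*C)) * ν y :=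
              fun y _ => by ring
            rw [Finset.sum_congr rfl this, ← Finset.mul_sum, hν.2, mul_one]
          rw [Finset.sum_congr rfl this, ← Finset.sum_mul, hμ.2, one_mul]
  unfold tvDist
  linarith

end TransMat

section PathSum

variable {γ : Type*} [Fintype γ] [DecidableEq γ]

lemma path_sum_endpoint (M : Matrix γ γ ℝ) (t : ℕ) (p q : γ) :
    ∑ u : Fin (t+1) → γ, (if u 0 = p ∧ u (Fin.last t) = q then 1 else 0)
        * ∏ s : Fin t, M (u s.succ) (u s.castSucc)
      = (M ^ t) q p := by
  induction t generalizing q with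
  | zero =>
    rw [Fintype.sum_equiv (Equiv.funUnique (Fin 1) γ)
      (fun u : Fin 1 → γ => (if u 0 = p ∧ u (Fin.last 0) = q then (1:ℝ) else 0)
        * ∏ s : Fin 0, M (u s.succ) (u s.castSucc))
      (fun a => if a = p ∧ a = q then 1 else 0) ?_]
    · rw [pow_zero, Matrix.one_apply]
      by_cases hpq : p = q
      · subst hpq
        simp
      · rw [if_neg (Ne.symm hpq)]
        apply Finset.sum_eq_zero
        intro a _
        by_cases hap : a = p
        · subst hap
          simp [hpq]
        · simp [hap]
    · intro u
      have h1 : (Fin.last 0) = (0 : Fin 1) := rfl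
      have h2 : (default : Fin 1) = (0 : Fin 1) := rfl
      simp [Equiv.funUnique, h1, h2]
  | succ t ih =>
    rw [← Fintype.sum_equiv (Fin.snocEquiv (fun _ => γ)) _
      (fun u : Fin (t+2) → γ => (if u 0 = p ∧ u (Fin.last (t+1)) = q then 1 else 0)
        * ∏ s : Fin (t+1), M (u s.succ) (u s.castSucc)) (fun u => rfl)]
    rw [Fintype.sum_prod_type]
    have key : ∀ (a : γ) (u : Fin (t+1) → γ),
        ((if (Fin.snocEquiv (fun _ => γ)) (a, u) 0 = p
            ∧ (Fin.snocEquiv (fun _ => γ)) (a, u) (Fin.last (t+1)) = q then (1:ℝ) else 0)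
          * ∏ s : Fin (t+1), M ((Fin.snocEquiv (fun _ => γ)) (a, u) s.succ)
              ((Fin.snocEquiv (fun _ => γ)) (a, u) s.castSucc))
        = (if a = q then 1 else 0) * ((if u 0 = p then 1 else 0)
            * ((∏ s : Fin t, M (u s.succ) (u s.castSucc)) * M a (u (Fin.last t)))) := by
      intro a u
      have hval : ∀ i : Fin (t+1), (Fin.snocEquiv (fun _ => γ)) (a, u) i.castSucc = u i := by
        intro i
        simp [Fin.snocEquiv]
      have hlast : (Fin.snocEquiv (fun _ => γ)) (a, u) (Fin.last (t+1)) = a := by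
        simp [Fin.snocEquiv]
      have h0 : (Fin.snocEquiv (fun _ => γ)) (a, u) 0 = u 0 := by
        have : (0 : Fin (t+2)) = (0 : Fin (t+1)).castSucc := by
          simp
        rw [this, hval]
      have hprod : ∏ s : Fin (t+1), M ((Fin.snocEquiv (fun _ => γ)) (a, u) s.succ)
            ((Fin.snocEquiv (fun _ => γ)) (a, u) s.castSucc)
          = (∏ s : Fin t, M (u s.succ) (u s.castSucc)) * M a (u (Fin.last t)) := by
        rw [Fin.prod_univ_castSucc]
        congr 1
        · apply Finset.prod_congr rfl
          intro s _
          have h1 : (s.castSucc).succ = (s.succ).castSucc := by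
            rw [Fin.succ_castSucc]
          have h2 : (s.castSucc).castSucc = (s.castSucc).castSucc := rfl
          rw [h1, hval, hval]
        · have h3 : (Fin.last t).succ = Fin.last (t+1) := Fin.succ_last t
          rw [h3, hlast, hval]
      rw [hprod, h0, hlast]
      by_cases h1 : u 0 = p <;> by_cases h2 : a = q <;> simp [h1, h2] <;> ring
    rw [Finset.sum_congr rfl (fun a _ => Finset.sum_congr rfl (fun u _ => key a u))]
    have inner : ∀ a : γ, ∑ u : Fin (t+1) → γ,
        ((if u 0 = p then (1:ℝ) else 0)
          * ((∏ s : Fin t, M (u s.succ) (u s.castSucc)) * M a (u (Fin.last t))))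
        = ∑ r, M a r * (M ^ t) r p := by
      intro a
      have expand : ∀ u : Fin (t+1) → γ,
          ((if u 0 = p then (1:ℝ) else 0)
            * ((∏ s : Fin t, M (u s.succ) (u s.castSucc)) * M a (u (Fin.last t))))
          = ∑ r, M a r * ((if u 0 = p ∧ u (Fin.last t) = r then 1 else 0)
              * ∏ s : Fin t, M (u s.succ) (u s.castSucc)) := by
        intro u
        have pick : ∀ r ∈ Finset.univ, M a r * ((if u 0 = p ∧ u (Fin.last t) = r then (1:ℝ) else 0)
              * ∏ s : Fin t, M (u s.succ) (u s.castSucc))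
            = if u (Fin.last t) = r then
                (if u 0 = p then 1 else 0) * ((∏ s : Fin t, M (u s.succ) (u s.castSucc)) * M a r)
              else 0 := by
          intro r _
          by_cases h1 : u (Fin.last t) = r <;> by_cases h2 : u 0 = p <;> simp [h1, h2] <;> ring
        rw [Finset.sum_congr rfl pick, Finset.sum_ite_eq]
        simp
      rw [Finset.sum_congr rfl (fun u _ => expand u), Finset.sum_comm]
      apply Finset.sum_congr rfl
      intro r _
      rw [← Finset.mul_sum, ih r]
    have outer : ∀ a : γ, ∑ u : Fin (t+1) → γ,
        (if a = q then (1:ℝ) else 0) * ((if u 0 = p then 1 else 0)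
          * ((∏ s : Fin t, M (u s.succ) (u s.castSucc)) * M a (u (Fin.last t))))
        = if a = q then (∑ r, M a r * (M ^ t) r p) else 0 := by
      intro a
      rw [← Finset.mul_sum, inner a]
      by_cases h : a = q <;> simp [h]
    rw [Finset.sum_congr rfl (fun a _ => outer a), Finset.sum_ite_eq' Finset.univ q]
    simp only [Finset.mem_univ, if_true]
    rw [pow_succ']
    rw [Matrix.mul_apply]

lemma path_sum_free (M : Matrix γ γ ℝ) (t : ℕ) (p : γ) :
    ∑ u : Fin (t+1) → γ, (if u 0 = p then 1 else 0)
        * ∏ s : Fin t, M (u s.succ) (u s.castSucc)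
      = ∑ q, (M ^ t) q p := by
  have expand : ∀ u : Fin (t+1) → γ, (if u 0 = p then (1:ℝ) else 0)
      = ∑ q, (if u 0 = p ∧ u (Fin.last t) = q then 1 else 0) := by
    intro u
    by_cases h : u 0 = p
    · simp [h, Finset.sum_ite_eq]
    · simp [h]
  calc ∑ u : Fin (t+1) → γ, (if u 0 = p then (1:ℝ) else 0)
        * ∏ s : Fin t, M (u s.succ) (u s.castSucc)
      = ∑ u : Fin (t+1) → γ, ∑ q, (if u 0 = p ∧ u (Fin.last t) = q then 1 else 0)
          * ∏ s : Fin t, M (u s.succ) (u s.castSucc) := by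
        apply Finset.sum_congr rfl
        intro u _
        rw [expand u, Finset.sum_mul]
    _ = ∑ q, ∑ u : Fin (t+1) → γ, (if u 0 = p ∧ u (Fin.last t) = q then 1 else 0)
          * ∏ s : Fin t, M (u s.succ) (u s.castSucc) := Finset.sum_comm
    _ = ∑ q, (M ^ t) q p := Finset.sum_congr rfl fun q _ => path_sum_endpoint M t p q

end PathSum

section Measure

open MeasureTheory

variable {N : ℕ} {Ω : Type*} [MeasurableSpace Ω]
  {B : Matrix (Fin N) (Fin N) ℝ}
  {μ : Fin N → Fin N → Measure Ω}
  {X Y : ℕ → Ω → Fin N}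

/-- Measure of a two-sided cylinder. -/
lemma cyl_measure (hB : IsTransMat B)
    (hμ : ∀ x y, IsProbabilityMeasure (μ x y))
    (hXmeas : ∀ (t : ℕ) (i : Fin N), MeasurableSet {ω | X t ω = i})
    (hYmeas : ∀ (t : ℕ) (i : Fin N), MeasurableSet {ω | Y t ω = i})
    (hstart : ∀ x y, μ x y {ω | X 0 ω = x ∧ Y 0 ω = y} = 1)
    (hchain : ∀ x y, IsPairChain B (μ x y) X Y)
    (x y : Fin N) (t : ℕ) (w v : ℕ → Fin N) :
    μ x y {ω | ∀ s ≤ t, X s ω = w s ∧ Y s ω = v s}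
      = ENNReal.ofReal ((if w 0 = x ∧ v 0 = y then 1 else 0)
          * ∏ s ∈ Finset.range t, pairK B (w (s+1), v (s+1)) (w s, v s)) := by
  haveI := hμ x y
  induction t with
  | zero =>
    have hset : {ω | ∀ s ≤ 0, X s ω = w s ∧ Y s ω = v s}
        = {ω | X 0 ω = w 0 ∧ Y 0 ω = v 0} := by
      ext ω
      simp only [Set.mem_setOf_eq]
      constructor
      · intro h; exact h 0 le_rfl
      · intro h s hs
        rw [Nat.le_zero] at hs
        rw [hs]; exact h
    rw [hset]
    simp only [Finset.range_zero, Finset.prod_empty, mul_one]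
    by_cases h : w 0 = x ∧ v 0 = y
    · rw [if_pos h, ENNReal.ofReal_one]
      apply le_antisymm prob_le_one
      calc (1:ℝ≥0∞) = μ x y {ω | X 0 ω = x ∧ Y 0 ω = y} := (hstart x y).symm
        _ ≤ μ x y {ω | X 0 ω = w 0 ∧ Y 0 ω = v 0} := by
            apply measure_mono
            intro ω hω
            rw [h.1, h.2]
            exact hω
    · rw [if_neg h, ENNReal.ofReal_zero]
      have hms : MeasurableSet {ω | X 0 ω = x ∧ Y 0 ω = y} := by
        have : {ω | X 0 ω = x ∧ Y 0 ω = y} = {ω | X 0 ω = x} ∩ {ω | Y 0 ω = y} := rfl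
        rw [this]
        exact (hXmeas 0 x).inter (hYmeas 0 y)
      have hcompl : μ x y {ω | X 0 ω = x ∧ Y 0 ω = y}ᶜ = 0 := by
        rw [measure_compl hms (measure_ne_top _ _), hstart x y, measure_univ]
        simp
      apply le_antisymm _ zero_le
      rw [← hcompl]
      apply measure_mono
      intro ω hω
      simp only [Set.mem_setOf_eq] at hω
      intro hmem
      simp only [Set.mem_setOf_eq] at hmem
      exact h ⟨hω.1 ▸ hmem.1.symm ▸ rfl, by rw [← hω.2, hmem.2]⟩
  | succ t ih =>
    have hset : {ω | ∀ s ≤ t + 1, X s ω = w s ∧ Y s ω = v s}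
        = {ω | X (t+1) ω = w (t+1) ∧ Y (t+1) ω = v (t+1)}
            ∩ {ω | ∀ s ≤ t, X s ω = w s ∧ Y s ω = v s} := by
      ext ω
      simp only [Set.mem_setOf_eq, Set.mem_inter_iff]
      constructor
      · intro h
        exact ⟨h (t+1) le_rfl, fun s hs => h s (by omega)⟩
      · rintro ⟨h1, h2⟩ s hs
        rcases Nat.lt_or_ge s (t+1) with h | h
        · exact h2 s (by omega)
        · have : s = t + 1 := by omega
          rw [this]; exact h1
    rw [hset, hchain x y t w v (w (t+1)) (v (t+1)), ih]
    rw [← ENNReal.ofReal_mul (mul_nonneg (hB.1 _ _) (hB.1 _ _))]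
    congr 1
    rw [Finset.prod_range_succ]
    unfold pairK
    ring

/-- Partitioning an event determined by the trajectory up to time `t` into cylinders. -/
lemma measure_path_event (hB : IsTransMat B)
    (hμ : ∀ x y, IsProbabilityMeasure (μ x y))
    (hXmeas : ∀ (t : ℕ) (i : Fin N), MeasurableSet {ω | X t ω = i})
    (hYmeas : ∀ (t : ℕ) (i : Fin N), MeasurableSet {ω | Y t ω = i})
    (hstart : ∀ x y, μ x y {ω | X 0 ω = x ∧ Y 0 ω = y} = 1)
    (hchain : ∀ x y, IsPairChain B (μ x y) X Y)
    (x y : Fin N) (t : ℕ) (R : (Fin (t+1) → Fin N × Fin N) → Prop) [DecidablePred R] :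
    μ x y {ω | R (fun s => (X s ω, Y s ω))}
      = ENNReal.ofReal (∑ u ∈ Finset.univ.filter R,
          (if u 0 = (x, y) then 1 else 0)
            * ∏ s : Fin t, pairK B (u s.succ) (u s.castSucc)) := by
  classical
  -- extension of a finite path to ℕ
  set ext : (Fin (t+1) → Fin N × Fin N) → ℕ → Fin N × Fin N :=
    fun u s => u ⟨min s t, by omega⟩ with hext
  have hext_le : ∀ (u : Fin (t+1) → Fin N × Fin N) (s : ℕ) (hs : s ≤ t), ext u s = u ⟨s, by omega⟩ := by
    intro u s hs
    simp only [hext]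
    congr 1
    exact Fin.ext (by simp [Nat.min_eq_left hs])
  set Cyl : (Fin (t+1) → Fin N × Fin N) → Set Ω :=
    fun u => {ω | ∀ s ≤ t, X s ω = (ext u s).1 ∧ Y s ω = (ext u s).2} with hCyl
  have hCylMeas : ∀ u, MeasurableSet (Cyl u) := by
    intro u
    have : Cyl u = ⋂ (s : ℕ), ⋂ (_ : s ≤ t), ({ω | X s ω = (ext u s).1} ∩ {ω | Y s ω = (ext u s).2}) := by
      ext ω
      simp only [hCyl, Set.mem_setOf_eq, Set.mem_iInter, Set.mem_inter_iff]
    rw [this]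
    exact MeasurableSet.iInter fun s => MeasurableSet.iInter fun _ =>
      (hXmeas s _).inter (hYmeas s _)
  have hunion : {ω | R (fun s => (X s ω, Y s ω))}
      = ⋃ u ∈ Finset.univ.filter R, Cyl u := by
    ext ω
    simp only [Set.mem_setOf_eq, Set.mem_iUnion, Finset.mem_filter, Finset.mem_univ, true_and]
    constructor
    · intro hR
      refine ⟨fun s => (X s ω, Y s ω), hR, ?_⟩
      intro s hs
      have hg := hext_le (fun s : Fin (t+1) => (X (s:ℕ) ω, Y (s:ℕ) ω)) s hs
      rw [hg]
      exact ⟨rfl, rfl⟩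
    · rintro ⟨u, hu, hcyl⟩
      have : (fun s : Fin (t+1) => (X s ω, Y s ω)) = u := by
        funext s
        have := hcyl s (by omega : (s : ℕ) ≤ t)
        rw [hext_le _ s (by omega)] at this
        have hs : (⟨(s : ℕ), by omega⟩ : Fin (t+1)) = s := Fin.ext rfl
        rw [hs] at this
        exact Prod.ext this.1 this.2
      rw [this]
      exact hu
  have hdisj : (Finset.univ.filter R : Set (Fin (t+1) → Fin N × Fin N)).PairwiseDisjoint Cyl := by
    intro u hu u' hu' hne
    apply Set.disjoint_left.mpr
    intro ω hωu hωu'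
    apply hne
    funext s
    have h1 := hωu s (by omega : (s : ℕ) ≤ t)
    have h2 := hωu' s (by omega : (s : ℕ) ≤ t)
    rw [hext_le _ s (by omega)] at h1 h2
    have hs : (⟨(s : ℕ), by omega⟩ : Fin (t+1)) = s := Fin.ext rfl
    rw [hs] at h1 h2
    apply Prod.ext
    · rw [← h1.1, ← h2.1]
    · rw [← h1.2, ← h2.2]
  rw [hunion, measure_biUnion_finset hdisj (fun u _ => hCylMeas u)]
  rw [ENNReal.ofReal_sum_of_nonneg]
  · apply Finset.sum_congr rfl
    intro u hu
    have := cyl_measure hB hμ hXmeas hYmeas hstart hchain x y t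
      (fun s => (ext u s).1) (fun s => (ext u s).2)
    rw [hCyl]
    rw [this]
    congr 1
    have h0 : ext u 0 = u 0 := by
      rw [hext_le u 0 (Nat.zero_le t)]
      congr 1
    have hind : ((if (ext u 0).1 = x ∧ (ext u 0).2 = y then (1:ℝ) else 0))
        = (if u 0 = (x, y) then 1 else 0) := by
      rw [h0]
      congr 1
      simp [Prod.ext_iff]
    rw [hind]
    congr 1
    rw [← Fin.prod_univ_eq_prod_range (fun s => pairK B ((ext u (s+1)).1, (ext u (s+1)).2) ((ext u s).1, (ext u s).2)) t]
    apply Finset.prod_congr rfl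
    intro s _
    have e1 : ext u ((s : ℕ)+1) = u s.succ := by
      rw [hext_le u ((s:ℕ)+1) (by omega)]
      congr 1
    have e2 : ext u (s : ℕ) = u s.castSucc := by
      rw [hext_le u (s:ℕ) (by omega)]
      congr 1
    rw [e1, e2]
  · intro u _
    apply mul_nonneg
    · split <;> norm_num
    · exact Finset.prod_nonneg fun s _ => pairK_nonneg hB _ _


lemma meetTime_one_le (t₀ : ℕ) (ht₀ : 1 ≤ t₀) (ω : Ω) : 1 ≤ meetTime X Y t₀ ω := by
  apply le_sInf
  rintro b ⟨t, rfl, h1, -⟩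
  exact_mod_cast le_trans ht₀ h1

lemma meet_gt_iff (t₀ t : ℕ) (ω : Ω) :
    (t : ℕ∞) < meetTime X Y t₀ ω ↔ ∀ s : ℕ, t₀ ≤ s → s ≤ t → X s ω ≠ Y s ω := by
  constructor
  · intro h s h1 h2 heq
    have hmem : ((s : ℕ∞)) ∈ {n : ℕ∞ | ∃ t : ℕ, n = (t : ℕ∞) ∧ t₀ ≤ t ∧ X t ω = Y t ω} :=
      ⟨s, rfl, h1, heq⟩
    have := sInf_le hmem
    have hlt : (t : ℕ∞) < (s : ℕ∞) := lt_of_lt_of_le h this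
    have : t < s := by exact_mod_cast hlt
    omega
  · intro h
    have hle : ((t+1 : ℕ) : ℕ∞) ≤ meetTime X Y t₀ ω := by
      apply le_sInf
      rintro b ⟨u, rfl, h1, heq⟩
      have : ¬ u ≤ t := fun hut => h u h1 hut heq
      exact_mod_cast Nat.succ_le_of_lt (by omega)
    calc (t : ℕ∞) < ((t+1 : ℕ) : ℕ∞) := by exact_mod_cast Nat.lt_succ_self t
      _ ≤ meetTime X Y t₀ ω := hle

lemma meet_gt_measurable
    (hXmeas : ∀ (t : ℕ) (i : Fin N), MeasurableSet {ω | X t ω = i})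
    (hYmeas : ∀ (t : ℕ) (i : Fin N), MeasurableSet {ω | Y t ω = i})
    (t₀ t : ℕ) : MeasurableSet {ω | (t : ℕ∞) < meetTime X Y t₀ ω} := by
  have hset : {ω | (t : ℕ∞) < meetTime X Y t₀ ω}
      = ⋂ (s : ℕ), ⋂ (_ : t₀ ≤ s), ⋂ (_ : s ≤ t), {ω | X s ω = Y s ω}ᶜ := by
    ext ω
    simp only [Set.mem_setOf_eq, Set.mem_iInter, Set.mem_compl_iff, meet_gt_iff]
  rw [hset]
  refine MeasurableSet.iInter fun s => MeasurableSet.iInter fun _ =>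
    MeasurableSet.iInter fun _ => MeasurableSet.compl ?_
  have : {ω | X s ω = Y s ω} = ⋃ i : Fin N, ({ω | X s ω = i} ∩ {ω | Y s ω = i}) := by
    ext ω
    simp only [Set.mem_setOf_eq, Set.mem_iUnion, Set.mem_inter_iff]
    constructor
    · intro h; exact ⟨Y s ω, h, rfl⟩
    · rintro ⟨i, h1, h2⟩; rw [h1, h2]
  rw [this]
  exact MeasurableSet.iUnion fun i => (hXmeas s i).inter (hYmeas s i)

/-- The central identity: the no-meeting probability is the off-diagonal mass. -/
lemma measure_meet_gt (hB : IsTransMat B)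
    (hμ : ∀ x y, IsProbabilityMeasure (μ x y))
    (hXmeas : ∀ (t : ℕ) (i : Fin N), MeasurableSet {ω | X t ω = i})
    (hYmeas : ∀ (t : ℕ) (i : Fin N), MeasurableSet {ω | Y t ω = i})
    (hstart : ∀ x y, μ x y {ω | X 0 ω = x ∧ Y 0 ω = y} = 1)
    (hchain : ∀ x y, IsPairChain B (μ x y) X Y)
    (x y : Fin N) (t : ℕ) :
    μ x y {ω | (t : ℕ∞) < meetTime X Y 1 ω} = ENNReal.ofReal (offSum B t x y) := by
  classical
  set R : (Fin (t+1) → Fin N × Fin N) → Prop :=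
    fun u => ∀ s : Fin (t+1), s ≠ 0 → (u s).1 ≠ (u s).2 with hR
  have hset : {ω | (t : ℕ∞) < meetTime X Y 1 ω} = {ω | R (fun s => (X (s:ℕ) ω, Y (s:ℕ) ω))} := by
    ext ω
    rw [Set.mem_setOf_eq, meet_gt_iff]
    constructor
    · intro h s hs
      apply h s
      · have : (s : ℕ) ≠ 0 := fun h0 => hs (Fin.ext h0)
        omega
      · omega
    · intro h s h1 h2 heq
      have hne : (⟨s, by omega⟩ : Fin (t+1)) ≠ 0 := by
        intro h0
        have : s = 0 := congrArg Fin.val h0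
        omega
      exact h ⟨s, by omega⟩ hne heq
  rw [hset, measure_path_event hB hμ hXmeas hYmeas hstart hchain x y t R]
  congr 1
  rw [Finset.sum_filter]
  have conv : ∀ u : Fin (t+1) → Fin N × Fin N,
      (if R u then (if u 0 = (x, y) then (1:ℝ) else 0)
          * ∏ s : Fin t, pairK B (u s.succ) (u s.castSucc) else 0)
      = (if u 0 = (x, y) then 1 else 0) * ∏ s : Fin t, pairD B (u s.succ) (u s.castSucc) := by
    intro u
    by_cases h : R u
    · rw [if_pos h]
      congr 1
      apply Finset.prod_congr rfl
      intro s _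
      unfold pairD
      rw [if_neg (h s.succ (Fin.succ_ne_zero s))]
    · rw [if_neg h]
      have h2 : ¬ ∀ s : Fin (t+1), s ≠ 0 → (u s).1 ≠ (u s).2 := h
      push_neg at h2
      obtain ⟨s₀, hs₀ne, hs₀⟩ := h2
      have : ∏ s : Fin t, pairD B (u s.succ) (u s.castSucc) = 0 := by
        apply Finset.prod_eq_zero (Finset.mem_univ (s₀.pred hs₀ne))
        unfold pairD
        rw [Fin.succ_pred]
        rw [if_pos hs₀]
      rw [this, mul_zero]
  rw [Finset.sum_congr rfl (fun u _ => conv u)]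
  exact path_sum_free (pairD B) t (x, y)


lemma expVal_natCast (β : ℝ) (m : ℕ) :
    expVal β (m : ℕ∞) = ENNReal.ofReal (Real.exp (β * m)) := rfl

lemma expVal_top (β : ℝ) : expVal β ⊤ = ⊤ := rfl

section ExpVal

variable {T : Ω → ℕ∞} {ν : Measure Ω}

lemma T_eq_succ_measurable (hmeas : ∀ t : ℕ, MeasurableSet {ω | (t : ℕ∞) < T ω}) (m : ℕ) :
    MeasurableSet {ω | T ω = ((m+1 : ℕ) : ℕ∞)} := by
  have : {ω | T ω = ((m+1 : ℕ) : ℕ∞)}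
      = {ω | (m : ℕ∞) < T ω} \ {ω | ((m+1 : ℕ) : ℕ∞) < T ω} := by
    ext ω
    simp only [Set.mem_setOf_eq, Set.mem_diff, not_lt]
    constructor
    · intro h
      rw [h]
      exact ⟨by exact_mod_cast Nat.lt_succ_self m, le_refl _⟩
    · rintro ⟨h1, h2⟩
      apply le_antisymm h2
      have : ((m+1 : ℕ) : ℕ∞) = (m : ℕ∞) + 1 := by push_cast; ring
      rw [this]
      exact ENat.add_one_le_iff (by simp) |>.mpr h1
  rw [this]
  exact (hmeas m).diff (hmeas (m+1))

lemma T_eq_top_measurable (hmeas : ∀ t : ℕ, MeasurableSet {ω | (t : ℕ∞) < T ω}) :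
    MeasurableSet {ω | T ω = ⊤} := by
  have : {ω | T ω = ⊤} = ⋂ t : ℕ, {ω | (t : ℕ∞) < T ω} := by
    ext ω
    simp only [Set.mem_setOf_eq, Set.mem_iInter]
    constructor
    · intro h t
      rw [h]
      exact Ne.lt_top (WithTop.natCast_ne_top t)
    · intro h
      by_contra hne
      obtain ⟨n, hn⟩ := WithTop.ne_top_iff_exists.mp hne
      have := h n
      rw [← hn] at this
      exact lt_irrefl _ this
  rw [this]
  exact MeasurableSet.iInter fun t => hmeas t

lemma expVal_decomp (hT1 : ∀ ω, 1 ≤ T ω) (β : ℝ) (ω : Ω) :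
    expVal β (T ω)
      = (∑' m : ℕ, Set.indicator {ω' | T ω' = ((m+1 : ℕ) : ℕ∞)}
          (fun _ => ENNReal.ofReal (Real.exp (β * (m+1)))) ω)
        + Set.indicator {ω' | T ω' = ⊤} (fun _ => (⊤ : ℝ≥0∞)) ω := by
  rcases eq_or_ne (T ω) ⊤ with h | h
  · have h1 : ∀ m : ℕ, Set.indicator {ω' | T ω' = ((m+1 : ℕ) : ℕ∞)}
        (fun _ => ENNReal.ofReal (Real.exp (β * (m+1)))) ω = 0 := by
      intro m
      apply Set.indicator_of_notMem
      simp only [Set.mem_setOf_eq, h]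
      exact fun hc => (WithTop.natCast_ne_top (m+1)) hc.symm
    rw [h, expVal_top]
    simp only [h1, tsum_zero, zero_add]
    rw [Set.indicator_of_mem (by simpa using h)]
  · obtain ⟨n, hn0⟩ := WithTop.ne_top_iff_exists.mp h
    have hn : ((n : ℕ) : ℕ∞) = T ω := by exact_mod_cast hn0
    have hn1 : 1 ≤ n := by
      have h2 := hT1 ω
      rw [← hn] at h2
      have h3 : ((1 : ℕ) : ℕ∞) ≤ ((n : ℕ) : ℕ∞) := by exact_mod_cast h2
      exact_mod_cast h3
    obtain ⟨k, rfl⟩ := Nat.exists_eq_add_of_le hn1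
    rw [← hn, expVal_natCast]
    have htop : Set.indicator {ω' | T ω' = ⊤} (fun _ => (⊤ : ℝ≥0∞)) ω = 0 := by
      apply Set.indicator_of_notMem
      simp only [Set.mem_setOf_eq, ← hn]
      exact fun hc => (WithTop.natCast_ne_top (1+k)) hc
    rw [htop, add_zero]
    rw [tsum_eq_single k]
    · rw [Set.indicator_of_mem]
      · congr 2
        push_cast
        ring
      · simp only [Set.mem_setOf_eq, ← hn]
        congr 1
        omega
    · intro m hm
      apply Set.indicator_of_notMem
      simp only [Set.mem_setOf_eq, ← hn]
      intro hc
      have : (1 + k : ℕ) = (m + 1 : ℕ) := by exact_mod_cast hc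
      omega

lemma lintegral_expVal_le [IsProbabilityMeasure ν]
    (hT1 : ∀ ω, 1 ≤ T ω)
    (hmeas : ∀ t : ℕ, MeasurableSet {ω | (t : ℕ∞) < T ω})
    {β c s : ℝ} (hc : 0 ≤ c) (hs : 0 ≤ s) (hslt : s < 1) (hs1 : Real.exp β * s < 1)
    (hbound : ∀ t : ℕ, ν {ω | (t : ℕ∞) < T ω} ≤ ENNReal.ofReal (c * s ^ t)) :
    ∫⁻ ω, expVal β (T ω) ∂ν
      ≤ ENNReal.ofReal (Real.exp β * c * (1 - Real.exp β * s)⁻¹) := by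
  have htop0 : ν {ω | T ω = ⊤} = 0 := by
    have hle : ∀ t : ℕ, ν {ω | T ω = ⊤} ≤ ENNReal.ofReal (c * s ^ t) := by
      intro t
      refine le_trans (measure_mono ?_) (hbound t)
      intro ω hω
      simp only [Set.mem_setOf_eq] at hω ⊢
      rw [hω]
      exact Ne.lt_top (WithTop.natCast_ne_top t)
    have htend : Filter.Tendsto (fun t : ℕ => ENNReal.ofReal (c * s ^ t))
        Filter.atTop (nhds 0) := by
      have h1 : Filter.Tendsto (fun t : ℕ => c * s ^ t) Filter.atTop (nhds 0) := by
        have := tendsto_pow_atTop_nhds_zero_of_lt_one hs hslt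
        have h2 := this.const_mul c
        simpa using h2
      have := ENNReal.tendsto_ofReal h1
      simpa using this
    exact le_antisymm (ge_of_tendsto' htend hle) zero_le
  calc ∫⁻ ω, expVal β (T ω) ∂ν
      = ∫⁻ ω, ((∑' m : ℕ, Set.indicator {ω' | T ω' = ((m+1 : ℕ) : ℕ∞)}
            (fun _ => ENNReal.ofReal (Real.exp (β * (m+1)))) ω)
          + Set.indicator {ω' | T ω' = ⊤} (fun _ => (⊤ : ℝ≥0∞)) ω) ∂ν :=
        lintegral_congr (expVal_decomp hT1 β)
    _ = (∫⁻ ω, (∑' m : ℕ, Set.indicator {ω' | T ω' = ((m+1 : ℕ) : ℕ∞)}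
            (fun _ => ENNReal.ofReal (Real.exp (β * (m+1)))) ω) ∂ν)
          + ∫⁻ ω, Set.indicator {ω' | T ω' = ⊤} (fun _ => (⊤ : ℝ≥0∞)) ω ∂ν := by
        apply lintegral_add_right
        exact measurable_const.indicator (T_eq_top_measurable hmeas)
    _ = (∑' m : ℕ, ENNReal.ofReal (Real.exp (β * (m+1))) * ν {ω' | T ω' = ((m+1 : ℕ) : ℕ∞)})
          + ⊤ * ν {ω' | T ω' = ⊤} := by
        congr 1
        · rw [lintegral_tsum]
          · apply tsum_congr
            intro m
            rw [lintegral_indicator_const (T_eq_succ_measurable hmeas m)]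
          · intro m
            exact (measurable_const.indicator (T_eq_succ_measurable hmeas m)).aemeasurable
        · rw [lintegral_indicator_const (T_eq_top_measurable hmeas)]
    _ ≤ (∑' m : ℕ, ENNReal.ofReal ((Real.exp β * c) * (Real.exp β * s) ^ m)) + 0 := by
        apply add_le_add
        · apply ENNReal.tsum_le_tsum
          intro m
          have hsub : ν {ω' | T ω' = ((m+1 : ℕ) : ℕ∞)} ≤ ν {ω | (m : ℕ∞) < T ω} := by
            apply measure_mono
            intro ω hω
            simp only [Set.mem_setOf_eq] at hω ⊢
            rw [hω]
            exact_mod_cast Nat.lt_succ_self m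
          calc ENNReal.ofReal (Real.exp (β * (m+1))) * ν {ω' | T ω' = ((m+1 : ℕ) : ℕ∞)}
              ≤ ENNReal.ofReal (Real.exp (β * (m+1))) * ENNReal.ofReal (c * s ^ m) :=
                mul_le_mul_right (le_trans hsub (hbound m)) _
            _ = ENNReal.ofReal (Real.exp (β * (m+1)) * (c * s ^ m)) :=
                (ENNReal.ofReal_mul (Real.exp_nonneg _)).symm
            _ = ENNReal.ofReal ((Real.exp β * c) * (Real.exp β * s) ^ m) := by
                congr 1
                rw [mul_pow]
                have h1 : Real.exp β ^ m = Real.exp (m * β) := (Real.exp_nat_mul β m).symm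
                have h2 : Real.exp (β * (m + 1)) = Real.exp (↑m * β) * Real.exp β := by
                  rw [← Real.exp_add]
                  congr 1
                  ring
                rw [h1, h2]
                ring
        · rw [htop0, mul_zero]
    _ ≤ ENNReal.ofReal (Real.exp β * c * (1 - Real.exp β * s)⁻¹) := by
        rw [add_zero]
        have hsum : Summable (fun m : ℕ => (Real.exp β * c) * (Real.exp β * s) ^ m) := by
          apply Summable.mul_left
          exact summable_geometric_of_lt_one (mul_nonneg (Real.exp_nonneg β) hs) hs1
        rw [← ENNReal.ofReal_tsum_of_nonneg (fun m => mul_nonneg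
          (mul_nonneg (Real.exp_nonneg β) hc)
          (pow_nonneg (mul_nonneg (Real.exp_nonneg β) hs) m)) hsum]
        apply ENNReal.ofReal_le_ofReal
        rw [tsum_mul_left, tsum_geometric_of_lt_one (mul_nonneg (Real.exp_nonneg β) hs) hs1]

lemma le_lintegral_expVal {β : ℝ} (hβ : 0 < β) (t : ℕ)
    (hmeas : MeasurableSet {ω | (t : ℕ∞) < T ω}) :
    ENNReal.ofReal (Real.exp (β * (t+1))) * ν {ω | (t : ℕ∞) < T ω}
      ≤ ∫⁻ ω, expVal β (T ω) ∂ν := by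
  rw [← lintegral_indicator_const hmeas]
  apply lintegral_mono
  intro ω
  dsimp only
  rcases Classical.em (ω ∈ {ω | (t : ℕ∞) < T ω}) with h | h
  · rw [Set.indicator_of_mem h]
    simp only [Set.mem_setOf_eq] at h
    rcases eq_or_ne (T ω) ⊤ with htop | htop
    · rw [htop, expVal_top]
      exact le_top
    · obtain ⟨n, hn0⟩ := WithTop.ne_top_iff_exists.mp htop
      have hn : ((n : ℕ) : ℕ∞) = T ω := by exact_mod_cast hn0
      rw [← hn, expVal_natCast]
      apply ENNReal.ofReal_le_ofReal
      apply Real.exp_le_exp.mpr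
      have hlt : t < n := by
        rw [← hn] at h
        exact_mod_cast h
      have hh : (t + 1 : ℝ) ≤ n := by exact_mod_cast hlt
      nlinarith
  · rw [Set.indicator_of_notMem h]
    exact zero_le

end ExpVal

end Measure

section Classes

variable {N : ℕ} {B : Matrix (Fin N) (Fin N) ℝ}

lemma leads_refl (j : Fin N) : Leads B j j :=
  ⟨0, by simp [Matrix.one_apply]⟩

lemma leads_trans (hB : IsTransMat B) {j k i : Fin N}
    (h1 : Leads B j k) (h2 : Leads B k i) : Leads B j i := by
  obtain ⟨m, hm⟩ := h1
  obtain ⟨n, hn⟩ := h2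
  refine ⟨n + m, ?_⟩
  rw [pow_add, Matrix.mul_apply]
  have single : (B ^ n) i k * (B ^ m) k j ≤ ∑ r, (B ^ n) i r * (B ^ m) r j :=
    Finset.single_le_sum
      (fun r _ => mul_nonneg (Bpow_nonneg hB n i r) (Bpow_nonneg hB m r j))
      (Finset.mem_univ k)
  exact lt_of_lt_of_le (mul_pos hn hm) single

/-- Every state leads to a state whose communication class is closed. -/
lemma exists_closed_class (hB : IsTransMat B) (j : Fin N) :
    ∃ k, Leads B j k ∧ IsClosedCommClass B {i | Communicates B k i} := by
  classical
  set Rf : Fin N → Finset (Fin N) := fun j => Finset.univ.filter (fun i => Leads B j i) with hRf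
  have hmem : ∀ {a b : Fin N}, b ∈ Rf a ↔ Leads B a b := by
    intro a b
    simp [hRf]
  have hsub : ∀ {a b : Fin N}, Leads B a b → Rf b ⊆ Rf a := by
    intro a b hab i hi
    exact hmem.mpr (leads_trans hB hab (hmem.mp hi))
  obtain ⟨k, hkmem, hkmin⟩ := Finset.exists_min_image (Rf j) (fun i => (Rf i).card)
    ⟨j, hmem.mpr (leads_refl j)⟩
  have hjk : Leads B j k := hmem.mp hkmem
  have hback : ∀ i, Leads B k i → Leads B i k := by
    intro i hki
    have h1 : Rf i ⊆ Rf k := hsub hki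
    have h2 : i ∈ Rf j := hmem.mpr (leads_trans hB hjk hki)
    have h3 : (Rf k).card ≤ (Rf i).card := hkmin i h2
    have h4 : Rf i = Rf k := Finset.eq_of_subset_of_card_le h1 h3
    have : k ∈ Rf i := h4 ▸ hmem.mpr (leads_refl k)
    exact hmem.mp this
  refine ⟨k, hjk, ⟨⟨⟨k, ⟨leads_refl k, leads_refl k⟩⟩, ?_⟩, ?_⟩⟩
  · rintro i hi j'
    obtain ⟨hki, hik⟩ := hi
    constructor
    · rintro ⟨hkj', hj'k⟩
      exact ⟨leads_trans hB hik hkj', leads_trans hB hj'k hki⟩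
    · rintro ⟨hij', hj'i⟩
      exact ⟨leads_trans hB hki hij', leads_trans hB hj'i hik⟩
  · rintro j' ⟨hkj', hj'k⟩ i hj'i
    have hki : Leads B k i := leads_trans hB hkj' hj'i
    exact ⟨hki, hback i hki⟩

/-- Two closed communicating classes sharing the reachability structure coincide. -/
lemma closed_class_eq {C C' : Set (Fin N)} (hB : IsTransMat B)
    (hC : IsClosedCommClass B C) (hC' : IsClosedCommClass B C')
    {k : Fin N} (hk : k ∈ C) (hk' : k ∈ C') : C = C' := by
  ext j
  rw [hC.1.2 k hk j, hC'.1.2 k hk' j]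

/-- From a unique closed class plus aperiodicity, the Doeblin minorisation. -/
lemma doeblin_of_classes (hN : 0 < N) (hB : IsTransMat B)
    (huniq : ∃! C : Set (Fin N), IsClosedCommClass B C) (hap : AperiodicChain B) :
    ∃ (m : ℕ) (i0 : Fin N) (δ : ℝ), 1 ≤ m ∧ 0 < δ ∧ ∀ j, δ ≤ (B ^ m) i0 j := by
  classical
  obtain ⟨C₀, hC₀, hC₀uniq⟩ := huniq
  -- every state leads to a member of C₀
  have hreach : ∀ j, ∃ k, Leads B j k ∧ k ∈ C₀ := by
    intro j
    obtain ⟨k, hjk, hclosed⟩ := exists_closed_class hB j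
    have : {i | Communicates B k i} = C₀ := hC₀uniq _ hclosed
    exact ⟨k, hjk, this ▸ (show k ∈ {i | Communicates B k i} from ⟨leads_refl k, leads_refl k⟩)⟩
  set x0 : Fin N := ⟨0, hN⟩
  obtain ⟨i0, hx0i0, hi0⟩ := hreach x0
  -- every state leads to i0
  have hlead_i0 : ∀ j, Leads B j i0 := by
    intro j
    obtain ⟨k, hjk, hk⟩ := hreach j
    have : i0 ∈ C₀ ↔ Communicates B k i0 := hC₀.1.2 k hk i0
    exact leads_trans hB hjk (this.mp hi0).1
  -- a positive return time for i0
  have hret : ∃ n : ℕ, 1 ≤ n ∧ 0 < (B ^ n) i0 i0 := by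
    have hcol := hB.2 i0
    have : ∃ i1, 0 < B i1 i0 := by
      by_contra h
      push_neg at h
      have : ∑ i, B i i0 ≤ 0 := Finset.sum_nonpos fun i _ => h i
      rw [hcol] at this
      norm_num at this
    obtain ⟨i1, hi1⟩ := this
    have hi0i1 : Leads B i0 i1 := ⟨1, by rwa [pow_one]⟩
    have hi1C : i1 ∈ C₀ := hC₀.2 i0 hi0 i1 hi0i1
    have hi1i0 : Leads B i1 i0 := ((hC₀.1.2 i0 hi0 i1).mp hi1C).2
    obtain ⟨n1, hn1⟩ := hi1i0
    refine ⟨n1 + 1, by omega, ?_⟩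
    rw [pow_succ, Matrix.mul_apply]
    have single : (B ^ n1) i0 i1 * B i1 i0 ≤ ∑ r, (B ^ n1) i0 r * B r i0 :=
      Finset.single_le_sum
        (fun r _ => mul_nonneg (Bpow_nonneg hB n1 i0 r) (hB.1 r i0))
        (Finset.mem_univ i1)
    exact lt_of_lt_of_le (mul_pos hn1 hi1) single
  -- the set of return times
  set Sret : Set ℕ := {n | 1 ≤ n ∧ 0 < (B ^ n) i0 i0} with hSret
  have hadd : ∀ m n, m ∈ Sret → n ∈ Sret → m + n ∈ Sret := by
    rintro m n ⟨hm1, hm⟩ ⟨hn1, hn⟩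
    refine ⟨by omega, ?_⟩
    rw [pow_add, Matrix.mul_apply]
    have single : (B ^ m) i0 i0 * (B ^ n) i0 i0 ≤ ∑ r, (B ^ m) i0 r * (B ^ n) r i0 :=
      Finset.single_le_sum
        (fun r _ => mul_nonneg (Bpow_nonneg hB m i0 r) (Bpow_nonneg hB n r i0))
        (Finset.mem_univ i0)
    exact lt_of_lt_of_le (mul_pos hm hn) single
  -- gcd of the return set is 1, via the subgroup of ℤ it generates
  obtain ⟨g, hg⟩ := Int.subgroup_cyclic (AddSubgroup.closure ((fun n : ℕ => (n : ℤ)) '' Sret))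
  have hdvd : ∀ n ∈ Sret, g.natAbs ∣ n := by
    intro n hn
    have hmem : ((n : ℤ)) ∈ AddSubgroup.closure ((fun n : ℕ => (n : ℤ)) '' Sret) :=
      AddSubgroup.subset_closure ⟨n, hn, rfl⟩
    rw [hg, AddSubgroup.mem_closure_singleton] at hmem
    obtain ⟨z, hz⟩ := hmem
    have : g ∣ (n : ℤ) := ⟨z, by rw [← hz, smul_eq_mul]; ring⟩
    exact Int.natAbs_dvd.mpr this |> Int.ofNat_dvd.mp
  have hgap : g.natAbs = 1 := by
    apply hap i0 ⟨C₀, hC₀, hi0⟩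
    intro n h1 h2
    exact hdvd n ⟨h1, h2⟩
  have hone : (1 : ℤ) ∈ AddSubgroup.closure ((fun n : ℕ => (n : ℤ)) '' Sret) := by
    rw [hg, AddSubgroup.mem_closure_singleton]
    rcases Int.natAbs_eq_iff.mp hgap with h | h
    · exact ⟨1, by rw [h, smul_eq_mul]; norm_num⟩
    · exact ⟨-1, by rw [h, smul_eq_mul]; norm_num⟩
  -- push to ZMod a for a fixed return time a
  obtain ⟨a, ha1, hapos⟩ := hret
  have haS : a ∈ Sret := ⟨ha1, hapos⟩
  haveI : NeZero a := ⟨by omega⟩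
  -- the image of S₀ = insert 0 Sret in ZMod a is an additive subgroup
  have hmul_mem : ∀ (k : ℕ) (x : ℕ), x ∈ Sret → 1 ≤ k → k * x ∈ Sret := by
    intro k x hx hk
    induction k with
    | zero => omega
    | succ k ih =>
      rcases Nat.eq_or_lt_of_le hk with h | h
      · simpa [← h] using hx
      · have := hadd x (k * x) hx (ih (by omega))
        have hrw : x + k * x = (k+1) * x := by ring
        rwa [hrw] at this
  have hsmul_mem0 : ∀ (k : ℕ) (x : ℕ), x ∈ insert 0 Sret → k * x ∈ insert 0 Sret := by
    intro k x hx
    rcases hx with h | h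
    · left; simp [h]
    · rcases Nat.eq_zero_or_pos k with hk | hk
      · left; simp [hk]
      · right; exact hmul_mem k x h hk
  have hadd0 : ∀ m n, m ∈ insert 0 Sret → n ∈ insert 0 Sret → m + n ∈ insert 0 Sret := by
    rintro m n (hm | hm) (hn | hn)
    · left; omega
    · right; rw [hm, zero_add]; exact hn
    · right; rw [hn, add_zero]; exact hm
    · right; exact hadd m n hm hn
  set M : AddSubgroup (ZMod a) :=
    { carrier := {z | ∃ s ∈ insert 0 Sret, ((s : ℕ) : ZMod a) = z}
      zero_mem' := ⟨0, by left; rfl, by simp⟩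
      add_mem' := by
        rintro z1 z2 ⟨s1, hs1, rfl⟩ ⟨s2, hs2, rfl⟩
        exact ⟨s1 + s2, hadd0 s1 s2 hs1 hs2, by push_cast; ring⟩
      neg_mem' := by
        rintro z ⟨s, hs, rfl⟩
        refine ⟨(a - 1) * s, hsmul_mem0 (a-1) s hs, ?_⟩
        push_cast [Nat.cast_sub ha1]
        rw [ZMod.natCast_self]
        ring } with hM
  have honeM : (1 : ZMod a) ∈ M := by
    have hmap : ((1 : ℤ) : ZMod a) ∈ AddSubgroup.closure ((fun z : ℤ => (z : ZMod a)) ''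
        ((fun n : ℕ => (n : ℤ)) '' Sret)) := by
      have := AddSubgroup.mem_map_of_mem (Int.castAddHom (ZMod a)) hone
      rwa [AddMonoidHom.map_closure] at this
    have hsub : ((fun z : ℤ => (z : ZMod a)) '' ((fun n : ℕ => (n : ℤ)) '' Sret)) ⊆ M := by
      rintro z ⟨w, ⟨n, hn, rfl⟩, rfl⟩
      exact ⟨n, Set.mem_insert_of_mem _ hn, by push_cast; ring⟩
    have := (AddSubgroup.closure_le M).mpr hsub hmap
    simpa using this
  -- every residue is represented
  have hrep : ∀ r : ZMod a, ∃ s ∈ insert 0 Sret, ((s : ℕ) : ZMod a) = r := by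
    intro r
    obtain ⟨s1, hs1, hs1eq⟩ := honeM
    refine ⟨r.val * s1, hsmul_mem0 r.val s1 hs1, ?_⟩
    push_cast
    rw [hs1eq, mul_one]
    exact ZMod.natCast_rightInverse r
  choose F hF1 hF2 using hrep
  -- the threshold
  set n₀ : ℕ := a + Finset.univ.sup (fun r : ZMod a => F r) with hn₀
  have hcofinal : ∀ n, n₀ ≤ n → n ∈ Sret := by
    intro n hn
    set r : ZMod a := (n : ZMod a) with hr
    have hs := hF1 r
    have hcast : ((F r : ℕ) : ZMod a) = (n : ZMod a) := hF2 r
    have hFle : F r ≤ Finset.univ.sup (fun r : ZMod a => F r) :=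
      Finset.le_sup (Finset.mem_univ r)
    have hFn : F r + a ≤ n := by omega
    have hmod : F r ≡ n [MOD a] := (ZMod.natCast_eq_natCast_iff _ _ _).mp hcast
    have hdvd2 : a ∣ n - F r := (Nat.modEq_iff_dvd' (by omega)).mp hmod
    obtain ⟨k, hk⟩ := hdvd2
    have hk1 : 1 ≤ k := by
      rcases Nat.eq_zero_or_pos k with h | h
      · exfalso; rw [h, mul_zero] at hk; omega
      · exact h
    have hka : a * k ∈ Sret := by
      rw [mul_comm]
      exact hmul_mem k a haS hk1
    have hnval : n = F r + a * k := by omega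
    rcases hF1 r with h | h
    · rw [hnval, h, zero_add]
      exact hka
    · rw [hnval]
      exact hadd _ _ h hka
  -- choose reaching times and combine
  have hlead' : ∀ j, ∃ n, 0 < (B ^ n) i0 j := fun j => hlead_i0 j
  choose nf hnf using hlead'
  set m : ℕ := n₀ + 1 + Finset.univ.sup nf with hm
  have hmpos : ∀ j, 0 < (B ^ m) i0 j := by
    intro j
    have hsup : nf j ≤ Finset.univ.sup nf := Finset.le_sup (Finset.mem_univ j)
    have hsplit : m = (m - nf j) + nf j := by omega
    have hret' : m - nf j ∈ Sret := hcofinal _ (by omega)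
    rw [hsplit, pow_add, Matrix.mul_apply]
    have single : (B ^ (m - nf j)) i0 i0 * (B ^ nf j) i0 j
        ≤ ∑ r, (B ^ (m - nf j)) i0 r * (B ^ nf j) r j :=
      Finset.single_le_sum
        (fun r _ => mul_nonneg (Bpow_nonneg hB _ i0 r) (Bpow_nonneg hB _ r j))
        (Finset.mem_univ i0)
    exact lt_of_lt_of_le (mul_pos hret'.2 (hnf j)) single
  refine ⟨m, i0, Finset.univ.inf' (Finset.univ_nonempty_iff.mpr ⟨x0⟩) (fun j => (B ^ m) i0 j),
    by omega, ?_, ?_⟩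
  · rw [Finset.lt_inf'_iff]
    intro j _
    exact hmpos j
  · intro j
    exact Finset.inf'_le _ (Finset.mem_univ j)


lemma ue_classes (hN : 0 < N) (hB : IsTransMat B) (hue : UniformlyErgodic B) :
    (∃! C : Set (Fin N), IsClosedCommClass B C) ∧ AperiodicChain B := by
  classical
  obtain ⟨π, hπ, R, ρ, hR, hρ, hconv⟩ := hue
  have hbasis : ∀ j : Fin N, IsProbVec (fun i => if i = j then (1:ℝ) else 0) := by
    intro j
    constructor
    · intro i
      by_cases h : i = j <;> simp [h]
    · simp [Finset.sum_ite_eq']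
  have hmv : ∀ (t : ℕ) (j i : Fin N),
      (B ^ t).mulVec (fun i => if i = j then (1:ℝ) else 0) i = (B ^ t) i j := by
    intro t j i
    simp [Matrix.mulVec, dotProduct, mul_ite, mul_one, mul_zero, Finset.sum_ite_eq']
  have habs : ∀ (t : ℕ) (i j : Fin N), |(B ^ t) i j - π i| ≤ 2 * (R * Real.exp (-ρ * t)) := by
    intro t i j
    have h1 := hconv t _ (hbasis j)
    unfold tvDist at h1
    have h2 : |(B ^ t) i j - π i|
        ≤ ∑ i', |(B ^ t).mulVec (fun i => if i = j then (1:ℝ) else 0) i' - π i'| := by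
      rw [← hmv t j i]
      exact Finset.single_le_sum
        (f := fun i' => |(B ^ t).mulVec (fun i => if i = j then (1:ℝ) else 0) i' - π i'|)
        (fun i' _ => abs_nonneg _) (Finset.mem_univ i)
    linarith
  have hgeo : Filter.Tendsto (fun t : ℕ => 2 * (R * Real.exp (-ρ * t)))
      Filter.atTop (nhds 0) := by
    have hpow : ∀ t : ℕ, Real.exp (-ρ * t) = (Real.exp (-ρ)) ^ t := by
      intro t
      rw [← Real.exp_nat_mul]
      congr 1
      ring
    have h1 : Filter.Tendsto (fun t : ℕ => (Real.exp (-ρ)) ^ t) Filter.atTop (nhds 0) :=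
      tendsto_pow_atTop_nhds_zero_of_lt_one (Real.exp_nonneg _)
        (Real.exp_lt_one_iff.mpr (by linarith))
    have h2 := (h1.const_mul (2 * R))
    simp only [mul_zero] at h2
    apply h2.congr
    intro t
    rw [hpow]
    ring
  have htend : ∀ i j : Fin N, Filter.Tendsto (fun t : ℕ => (B ^ t) i j)
      Filter.atTop (nhds (π i)) := by
    intro i j
    rw [tendsto_iff_dist_tendsto_zero]
    apply squeeze_zero (fun t => dist_nonneg) _ hgeo
    intro t
    rw [Real.dist_eq]
    exact habs t i j
  have hstat : ∀ i, B.mulVec π i = π i := by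
    intro i
    set j0 : Fin N := ⟨0, hN⟩
    have seq1 : Filter.Tendsto (fun t : ℕ => (B ^ (t+1)) i j0) Filter.atTop (nhds (π i)) := by
      have := (htend i j0).comp (Filter.tendsto_add_atTop_nat 1)
      exact this
    have seq2 : Filter.Tendsto (fun t : ℕ => (B ^ (t+1)) i j0) Filter.atTop
        (nhds (B.mulVec π i)) := by
      have heq : ∀ t : ℕ, (B ^ (t+1)) i j0 = ∑ k, B i k * (B ^ t) k j0 := by
        intro t
        rw [pow_succ', Matrix.mul_apply]
      have hterm : Filter.Tendsto (fun t : ℕ => ∑ k, B i k * (B ^ t) k j0) Filter.atTop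
          (nhds (∑ k, B i k * π k)) := by
        apply tendsto_finset_sum
        intro k _
        exact (htend k j0).const_mul (B i k)
      have hmvp : B.mulVec π i = ∑ k, B i k * π k := by
        simp [Matrix.mulVec, dotProduct]
      rw [hmvp]
      exact hterm.congr (fun t => (heq t).symm)
    exact tendsto_nhds_unique seq2 seq1
  have hstatpow : ∀ n, (B ^ n).mulVec π = π := by
    intro n
    induction n with
    | zero => rw [pow_zero]; exact Matrix.one_mulVec π
    | succ n ih =>
      rw [pow_succ', ← Matrix.mulVec_mulVec, ih]
      funext i
      exact hstat i
  have hpos_prop : ∀ j i, Leads B j i → 0 < π j → 0 < π i := by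
    intro j i ⟨n, hn⟩ hj
    have : π i = ∑ k, (B ^ n) i k * π k := by
      rw [← congrFun (hstatpow n) i]
      simp [Matrix.mulVec, dotProduct]
    rw [this]
    have single : (B ^ n) i j * π j ≤ ∑ k, (B ^ n) i k * π k :=
      Finset.single_le_sum
        (fun k _ => mul_nonneg (Bpow_nonneg hB n i k) (hπ.1 k)) (Finset.mem_univ j)
    exact lt_of_lt_of_le (mul_pos hn hj) single
  have hlead_pos : ∀ j i, 0 < π i → Leads B j i := by
    intro j i hi
    have := (htend i j).eventually (eventually_gt_nhds hi)
    exact this.exists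
  have hCne : ∃ i, 0 < π i := by
    by_contra h
    push_neg at h
    have : ∑ i, π i ≤ 0 := Finset.sum_nonpos fun i _ => h i
    rw [hπ.2] at this
    norm_num at this
  obtain ⟨ip, hip⟩ := hCne
  set C : Set (Fin N) := {i | 0 < π i} with hC
  have hCclass : IsClosedCommClass B C := by
    refine ⟨⟨⟨ip, hip⟩, ?_⟩, ?_⟩
    · intro i hi j
      constructor
      · intro hj
        exact ⟨hlead_pos i j hj, hlead_pos j i hi⟩
      · rintro ⟨hij, -⟩
        exact hpos_prop i j hij hi
    · intro j hj i hji
      exact hpos_prop j i hji hj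
  have huniq : ∀ C' : Set (Fin N), IsClosedCommClass B C' → C' = C := by
    intro C' hC'
    obtain ⟨k', hk'⟩ := hC'.1.1
    have hk'ip : Leads B k' ip := hlead_pos k' ip hip
    have hipC' : ip ∈ C' := hC'.2 k' hk' ip hk'ip
    ext j
    rw [hC'.1.2 ip hipC' j, hCclass.1.2 ip hip j]
  refine ⟨⟨C, hCclass, huniq⟩, ?_⟩
  intro i hiC d hd
  obtain ⟨C', hC', hiC'⟩ := hiC
  have : C' = C := huniq C' hC'
  rw [this] at hiC'
  have hipos : 0 < π i := hiC'
  have hev := (htend i i).eventually (eventually_gt_nhds hipos)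
  rw [Filter.eventually_atTop] at hev
  obtain ⟨t₀, ht₀⟩ := hev
  set a := max t₀ 1 with ha
  have h1 : d ∣ a := hd a (le_max_right _ _) (ht₀ a (le_max_left _ _))
  have h2 : d ∣ a + 1 := hd (a+1) (by omega) (ht₀ (a+1) (by omega))
  have h3 : d ∣ 1 := by
    have := Nat.dvd_sub h2 h1
    simpa using this
  exact Nat.dvd_one.mp h3

end Classes

section Final

variable {N : ℕ} {Ω : Type*} [MeasurableSpace Ω]
  {B : Matrix (Fin N) (Fin N) ℝ}
  {μ : Fin N → Fin N → Measure Ω}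
  {X Y : ℕ → Ω → Fin N}

lemma Bpow_le_one (hB : IsTransMat B) (t : ℕ) (i j : Fin N) : (B ^ t) i j ≤ 1 := by
  have h := Bpow_colsum hB t j
  rw [← h]
  exact Finset.single_le_sum (fun k _ => Bpow_nonneg hB t k j) (Finset.mem_univ i)

lemma coord_le_tv {u v : Fin N → ℝ} (i : Fin N) : |u i - v i| ≤ 2 * tvDist u v := by
  unfold tvDist
  have := Finset.single_le_sum (f := fun i' => |u i' - v i'|)
    (fun i' _ => abs_nonneg _) (Finset.mem_univ i)
  linarith

lemma prob_mulVec (hB : IsTransMat B) (t : ℕ) {v : Fin N → ℝ} (hv : IsProbVec v) :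
    IsProbVec ((B ^ t).mulVec v) := by
  constructor
  · intro i
    rw [Matrix.mulVec, dotProduct]
    exact Finset.sum_nonneg fun j _ => mul_nonneg (Bpow_nonneg hB t i j) (hv.1 j)
  · have : ∀ i ∈ Finset.univ, (B ^ t).mulVec v i = ∑ j, (B ^ t) i j * v j := by
      intro i _
      rw [Matrix.mulVec, dotProduct]
    rw [Finset.sum_congr rfl this, Finset.sum_comm]
    have : ∀ j ∈ Finset.univ, ∑ i, (B ^ t) i j * v j = v j := by
      intro j _
      rw [← Finset.sum_mul, Bpow_colsum hB, one_mul]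
    rw [Finset.sum_congr rfl this, hv.2]

lemma basis_prob (j : Fin N) : IsProbVec (fun i => if i = j then (1:ℝ) else 0) := by
  constructor
  · intro i
    by_cases h : i = j <;> simp [h]
  · simp [Finset.sum_ite_eq']

/-- Direction (ii) → (iii). -/
lemma doeblin_to_moment (hN : 0 < N) (hB : IsTransMat B)
    (hμ : ∀ x y, IsProbabilityMeasure (μ x y))
    (hXmeas : ∀ (t : ℕ) (i : Fin N), MeasurableSet {ω | X t ω = i})
    (hYmeas : ∀ (t : ℕ) (i : Fin N), MeasurableSet {ω | Y t ω = i})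
    (hstart : ∀ x y, μ x y {ω | X 0 ω = x ∧ Y 0 ω = y} = 1)
    (hchain : ∀ x y, IsPairChain B (μ x y) X Y)
    (hclass : (∃! C : Set (Fin N), IsClosedCommClass B C) ∧ AperiodicChain B) :
    ∃ β : ℝ, 0 < β ∧
      (⨆ x : Fin N, ⨆ y : Fin N,
        ∫⁻ ω, expVal β (meetTime X Y 1 ω) ∂(μ x y)) < ⊤ := by
  obtain ⟨m, i0, δ, hm1, hδ, hdoeb⟩ := doeblin_of_classes hN hB hclass.1 hclass.2
  have hδ1 : δ ≤ 1 := le_trans (hdoeb i0) (Bpow_le_one hB m i0 i0)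
  set c : ℝ := 1 - δ ^ 2 with hc
  have hc0 : 0 ≤ c := by nlinarith
  have hc1 : c < 1 := by nlinarith
  set r : ℝ := max c (1/2) with hr
  have hr0 : 0 < r := lt_of_lt_of_le (by norm_num) (le_max_right _ _)
  have hr1 : r < 1 := max_lt hc1 (by norm_num)
  have hlogr : Real.log r < 0 := Real.log_neg hr0 hr1
  set s : ℝ := Real.exp (Real.log r / m) with hs
  have hs0 : 0 ≤ s := Real.exp_nonneg _
  have hs1 : s < 1 := by
    rw [hs]
    apply Real.exp_lt_one_iff.mpr
    apply div_neg_of_neg_of_pos hlogr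
    exact_mod_cast (by omega : 0 < m)
  set C' : ℝ := Real.exp ((1 - (m:ℝ))/m * Real.log r) with hC'
  have hC'0 : 0 ≤ C' := Real.exp_nonneg _
  -- geometric bound for offSum
  have hoff : ∀ (t : ℕ) (x y : Fin N), offSum B t x y ≤ C' * s ^ t := by
    intro t x y
    have h1 : offSum B t x y ≤ c ^ (t / m) :=
      offSum_geom hB hm1 hc0 (fun q => colsum_Dpow_le hB hm1 (le_of_lt hδ) hdoeb q) t x y
    have h2 : c ^ (t / m) ≤ r ^ (t / m) :=
      pow_le_pow_left₀ hc0 (le_max_left _ _) _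
    have h3 : r ^ (t / m) = Real.exp ((t / m : ℕ) * Real.log r) := by
      rw [Real.exp_nat_mul, Real.exp_log hr0]
    have hdivge : ((t:ℝ) - ((m:ℝ) - 1)) / m ≤ ((t / m : ℕ) : ℝ) := by
      have hmod := Nat.div_add_mod t m
      have hmodlt : t % m < m := Nat.mod_lt t (by omega)
      have hm0 : (0:ℝ) < m := by exact_mod_cast (by omega : 0 < m)
      rw [div_le_iff₀ hm0]
      have : (m : ℝ) * ((t / m : ℕ) : ℝ) + ((t % m : ℕ) : ℝ) = (t : ℝ) := by
        exact_mod_cast hmod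
      have hmodle : ((t % m : ℕ) : ℝ) ≤ (m : ℝ) - 1 := by
        have : (t % m : ℕ) ≤ m - 1 := by omega
        have hcast : ((t % m : ℕ) : ℝ) ≤ ((m - 1 : ℕ) : ℝ) := by exact_mod_cast this
        have : ((m - 1 : ℕ) : ℝ) = (m : ℝ) - 1 := by
          rw [Nat.cast_sub (by omega)]
          norm_num
        linarith
      nlinarith
    have h4 : ((t / m : ℕ) : ℝ) * Real.log r ≤ (((t:ℝ) - ((m:ℝ) - 1)) / m) * Real.log r := by
      apply mul_le_mul_of_nonpos_right hdivge (le_of_lt hlogr)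
    have h5 : Real.exp ((((t:ℝ) - ((m:ℝ) - 1)) / m) * Real.log r) = C' * s ^ t := by
      rw [hC', hs, ← Real.exp_nat_mul, ← Real.exp_add]
      congr 1
      have hm0 : (m:ℝ) ≠ 0 := by
        have : (0:ℝ) < m := by exact_mod_cast (by omega : 0 < m)
        linarith
      field_simp
      ring
    calc offSum B t x y ≤ r ^ (t / m) := le_trans h1 h2
      _ = Real.exp ((t / m : ℕ) * Real.log r) := h3
      _ ≤ Real.exp ((((t:ℝ) - ((m:ℝ) - 1)) / m) * Real.log r) := Real.exp_le_exp.mpr h4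
      _ = C' * s ^ t := h5
  set β : ℝ := -(Real.log r) / (2 * m) with hβ
  have hβpos : 0 < β := by
    apply div_pos (by linarith)
    have : (0:ℝ) < m := by exact_mod_cast (by omega : 0 < m)
    linarith
  have hβs : Real.exp β * s < 1 := by
    rw [hβ, hs, ← Real.exp_add]
    apply Real.exp_lt_one_iff.mpr
    have hm0 : (0:ℝ) < m := by exact_mod_cast (by omega : 0 < m)
    rw [div_add_div _ _ (by linarith) (by linarith)]
    apply div_neg_of_neg_of_pos
    · ring_nf
      nlinarith [hlogr]
    · nlinarith
  refine ⟨β, hβpos, ?_⟩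
  have hbound : ∀ x y : Fin N,
      ∫⁻ ω, expVal β (meetTime X Y 1 ω) ∂(μ x y)
        ≤ ENNReal.ofReal (Real.exp β * C' * (1 - Real.exp β * s)⁻¹) := by
    intro x y
    haveI := hμ x y
    apply lintegral_expVal_le (fun ω => meetTime_one_le 1 le_rfl ω)
      (fun t => meet_gt_measurable hXmeas hYmeas 1 t) hC'0 hs0 hs1 hβs
    intro t
    rw [measure_meet_gt hB hμ hXmeas hYmeas hstart hchain x y t]
    exact ENNReal.ofReal_le_ofReal (hoff t x y)
  calc ⨆ x : Fin N, ⨆ y : Fin N, ∫⁻ ω, expVal β (meetTime X Y 1 ω) ∂(μ x y)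
      ≤ ENNReal.ofReal (Real.exp β * C' * (1 - Real.exp β * s)⁻¹) :=
        iSup_le fun x => iSup_le fun y => hbound x y
    _ < ⊤ := ENNReal.ofReal_lt_top

/-- Direction (iii) → (i). -/
lemma moment_to_ue (hN : 0 < N) (hB : IsTransMat B)
    (hμ : ∀ x y, IsProbabilityMeasure (μ x y))
    (hXmeas : ∀ (t : ℕ) (i : Fin N), MeasurableSet {ω | X t ω = i})
    (hYmeas : ∀ (t : ℕ) (i : Fin N), MeasurableSet {ω | Y t ω = i})
    (hstart : ∀ x y, μ x y {ω | X 0 ω = x ∧ Y 0 ω = y} = 1)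
    (hchain : ∀ x y, IsPairChain B (μ x y) X Y)
    (hmom : ∃ β : ℝ, 0 < β ∧
      (⨆ x : Fin N, ⨆ y : Fin N,
        ∫⁻ ω, expVal β (meetTime X Y 1 ω) ∂(μ x y)) < ⊤) :
    UniformlyErgodic B := by
  classical
  obtain ⟨β, hβ, hE⟩ := hmom
  set E := ⨆ x : Fin N, ⨆ y : Fin N, ∫⁻ ω, expVal β (meetTime X Y 1 ω) ∂(μ x y) with hEdef
  set M0 : ℝ := E.toReal with hM0
  have hM00 : 0 ≤ M0 := ENNReal.toReal_nonneg
  have hoff : ∀ (t : ℕ) (x y : Fin N), offSum B t x y ≤ M0 * Real.exp (-β * t) := by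
    intro t x y
    have hle : ∫⁻ ω, expVal β (meetTime X Y 1 ω) ∂(μ x y) ≤ E := by
      rw [hEdef]
      exact le_trans (le_iSup (fun y => ∫⁻ ω, expVal β (meetTime X Y 1 ω) ∂(μ x y)) y)
        (le_iSup (fun x => ⨆ y, ∫⁻ ω, expVal β (meetTime X Y 1 ω) ∂(μ x y)) x)
    have h1 := le_lintegral_expVal (T := fun ω => meetTime X Y 1 ω) (ν := μ x y) hβ t
      (meet_gt_measurable hXmeas hYmeas 1 t)
    rw [measure_meet_gt hB hμ hXmeas hYmeas hstart hchain x y t] at h1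
    have h2 : ENNReal.ofReal (Real.exp (β * (t+1)) * offSum B t x y) ≤ E := by
      rw [ENNReal.ofReal_mul (Real.exp_nonneg _)]
      exact le_trans h1 hle
    have h3 : Real.exp (β * (t+1)) * offSum B t x y ≤ M0 :=
      (ENNReal.ofReal_le_iff_le_toReal hE.ne).mp h2
    have hexp : 0 < Real.exp (β * (t+1)) := Real.exp_pos _
    have h4 : offSum B t x y ≤ M0 / Real.exp (β * (t+1)) := by
      rw [le_div_iff₀ hexp]
      linarith [mul_comm (Real.exp (β * (t+1))) (offSum B t x y)]
    calc offSum B t x y ≤ M0 / Real.exp (β * (t+1)) := h4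
      _ = M0 * Real.exp (-(β * (t+1))) := by rw [Real.exp_neg]; ring
      _ ≤ M0 * Real.exp (-β * t) := by
          apply mul_le_mul_of_nonneg_left _ hM00
          apply Real.exp_le_exp.mpr
          nlinarith [Real.exp_pos β]
  -- total variation contraction
  have hTV : ∀ (t : ℕ) {v w : Fin N → ℝ}, IsProbVec v → IsProbVec w →
      tvDist ((B ^ t).mulVec v) ((B ^ t).mulVec w) ≤ M0 * Real.exp (-β * t) := by
    intro t v w hv hw
    exact tv_mixture hB t (fun x y => hoff t x y) ⟨hv.1, hv.2⟩ ⟨hw.1, hw.2⟩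
  set x0 : Fin N := ⟨0, hN⟩
  set μ0 : Fin N → ℝ := fun i => if i = x0 then (1:ℝ) else 0 with hμ0
  have hμ0prob : IsProbVec μ0 := basis_prob x0
  set a : ℕ → Fin N → ℝ := fun t => (B ^ t).mulVec μ0 with ha
  have haprob : ∀ t, IsProbVec (a t) := fun t => prob_mulVec hB t hμ0prob
  have hshift : ∀ t u : ℕ, a (t + u) = (B ^ t).mulVec ((B ^ u).mulVec μ0) := by
    intro t u
    rw [ha]
    simp only
    rw [pow_add, ← Matrix.mulVec_mulVec]
  have hcauchy_bound : ∀ (t u : ℕ), tvDist (a t) (a (t + u)) ≤ M0 * Real.exp (-β * t) := by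
    intro t u
    rw [hshift t u]
    exact hTV t hμ0prob (prob_mulVec hB u hμ0prob)
  have hexp_pow : ∀ t : ℕ, Real.exp (-β * t) = (Real.exp (-β)) ^ t := by
    intro t
    rw [← Real.exp_nat_mul]
    congr 1
    ring
  have hcauchy : ∀ i : Fin N, ∃ L : ℝ,
      Filter.Tendsto (fun t => a t i) Filter.atTop (nhds L) := by
    intro i
    apply cauchySeq_tendsto_of_complete
    apply cauchySeq_of_le_geometric (Real.exp (-β)) (2 * M0)
      (Real.exp_lt_one_iff.mpr (by linarith))
    intro t
    rw [Real.dist_eq]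
    calc |a t i - a (t+1) i| ≤ 2 * tvDist (a t) (a (t+1)) := coord_le_tv i
      _ ≤ 2 * (M0 * Real.exp (-β * t)) := by
          have := hcauchy_bound t 1
          linarith
      _ = 2 * M0 * (Real.exp (-β)) ^ t := by rw [← hexp_pow]; ring
  choose π hπlim using hcauchy
  have hπprob : IsProbVec π := by
    constructor
    · intro i
      apply ge_of_tendsto' (hπlim i)
      intro t
      exact (haprob t).1 i
    · have hsum : Filter.Tendsto (fun t => ∑ i, a t i) Filter.atTop (nhds (∑ i, π i)) :=
        tendsto_finset_sum _ (fun i _ => hπlim i)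
      have hconst : Filter.Tendsto (fun _ : ℕ => (1:ℝ)) Filter.atTop (nhds (∑ i, π i)) := by
        apply hsum.congr
        intro t
        exact (haprob t).2
      exact tendsto_nhds_unique hconst tendsto_const_nhds
  have hfinal : ∀ (t : ℕ) (v : Fin N → ℝ), IsProbVec v →
      tvDist ((B ^ t).mulVec v) π ≤ M0 * Real.exp (-β * t) := by
    intro t v hv
    have hb : ∀ u : ℕ, tvDist ((B ^ t).mulVec v) (a (t + u)) ≤ M0 * Real.exp (-β * t) := by
      intro u
      rw [hshift t u]
      exact hTV t hv (prob_mulVec hB u hμ0prob)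
    have htendu : Filter.Tendsto (fun u => tvDist ((B ^ t).mulVec v) (a (t + u)))
        Filter.atTop (nhds (tvDist ((B ^ t).mulVec v) π)) := by
      unfold tvDist
      apply Filter.Tendsto.div_const
      apply tendsto_finset_sum
      intro i _
      apply Filter.Tendsto.abs
      apply Filter.Tendsto.const_sub
      exact ((hπlim i).comp (Filter.tendsto_add_atTop_nat t)).congr
        (fun u => by simp [Function.comp, Nat.add_comm])
    exact le_of_tendsto htendu (Filter.Eventually.of_forall hb)
  refine ⟨π, hπprob, M0 + 1, β, by linarith, hβ, ?_⟩
  intro t v hv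
  calc tvDist ((B ^ t).mulVec v) π ≤ M0 * Real.exp (-β * t) := hfinal t v hv
    _ ≤ (M0 + 1) * Real.exp (-β * t) := by
        have := Real.exp_pos (-β * t)
        nlinarith

end Final

/-- **Characterisation of uniform ergodicity** for a finite-state chain `B`:
uniform ergodicity ⟺ a unique closed communicating class and aperiodicity ⟺ the
first meeting time of two independent copies has finite exponential moments,
uniformly in the starting states. -/
theorem uniformly_ergodic_tfae {N : ℕ} (hN : 0 < N)
    (B : Matrix (Fin N) (Fin N) ℝ) (hB : IsTransMat B)
    {Ω : Type*} [MeasurableSpace Ω]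
    (μ : Fin N → Fin N → Measure Ω) (hμ : ∀ x y, IsProbabilityMeasure (μ x y))
    (X Y : ℕ → Ω → Fin N)
    (hXmeas : ∀ (t : ℕ) (i : Fin N), MeasurableSet {ω | X t ω = i})
    (hYmeas : ∀ (t : ℕ) (i : Fin N), MeasurableSet {ω | Y t ω = i})
    (hstart : ∀ x y, μ x y {ω | X 0 ω = x ∧ Y 0 ω = y} = 1)
    (hchain : ∀ x y, IsPairChain B (μ x y) X Y) :
    List.TFAE
      [UniformlyErgodic B,
        (∃! C : Set (Fin N), IsClosedCommClass B C) ∧ AperiodicChain B,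
        ∃ β : ℝ, 0 < β ∧
          (⨆ x : Fin N, ⨆ y : Fin N,
            ∫⁻ ω, expVal β (meetTime X Y 1 ω) ∂(μ x y)) < ⊤] := by
  tfae_have 1 → 2 := fun h => ue_classes hN hB h
  tfae_have 2 → 3 := fun h => doeblin_to_moment hN hB hμ hXmeas hYmeas hstart hchain h
  tfae_have 3 → 1 := fun h => moment_to_ue hN hB hμ hXmeas hYmeas hstart hchain h
  tfae_finish
end DiscreteEBSDE
end
end

section
/- (Uniform ergodicity under γ-controlled perturbations) Let A be a transition matrix on the finite state space S whose induced Markov chain is uniformly ergodic, and let γ ∈ (0,1). Then for every ε > 0 there exists ρ > 0, depending only on A, γ and ε, such that for every transition matrix B with B ⪰_γ A, the Markov chain induced by B is uniformly ergodic with constants R = 1 + ε and ρ: there exists a probability measure π_B on S (the unique invariant measure of B) such that sup_μ ‖B^tμ − π_B‖_TV ≤ (1+ε)e^{−ρt} for all t ≥ 0, the supremum over all probability measures μ on S. -/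
open MeasureTheory Finset
open scoped ENNReal

noncomputable section

namespace DiscreteEBSDE

section Helpers

variable {N : ℕ}

lemma isTransMat_pow {B : Matrix (Fin N) (Fin N) ℝ} (hB : IsTransMat B) (n : ℕ) :
    IsTransMat (B ^ n) := by
  induction n with
  | zero =>
    refine ⟨fun i j => ?_, fun j => ?_⟩
    · rw [pow_zero]
      simp only [Matrix.one_apply]
      split <;> norm_num
    · rw [pow_zero]
      simp [Matrix.one_apply]
  | succ n ih =>
    rw [pow_succ]
    refine ⟨fun i j => ?_, fun j => ?_⟩
    · rw [Matrix.mul_apply]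
      exact Finset.sum_nonneg fun k _ => mul_nonneg (ih.1 i k) (hB.1 k j)
    · calc ∑ i, (B ^ n * B) i j = ∑ i, ∑ k, (B ^ n) i k * B k j := by
            simp [Matrix.mul_apply]
        _ = ∑ k, (∑ i, (B ^ n) i k) * B k j := by
            rw [Finset.sum_comm]; simp [Finset.sum_mul]
        _ = ∑ k, B k j := by
            refine Finset.sum_congr rfl fun k _ => ?_
            rw [ih.2 k, one_mul]
        _ = 1 := hB.2 j

lemma sum_mulVec {B : Matrix (Fin N) (Fin N) ℝ} (hB : ∀ j, ∑ i, B i j = 1)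
    (v : Fin N → ℝ) : ∑ i, B.mulVec v i = ∑ j, v j := by
  calc ∑ i, B.mulVec v i = ∑ i, ∑ j, B i j * v j := by
        simp [Matrix.mulVec, dotProduct]
    _ = ∑ j, (∑ i, B i j) * v j := by rw [Finset.sum_comm]; simp [Finset.sum_mul]
    _ = ∑ j, v j := by
        refine Finset.sum_congr rfl fun j _ => ?_
        rw [hB j, one_mul]

lemma isProbVec_mulVec {B : Matrix (Fin N) (Fin N) ℝ} (hB : IsTransMat B)
    {μ : Fin N → ℝ} (hμ : IsProbVec μ) : IsProbVec (B.mulVec μ) := by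
  refine ⟨fun i => ?_, ?_⟩
  · simp only [Matrix.mulVec, dotProduct]
    exact Finset.sum_nonneg fun j _ => mul_nonneg (hB.1 i j) (hμ.1 j)
  · rw [sum_mulVec hB.2, hμ.2]

lemma abs_mulVec_le {M : Matrix (Fin N) (Fin N) ℝ} {c : ℝ} (h0 : ∀ i j, 0 ≤ M i j)
    (hc : ∀ j, ∑ i, M i j ≤ c) (w : Fin N → ℝ) :
    ∑ i, |M.mulVec w i| ≤ c * ∑ j, |w j| := by
  calc ∑ i, |M.mulVec w i| ≤ ∑ i, ∑ j, M i j * |w j| := by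
        refine Finset.sum_le_sum fun i _ => ?_
        simp only [Matrix.mulVec, dotProduct]
        refine (Finset.abs_sum_le_sum_abs _ _).trans ?_
        refine Finset.sum_le_sum fun j _ => ?_
        rw [abs_mul, abs_of_nonneg (h0 i j)]
    _ = ∑ j, (∑ i, M i j) * |w j| := by rw [Finset.sum_comm]; simp [Finset.sum_mul]
    _ ≤ ∑ j, c * |w j| := Finset.sum_le_sum fun j _ =>
        mul_le_mul_of_nonneg_right (hc j) (abs_nonneg _)
    _ = c * ∑ j, |w j| := by rw [Finset.mul_sum]

lemma doeblin_step {M : Matrix (Fin N) (Fin N) ℝ} {ν : Fin N → ℝ}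
    (hν : ∀ i, 0 ≤ ν i) (hmin : ∀ i j, ν i ≤ M i j) (hcol : ∀ j, ∑ i, M i j = 1)
    {w : Fin N → ℝ} (hw : ∑ j, w j = 0) :
    ∑ i, |M.mulVec w i| ≤ (1 - ∑ i, ν i) * ∑ j, |w j| := by
  set C : Matrix (Fin N) (Fin N) ℝ := fun i j => M i j - ν i with hC
  have hCe : C.mulVec w = M.mulVec w := by
    funext i
    simp only [Matrix.mulVec, dotProduct, hC, sub_mul, Finset.sum_sub_distrib,
      ← Finset.mul_sum, hw, mul_zero, sub_zero]
  rw [← hCe]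
  refine abs_mulVec_le (fun i j => ?_) (fun j => ?_) w
  · simp only [hC]; linarith [hmin i j]
  · exact le_of_eq (by simp only [hC, Finset.sum_sub_distrib, hcol j])

lemma doeblin_iter {M : Matrix (Fin N) (Fin N) ℝ} {q : ℝ} (hq0 : 0 ≤ q)
    (hM : IsTransMat M)
    (hle : ∀ w : Fin N → ℝ, ∑ j, w j = 0 → ∑ i, |M.mulVec w i| ≤ q * ∑ j, |w j|)
    (k : ℕ) : ∀ w : Fin N → ℝ, ∑ j, w j = 0 →
      ∑ i, |(M ^ k).mulVec w i| ≤ q ^ k * ∑ j, |w j| := by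
  induction k with
  | zero => intro w _; simp [Matrix.mulVec_one]
  | succ k ih =>
    intro w hw
    rw [pow_succ, ← Matrix.mulVec_mulVec]
    have hsum : ∑ j, M.mulVec w j = 0 := by rw [sum_mulVec hM.2, hw]
    calc ∑ i, |(M ^ k).mulVec (M.mulVec w) i| ≤ q ^ k * ∑ j, |M.mulVec w j| :=
          ih _ hsum
      _ ≤ q ^ k * (q * ∑ j, |w j|) :=
          mul_le_mul_of_nonneg_left (hle w hw) (pow_nonneg hq0 k)
      _ = q ^ (k + 1) * ∑ j, |w j| := by ring

lemma entry_pow_nonneg {X : Matrix (Fin N) (Fin N) ℝ} (hX : ∀ i j, 0 ≤ X i j)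
    (n : ℕ) : ∀ i j, 0 ≤ (X ^ n) i j := by
  induction n with
  | zero =>
    intro i j; rw [pow_zero]; simp only [Matrix.one_apply]; split <;> norm_num
  | succ n ih =>
    intro i j
    rw [pow_succ, Matrix.mul_apply]
    exact Finset.sum_nonneg fun k _ => mul_nonneg (ih i k) (hX k j)

lemma pow_entry_le {A B : Matrix (Fin N) (Fin N) ℝ} {γ : ℝ} (hγ0 : 0 ≤ γ)
    (hA : ∀ i j, 0 ≤ A i j) (hAB : ∀ i j, γ * A i j ≤ B i j) (n : ℕ) :
    ∀ i j, γ ^ n * (A ^ n) i j ≤ (B ^ n) i j := by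
  have hB0 : ∀ i j, 0 ≤ B i j := fun i j =>
    le_trans (mul_nonneg hγ0 (hA i j)) (hAB i j)
  induction n with
  | zero => intro i j; simp
  | succ n ih =>
    intro i j
    rw [pow_succ, pow_succ, pow_succ, Matrix.mul_apply, Matrix.mul_apply, Finset.mul_sum]
    refine Finset.sum_le_sum fun k _ => ?_
    have h := mul_le_mul (ih i k) (hAB k j) (mul_nonneg hγ0 (hA k j))
      (entry_pow_nonneg hB0 n i k)
    calc γ ^ n * γ * ((A ^ n) i k * A k j)
        = γ ^ n * (A ^ n) i k * (γ * A k j) := by ring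
      _ ≤ (B ^ n) i k * B k j := h

lemma mulVec_pow_fixed {B : Matrix (Fin N) (Fin N) ℝ} {π : Fin N → ℝ}
    (h : B.mulVec π = π) (n : ℕ) : (B ^ n).mulVec π = π := by
  induction n with
  | zero => simp [Matrix.mulVec_one]
  | succ n ih => rw [pow_succ, ← Matrix.mulVec_mulVec, h, ih]

lemma sum_abs_sub_le_two {μ ν : Fin N → ℝ} (hμ : IsProbVec μ) (hν : IsProbVec ν) :
    ∑ i, |μ i - ν i| ≤ 2 := by
  calc ∑ i, |μ i - ν i| ≤ ∑ i, (μ i + ν i) := by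
        refine Finset.sum_le_sum fun i _ => ?_
        refine (abs_sub _ _).trans ?_
        rw [abs_of_nonneg (hμ.1 i), abs_of_nonneg (hν.1 i)]
    _ = 2 := by rw [Finset.sum_add_distrib, hμ.2, hν.2]; norm_num

end Helpers

set_option maxHeartbeats 1600000 in
/-- **Uniform ergodicity under `γ`-controlled perturbations.** If the chain `A` is
uniformly ergodic and `γ ∈ (0,1)`, then for every `ε > 0` there is a rate `ρ > 0`,
depending only on `A`, `γ` and `ε`, such that every transition matrix `B ⪰_γ A` is
uniformly ergodic with constants `R = 1 + ε` and `ρ`. -/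
theorem uniformly_ergodic_perturbation {N : ℕ}
    (A : Matrix (Fin N) (Fin N) ℝ) (hA : IsTransMat A) (hAerg : UniformlyErgodic A)
    (γ : ℝ) (hγ : γ ∈ Set.Ioo (0 : ℝ) 1) :
    ∀ ε : ℝ, 0 < ε → ∃ ρ : ℝ, 0 < ρ ∧
      ∀ B : Matrix (Fin N) (Fin N) ℝ, IsTransMat B → (∀ i j, γ * A i j ≤ B i j) →
        ∃ πB : Fin N → ℝ, IsProbVec πB ∧ B.mulVec πB = πB ∧
          ∀ (t : ℕ) (μ : Fin N → ℝ), IsProbVec μ →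
            tvDist ((B ^ t).mulVec μ) πB ≤ (1 + ε) * Real.exp (-ρ * t) := by
  obtain ⟨πA, hπA, R, ρA, hR, hρA, herg⟩ := hAerg
  intro ε hε
  have hN : 0 < N := by
    rcases Nat.eq_zero_or_pos N with h | h
    · exfalso; have h2 := hπA.2; subst h; simp at h2
    · exact h
  have hNR : (0:ℝ) < N := by exact_mod_cast hN
  obtain ⟨hγ0, hγ1⟩ := hγ
  -- choose t₀ with R * exp (-ρA t₀) ≤ 1/(8N) and t₀ ≥ 1
  have hbase : Real.exp (-ρA) < 1 := Real.exp_lt_one_iff.mpr (by linarith)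
  have htend : Filter.Tendsto (fun n : ℕ => Real.exp (-ρA) ^ n) Filter.atTop (nhds 0) :=
    tendsto_pow_atTop_nhds_zero_of_lt_one (Real.exp_nonneg _) hbase
  have hpos : (0:ℝ) < 1 / (8 * N) / R := by positivity
  obtain ⟨n₀, hn₀⟩ := Filter.eventually_atTop.mp (htend.eventually (gt_mem_nhds hpos))
  set t₀ : ℕ := max n₀ 1 with ht₀def
  have ht₀1 : 1 ≤ t₀ := le_max_right _ _
  have ht₀R : (1:ℝ) ≤ (t₀:ℝ) := by exact_mod_cast ht₀1
  have hη : R * Real.exp (-ρA * t₀) ≤ 1 / (8 * N) := by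
    have h1 := hn₀ t₀ (le_max_left _ _)
    have h2 : Real.exp (-ρA * t₀) = Real.exp (-ρA) ^ t₀ := by
      rw [mul_comm, Real.exp_nat_mul]
    rw [h2]
    calc R * Real.exp (-ρA) ^ t₀ ≤ R * (1 / (8 * N) / R) :=
          mul_le_mul_of_nonneg_left h1.le hR.le
      _ = 1 / (8 * N) := by field_simp
  -- the entries of A^t₀ nearly dominate πA
  have hAent : ∀ i j, πA i - 1 / (4 * N) ≤ (A ^ t₀) i j := by
    intro i j
    have hsingle : IsProbVec (Pi.single j (1:ℝ)) := by
      constructor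
      · intro i; rw [Pi.single_apply]; split <;> norm_num
      · simp
    have h1 := herg t₀ _ hsingle
    have hcol : (A ^ t₀).mulVec (Pi.single j 1) = fun i => (A ^ t₀) i j := by
      rw [Matrix.mulVec_single]; funext i; simp
    rw [hcol] at h1
    have h3 : tvDist (fun i => (A ^ t₀) i j) πA ≤ 1 / (8 * N) := le_trans h1 hη
    unfold tvDist at h3
    simp only at h3
    have hNval : 2 * (1 / (8 * (N:ℝ))) = 1 / (4 * N) := by field_simp; ring
    have h2 : |(A ^ t₀) i j - πA i| ≤ ∑ x, |(A ^ t₀) x j - πA x| :=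
      Finset.single_le_sum (f := fun x => |(A ^ t₀) x j - πA x|)
        (fun x _ => abs_nonneg _) (Finset.mem_univ i)
    have h2b : ∑ x, |(A ^ t₀) x j - πA x| ≤ 1 / (4 * N) := by linarith
    have h4 := abs_le.mp (le_trans h2 h2b)
    linarith [h4.1]
  set ν : Fin N → ℝ := fun i => γ ^ t₀ * max (πA i - 1 / (4 * N)) 0 with hνdef
  set β : ℝ := ∑ i, ν i with hβdef
  have hν0 : ∀ i, 0 ≤ ν i := fun i => mul_nonneg (pow_nonneg hγ0.le t₀) (le_max_right _ _)
  have hβub : β ≤ γ ^ t₀ := by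
    rw [hβdef]
    calc ∑ i, ν i ≤ ∑ i, γ ^ t₀ * πA i := by
          refine Finset.sum_le_sum fun i _ => ?_
          refine mul_le_mul_of_nonneg_left ?_ (pow_nonneg hγ0.le t₀)
          refine max_le ?_ (hπA.1 i)
          have : (0:ℝ) ≤ 1 / (4 * N) := by positivity
          linarith
      _ = γ ^ t₀ := by rw [← Finset.mul_sum, hπA.2, mul_one]
  have hβlb : γ ^ t₀ * (3 / 4) ≤ β := by
    rw [hβdef]
    have hsum : ∑ i, γ ^ t₀ * (πA i - 1 / (4 * N)) = γ ^ t₀ * (3 / 4) := by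
      rw [← Finset.mul_sum, Finset.sum_sub_distrib, hπA.2, Finset.sum_const,
        Finset.card_univ, Fintype.card_fin, nsmul_eq_mul]
      have hc : (N:ℝ) * (1 / (4 * N)) = 1 / 4 := by field_simp
      rw [hc]; norm_num
    rw [← hsum]
    exact Finset.sum_le_sum fun i _ =>
      mul_le_mul_of_nonneg_left (le_max_left _ _) (pow_nonneg hγ0.le t₀)
  set q : ℝ := 1 - β with hqdef
  have hγt0 : 0 < γ ^ t₀ := pow_pos hγ0 t₀
  have hγt1 : γ ^ t₀ ≤ γ := by
    calc γ ^ t₀ ≤ γ ^ 1 := pow_le_pow_of_le_one hγ0.le hγ1.le ht₀1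
      _ = γ := pow_one γ
  have hq0 : 0 < q := by rw [hqdef]; linarith
  have hq1 : q < 1 := by rw [hqdef]; nlinarith
  set ρ : ℝ := min (Real.log (1 + ε) / t₀) (-Real.log q / (2 * t₀)) with hρdef
  have hlogq : Real.log q < 0 := Real.log_neg hq0 hq1
  have hlogε : 0 < Real.log (1 + ε) := Real.log_pos (by linarith)
  have hρpos : 0 < ρ :=
    lt_min (by positivity) (div_pos (by linarith) (by positivity))
  refine ⟨ρ, hρpos, ?_⟩
  intro B hB hBA
  set M := B ^ t₀ with hMdef
  have hMtrans : IsTransMat M := isTransMat_pow hB t₀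
  have hmin : ∀ i j, ν i ≤ M i j := by
    intro i j
    have h1 : γ ^ t₀ * (A ^ t₀) i j ≤ M i j := pow_entry_le hγ0.le hA.1 hBA t₀ i j
    have h2 : max (πA i - 1 / (4 * N)) 0 ≤ (A ^ t₀) i j :=
      max_le (hAent i j) ((isTransMat_pow hA t₀).1 i j)
    calc ν i = γ ^ t₀ * max (πA i - 1 / (4 * N)) 0 := rfl
      _ ≤ γ ^ t₀ * (A ^ t₀) i j := mul_le_mul_of_nonneg_left h2 (pow_nonneg hγ0.le t₀)
      _ ≤ M i j := h1
  have hstep : ∀ w : Fin N → ℝ, ∑ j, w j = 0 →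
      ∑ i, |M.mulVec w i| ≤ q * ∑ j, |w j| := by
    intro w hw
    have h := doeblin_step hν0 hmin hMtrans.2 hw
    rwa [← hβdef, ← hqdef] at h
  have hiter := doeblin_iter hq0.le hMtrans hstep
  -- construct the invariant measure as the limit of M^k u
  set u : Fin N → ℝ := fun _ => (N:ℝ)⁻¹ with hudef
  have hu : IsProbVec u := by
    constructor
    · intro i; rw [hudef]; positivity
    · rw [hudef]; simp [Finset.sum_const, Finset.card_univ]; field_simp
  set x : ℕ → Fin N → ℝ := fun k => (M ^ k).mulVec u with hxdef
  have hxprob : ∀ k, IsProbVec (x k) := fun k =>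
    isProbVec_mulVec (isTransMat_pow hMtrans k) hu
  have hxsucc : ∀ k, x (k + 1) = M.mulVec (x k) := by
    intro k
    show (M ^ (k + 1)).mulVec u = M.mulVec ((M ^ k).mulVec u)
    rw [pow_succ', ← Matrix.mulVec_mulVec]
  have hx1 : ∀ k, x (k + 1) = (M ^ k).mulVec (M.mulVec u) := by
    intro k
    show (M ^ (k + 1)).mulVec u = (M ^ k).mulVec (M.mulVec u)
    rw [pow_succ, ← Matrix.mulVec_mulVec]
  have hdist : ∀ k, dist (x k) (x (k + 1)) ≤ 2 * q ^ k := by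
    intro k
    have hw : ∑ j, (u j - M.mulVec u j) = 0 := by
      rw [Finset.sum_sub_distrib, hu.2, sum_mulVec hMtrans.2, hu.2, sub_self]
    have hb : ∑ i, |(M ^ k).mulVec (fun j => u j - M.mulVec u j) i| ≤ q ^ k * 2 := by
      refine le_trans (hiter k _ hw) ?_
      exact mul_le_mul_of_nonneg_left
        (sum_abs_sub_le_two hu (isProbVec_mulVec hMtrans hu)) (pow_nonneg hq0.le k)
    rw [dist_pi_le_iff (by positivity)]
    intro i
    have hxdiff : x k i - x (k + 1) i =
        (M ^ k).mulVec (fun j => u j - M.mulVec u j) i := by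
      rw [hx1]
      show (M ^ k).mulVec u i - (M ^ k).mulVec (M.mulVec u) i = _
      simp only [Matrix.mulVec, dotProduct, mul_sub, Finset.sum_sub_distrib]
    rw [Real.dist_eq, hxdiff]
    refine le_trans (Finset.single_le_sum
      (f := fun x => |(M ^ k).mulVec (fun j => u j - M.mulVec u j) x|)
      (fun x _ => abs_nonneg _) (Finset.mem_univ i)) ?_
    linarith
  have hcauchy : CauchySeq x := cauchySeq_of_le_geometric q 2 hq1 hdist
  obtain ⟨πB, hπBlim⟩ := cauchySeq_tendsto_of_complete hcauchy
  have hcoord : ∀ i, Filter.Tendsto (fun k => x k i) Filter.atTop (nhds (πB i)) :=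
    fun i => (tendsto_pi_nhds.mp hπBlim) i
  have hπB0 : ∀ i, 0 ≤ πB i := fun i =>
    ge_of_tendsto' (hcoord i) fun k => (hxprob k).1 i
  have hπBsum : ∑ i, πB i = 1 := by
    have h1 : Filter.Tendsto (fun k => ∑ i, x k i) Filter.atTop (nhds (∑ i, πB i)) :=
      tendsto_finset_sum _ fun i _ => hcoord i
    have h2 : (fun k => ∑ i, x k i) = fun _ => (1:ℝ) := funext fun k => (hxprob k).2
    rw [h2] at h1
    exact tendsto_nhds_unique h1 tendsto_const_nhds
  have hπBprob : IsProbVec πB := ⟨hπB0, hπBsum⟩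
  have hMfix : M.mulVec πB = πB := by
    funext i
    have h1 : Filter.Tendsto (fun k => M.mulVec (x k) i) Filter.atTop
        (nhds (M.mulVec πB i)) := by
      simp only [Matrix.mulVec, dotProduct]
      exact tendsto_finset_sum _ fun j _ => (hcoord j).const_mul _
    have h2 : Filter.Tendsto (fun k => x (k + 1) i) Filter.atTop (nhds (πB i)) :=
      (hcoord i).comp (Filter.tendsto_add_atTop_nat 1)
    have h3 : (fun k => x (k + 1) i) = fun k => M.mulVec (x k) i :=
      funext fun k => by rw [hxsucc k]
    rw [h3] at h2
    exact tendsto_nhds_unique h1 h2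
  have huniq : ∀ p : Fin N → ℝ, IsProbVec p → M.mulVec p = p → p = πB := by
    intro p hp hfix
    have hw : ∑ j, (p j - πB j) = 0 := by
      rw [Finset.sum_sub_distrib, hp.2, hπBsum, sub_self]
    have h1 := hstep (fun j => p j - πB j) hw
    have h2 : M.mulVec (fun j => p j - πB j) = fun j => p j - πB j := by
      funext i
      have e1 := congrFun hfix i
      have e2 := congrFun hMfix i
      simp only [Matrix.mulVec, dotProduct] at e1 e2 ⊢
      simp only [mul_sub, Finset.sum_sub_distrib, e1, e2]
    rw [h2] at h1
    have hS0 : 0 ≤ ∑ j, |p j - πB j| :=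
      Finset.sum_nonneg fun j _ => abs_nonneg _
    have hsum0 : ∑ j, |p j - πB j| = 0 := by nlinarith
    funext j
    have h5 := (Finset.sum_eq_zero_iff_of_nonneg
      (fun j _ => abs_nonneg (p j - πB j))).mp hsum0 j (Finset.mem_univ j)
    have h6 := abs_eq_zero.mp h5
    linarith [h6]
  have hBfix : B.mulVec πB = πB := by
    have hcomm : B * M = M * B := (Commute.refl B).pow_right t₀
    have hfix2 : M.mulVec (B.mulVec πB) = B.mulVec πB := by
      rw [Matrix.mulVec_mulVec, ← hcomm, ← Matrix.mulVec_mulVec, hMfix]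
    exact huniq _ (isProbVec_mulVec hB hπBprob) hfix2
  refine ⟨πB, hπBprob, hBfix, ?_⟩
  intro t μ hμ
  set k := t / t₀ with hkdef
  set r := t % t₀ with hrdef
  have htkr : t₀ * k + r = t := Nat.div_add_mod t t₀
  have hrlt : r < t₀ := Nat.mod_lt t (by omega)
  have hpow : B ^ t = M ^ k * B ^ r := by
    rw [hMdef, ← pow_mul, ← pow_add, htkr]
  have hMk : (M ^ k).mulVec πB = πB := mulVec_pow_fixed hMfix k
  set w : Fin N → ℝ := fun j => (B ^ r).mulVec μ j - πB j with hwdef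
  have hwprob : IsProbVec ((B ^ r).mulVec μ) := isProbVec_mulVec (isTransMat_pow hB r) hμ
  have hwsum : ∑ j, w j = 0 := by
    rw [hwdef]
    rw [Finset.sum_sub_distrib, hwprob.2, hπBsum, sub_self]
  have hwle : ∑ j, |w j| ≤ 2 := sum_abs_sub_le_two hwprob hπBprob
  have hdiff : ∀ i, (B ^ t).mulVec μ i - πB i = (M ^ k).mulVec w i := by
    intro i
    have e2 := congrFun hMk i
    rw [hpow, ← Matrix.mulVec_mulVec]
    simp only [Matrix.mulVec, dotProduct] at e2 ⊢
    simp only [hwdef, mul_sub, Finset.sum_sub_distrib, e2]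
    simp only [Matrix.mulVec, dotProduct]
  have hbound : tvDist ((B ^ t).mulVec μ) πB ≤ q ^ k := by
    unfold tvDist
    have h1 : ∑ i, |(B ^ t).mulVec μ i - πB i| = ∑ i, |(M ^ k).mulVec w i| :=
      Finset.sum_congr rfl fun i _ => by rw [hdiff i]
    have h2 := hiter k w hwsum
    have h3 : q ^ k * ∑ j, |w j| ≤ q ^ k * 2 :=
      mul_le_mul_of_nonneg_left hwle (pow_nonneg hq0.le k)
    rw [h1]
    linarith
  refine hbound.trans ?_
  have hρt₀1 : ρ * t₀ ≤ Real.log (1 + ε) := by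
    have h := min_le_left (Real.log (1 + ε) / t₀) (-Real.log q / (2 * t₀))
    rw [hρdef] at *
    calc ρ * t₀ ≤ Real.log (1 + ε) / t₀ * t₀ :=
          mul_le_mul_of_nonneg_right h (by positivity)
      _ = Real.log (1 + ε) := by field_simp
  have hρt₀2 : ρ * t₀ ≤ -Real.log q := by
    have h := min_le_right (Real.log (1 + ε) / t₀) (-Real.log q / (2 * t₀))
    have h2 : ρ * t₀ ≤ -Real.log q / (2 * t₀) * t₀ :=
      mul_le_mul_of_nonneg_right h (by positivity)
    have h3 : -Real.log q / (2 * t₀) * t₀ = -Real.log q / 2 := by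
      field_simp
    rw [h3] at h2
    linarith
  have hrR : (r:ℝ) < (t₀:ℝ) := by exact_mod_cast hrlt
  have htR : ((t₀:ℝ) * k + r) = (t:ℝ) := by exact_mod_cast htkr
  have hkt : (t:ℝ) ≤ (t₀:ℝ) * ((k:ℝ) + 1) := by
    have h2 : (t₀:ℝ) * ((k:ℝ) + 1) = (t₀:ℝ) * k + t₀ := by ring
    linarith [hrR]
  have e1 : Real.exp (-(ρ * (t₀ * (k + 1)))) ≤ Real.exp (-ρ * t) := by
    apply Real.exp_le_exp.mpr
    nlinarith [hρpos.le]
  have e2 : Real.exp (-(ρ * (t₀ * (k + 1)))) =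
      Real.exp (-(ρ * t₀)) * Real.exp (-(ρ * t₀)) ^ k := by
    rw [← Real.exp_nat_mul, ← Real.exp_add]
    congr 1
    push_cast
    ring
  have e3 : 1 / (1 + ε) ≤ Real.exp (-(ρ * t₀)) := by
    have h4 : Real.exp (ρ * t₀) ≤ 1 + ε := by
      have h5 := Real.exp_le_exp.mpr hρt₀1
      rwa [Real.exp_log (by linarith)] at h5
    rw [Real.exp_neg, one_div]
    exact inv_anti₀ (Real.exp_pos _) h4
  have e4 : q ≤ Real.exp (-(ρ * t₀)) := by
    have h6 : Real.log q ≤ -(ρ * t₀) := by linarith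
    calc q = Real.exp (Real.log q) := (Real.exp_log hq0).symm
      _ ≤ _ := Real.exp_le_exp.mpr h6
  have hexpnn : (0:ℝ) ≤ Real.exp (-(ρ * t₀)) ^ k := pow_nonneg (Real.exp_pos _).le k
  calc q ^ k ≤ Real.exp (-(ρ * t₀)) ^ k := pow_le_pow_left₀ hq0.le e4 k
    _ ≤ (1 + ε) * (Real.exp (-(ρ * t₀)) * Real.exp (-(ρ * t₀)) ^ k) := by
        have h7 : 1 ≤ (1 + ε) * Real.exp (-(ρ * t₀)) := by
          have h8 := mul_le_mul_of_nonneg_left e3 (by linarith : (0:ℝ) ≤ 1 + ε)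
          have h9 : (1 + ε) * (1 / (1 + ε)) = 1 := by field_simp
          linarith
        nlinarith
    _ = (1 + ε) * Real.exp (-(ρ * (t₀ * (k + 1)))) := by rw [e2]
    _ ≤ (1 + ε) * Real.exp (-ρ * t) :=
        mul_le_mul_of_nonneg_left e1 (by linarith)
end DiscreteEBSDE
end
end

section
/- (Exponential moments for the split chains, uniformly in the perturbation) Let A be a transition matrix on S whose induced chain is uniformly ergodic, and let γ ∈ (0,1). Then for every ε > 0 there exists β̃ > 0, depending only on A, γ and ε, such that for every transition matrix B with B ⪰_γ A the following holds: let X̌ and Y̌ be two independent Markov chains on the split space Š, each with transition matrix 𝓑 (built from A, B and γ as in the context), and let Š_meet := inf{t ≥ 0 : X̌_t = Y̌_t}. Then sup_{x̌,y̌∈Š} E_{x̌y̌}[e^{βŠ_meet}] ≤ 1 + ε for all β ∈ [0, β̃], where E_{x̌y̌} denotes expectation conditional on X̌_0 = x̌ and Y̌_0 = y̌. -/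
open MeasureTheory Finset
open scoped ENNReal

noncomputable section

namespace DiscreteEBSDE

/-! ### Auxiliary matrix lemmas -/

section MatrixAux

variable {S : Type*} [Fintype S] [DecidableEq S]

lemma isTransMat_one : IsTransMat (1 : Matrix S S ℝ) := by
  refine ⟨fun i j => ?_, fun j => ?_⟩
  · by_cases h : i = j <;> simp [Matrix.one_apply, h]
  · simp [Matrix.one_apply]

lemma IsTransMat.mul {P Q : Matrix S S ℝ} (hP : IsTransMat P) (hQ : IsTransMat Q) :
    IsTransMat (P * Q) := by
  refine ⟨fun i j => ?_, fun j => ?_⟩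
  · rw [Matrix.mul_apply]
    exact Finset.sum_nonneg fun k _ => mul_nonneg (hP.1 i k) (hQ.1 k j)
  · simp only [Matrix.mul_apply]
    rw [Finset.sum_comm]
    calc ∑ k, ∑ i, P i k * Q k j = ∑ k, (∑ i, P i k) * Q k j := by
            simp [Finset.sum_mul]
      _ = 1 := by simp [hP.2, hQ.2]

lemma IsTransMat.pow {P : Matrix S S ℝ} (hP : IsTransMat P) (n : ℕ) : IsTransMat (P ^ n) := by
  induction n with
  | zero => simpa using isTransMat_one
  | succ n ih => rw [pow_succ]; exact ih.mul hP

lemma IsTransMat.mulVec_prob {P : Matrix S S ℝ} (hP : IsTransMat P) {v : S → ℝ}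
    (hv : IsProbVec v) : IsProbVec (P.mulVec v) := by
  refine ⟨fun i => ?_, ?_⟩
  · exact Finset.sum_nonneg fun j _ => mul_nonneg (hP.1 i j) (hv.1 j)
  · simp only [Matrix.mulVec, dotProduct]
    rw [Finset.sum_comm]
    calc ∑ j, ∑ i, P i j * v j = ∑ j, (∑ i, P i j) * v j := by simp [Finset.sum_mul]
      _ = 1 := by simp [hP.2, hv.2]

lemma overlap_of_tv {n : ℕ} (hn : 0 < n) {u v : Fin n → ℝ} (hu : IsProbVec u)
    (hv : IsProbVec v) (h : tvDist u v ≤ 1 / 2) :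
    1 / (4 * n) ≤ ∑ i, u i * v i := by
  have hmin_eq : ∀ i, min (u i) (v i) = (u i + v i - |u i - v i|) / 2 := by
    intro i
    have h1 := min_add_max (u i) (v i)
    have h2 := max_sub_min_eq_abs (u i) (v i)
    have h3 : |u i - v i| = |v i - u i| := abs_sub_comm _ _
    linarith
  have hsum_min : (1 : ℝ) / 2 ≤ ∑ i, min (u i) (v i) := by
    have : ∑ i, min (u i) (v i) = (∑ i, u i + ∑ i, v i - ∑ i, |u i - v i|) / 2 := by
      simp only [hmin_eq]
      rw [← Finset.sum_div, Finset.sum_sub_distrib, Finset.sum_add_distrib]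
    rw [this, hu.2, hv.2]
    have htv : ∑ i, |u i - v i| ≤ 1 := by
      have := h; unfold tvDist at this; linarith
    linarith
  have hcs : (∑ i, min (u i) (v i)) ^ 2 ≤ (n : ℝ) * ∑ i, min (u i) (v i) ^ 2 := by
    simpa using sq_sum_le_card_mul_sum_sq (s := (Finset.univ : Finset (Fin n)))
      (f := fun i => min (u i) (v i))
  have hsq_le : ∑ i, min (u i) (v i) ^ 2 ≤ ∑ i, u i * v i := by
    refine Finset.sum_le_sum fun i _ => ?_
    have h0 : 0 ≤ min (u i) (v i) := le_min (hu.1 i) (hv.1 i)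
    rw [sq]
    exact mul_le_mul (min_le_left _ _) (min_le_right _ _) h0 (hu.1 i)
  have h14 : (1 : ℝ) / 4 ≤ (n : ℝ) * ∑ i, u i * v i := by
    nlinarith [hsum_min, hcs, hsq_le]
  have hn' : (0 : ℝ) < n := by exact_mod_cast hn
  rw [div_le_iff₀ (by positivity)]
  nlinarith

end MatrixAux

/-! ### The split matrix -/

section SplitAux

variable {N : ℕ} {γ : ℝ} {A B : Matrix (Fin N) (Fin N) ℝ}

/-- The base-space column of the split matrix from state `x`. -/
def baseCol {N : ℕ} (γ : ℝ) (A B : Matrix (Fin N) (Fin N) ℝ) (x : Fin N × Bool) :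
    Fin N → ℝ :=
  fun j => if x.2 then A j x.1 else (1 - γ)⁻¹ * (B j x.1 - γ * A j x.1)

lemma splitMatrix_eq (p q : Fin N × Bool) :
    splitMatrix γ A B p q = (if p.2 then γ else 1 - γ) * baseCol γ A B q p.1 := rfl

lemma isProbVec_baseCol (hA : IsTransMat A) (hB : IsTransMat B)
    (hγ : γ ∈ Set.Ioo (0 : ℝ) 1) (hBγ : ∀ i j, γ * A i j ≤ B i j) (x : Fin N × Bool) :
    IsProbVec (baseCol γ A B x) := by
  obtain ⟨hγ0, hγ1⟩ := hγ
  have h1γ : (0 : ℝ) < 1 - γ := by linarith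
  constructor
  · intro j
    unfold baseCol
    rcases x with ⟨x1, _ | _⟩
    · simp only [Bool.false_eq_true, if_false]
      exact mul_nonneg (by positivity) (by have := hBγ j x1; linarith)
    · simpa using hA.1 j x1
  · unfold baseCol
    rcases x with ⟨x1, _ | _⟩
    · simp only [Bool.false_eq_true, if_false]
      rw [← Finset.mul_sum, Finset.sum_sub_distrib, hB.2 x1, ← Finset.mul_sum, hA.2 x1]
      field_simp
    · simpa using hA.2 x1

lemma isTransMat_splitMatrix (hA : IsTransMat A) (hB : IsTransMat B)
    (hγ : γ ∈ Set.Ioo (0 : ℝ) 1) (hBγ : ∀ i j, γ * A i j ≤ B i j) :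
    IsTransMat (splitMatrix γ A B) := by
  obtain ⟨hγ0, hγ1⟩ := hγ
  have hbc := fun x => isProbVec_baseCol hA hB ⟨hγ0, hγ1⟩ hBγ x
  constructor
  · intro p q
    rw [splitMatrix_eq]
    refine mul_nonneg ?_ ((hbc q).1 p.1)
    rcases p with ⟨_, _ | _⟩ <;> simp <;> linarith
  · intro q
    have : ∑ p : Fin N × Bool, splitMatrix γ A B p q
        = ∑ i : Fin N, ((1 - γ) * baseCol γ A B q i + γ * baseCol γ A B q i) := by
      rw [Fintype.sum_prod_type]
      refine Finset.sum_congr rfl fun i _ => ?_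
      simp [splitMatrix_eq]; ring
    rw [this]
    have : ∑ i : Fin N, ((1 - γ) * baseCol γ A B q i + γ * baseCol γ A B q i)
        = ∑ i : Fin N, baseCol γ A B q i := by
      refine Finset.sum_congr rfl fun i _ => by ring
    rw [this, (hbc q).2]

lemma split_pow_lower (hA : IsTransMat A) (hB : IsTransMat B)
    (hγ : γ ∈ Set.Ioo (0 : ℝ) 1) (hBγ : ∀ i j, γ * A i j ≤ B i j) (x : Fin N × Bool) :
    ∀ (s : ℕ) (i : Fin N),
      γ ^ (s + 1) * ((A ^ s).mulVec (baseCol γ A B x)) i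
        ≤ ((splitMatrix γ A B) ^ (s + 1)) (i, true) x := by
  obtain ⟨hγ0, hγ1⟩ := hγ
  have hP := isTransMat_splitMatrix hA hB ⟨hγ0, hγ1⟩ hBγ
  intro s
  induction s with
  | zero =>
    intro i
    rw [pow_zero, Matrix.one_mulVec, pow_one, pow_one]
    exact le_of_eq (by rw [splitMatrix_eq]; simp)
  | succ s ih =>
    intro i
    have hPp := hP.pow (s + 1)
    have hlhs : ((A ^ (s + 1)).mulVec (baseCol γ A B x)) i
        = ∑ j, A i j * ((A ^ s).mulVec (baseCol γ A B x)) j := by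
      rw [pow_succ', ← Matrix.mulVec_mulVec]
      simp [Matrix.mulVec, dotProduct]
    have hrhs : ((splitMatrix γ A B) ^ (s + 1 + 1)) (i, true) x
        = ∑ q : Fin N × Bool, splitMatrix γ A B (i, true) q
            * ((splitMatrix γ A B) ^ (s + 1)) q x := by
      rw [pow_succ', Matrix.mul_apply]
    rw [hlhs, hrhs, Finset.mul_sum]
    have hstep : ∑ j, γ ^ (s + 1 + 1) * (A i j * ((A ^ s).mulVec (baseCol γ A B x)) j)
        ≤ ∑ j, splitMatrix γ A B (i, true) (j, true)
            * ((splitMatrix γ A B) ^ (s + 1)) (j, true) x := by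
      refine Finset.sum_le_sum fun j _ => ?_
      have hsm : splitMatrix γ A B (i, true) (j, true) = γ * A i j := by
        simp [splitMatrix]
      rw [hsm]
      have h1 : γ ^ (s + 1 + 1) * (A i j * ((A ^ s).mulVec (baseCol γ A B x)) j)
          = (γ * A i j) * (γ ^ (s + 1) * ((A ^ s).mulVec (baseCol γ A B x)) j) := by ring
      rw [h1]
      exact mul_le_mul_of_nonneg_left (ih j) (mul_nonneg (le_of_lt hγ0) (hA.1 i j))
    refine le_trans hstep ?_
    rw [Fintype.sum_prod_type]
    have : ∀ j : Fin N, splitMatrix γ A B (i, true) (j, true)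
          * ((splitMatrix γ A B) ^ (s + 1)) (j, true) x
        ≤ ∑ b : Bool, splitMatrix γ A B (i, true) (j, b)
            * ((splitMatrix γ A B) ^ (s + 1)) (j, b) x := by
      intro j
      rw [Fintype.sum_bool]
      have h0 : 0 ≤ splitMatrix γ A B (i, true) (j, false)
          * ((splitMatrix γ A B) ^ (s + 1)) (j, false) x :=
        mul_nonneg (hP.1 _ _) (hPp.1 _ _)
      linarith
    exact Finset.sum_le_sum fun j _ => this j

lemma tvDist_triangle {n : ℕ} (u v π : Fin n → ℝ) :
    tvDist u v ≤ tvDist u π + tvDist v π := by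
  unfold tvDist
  rw [← add_div, div_le_div_iff_of_pos_right (by norm_num)]
  rw [← Finset.sum_add_distrib]
  refine Finset.sum_le_sum fun i _ => ?_
  have h1 := abs_sub_le (u i) (π i) (v i)
  have h2 : |π i - v i| = |v i - π i| := abs_sub_comm _ _
  linarith

/-- The key coupling estimate: a number of steps `m` and an overlap `δ`, not depending
on `B`, such that two independent copies of the split chain meet at time `m` with
probability at least `δ`. -/
lemma exists_coupling {N : ℕ} (hN : 0 < N) (A : Matrix (Fin N) (Fin N) ℝ)
    (hA : IsTransMat A) (hAerg : UniformlyErgodic A) {γ : ℝ}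
    (hγ : γ ∈ Set.Ioo (0 : ℝ) 1) :
    ∃ m : ℕ, 0 < m ∧ ∃ δ : ℝ, 0 < δ ∧ δ ≤ 1 / 2 ∧
      ∀ B, IsTransMat B → (∀ i j, γ * A i j ≤ B i j) →
        ∀ x y : Fin N × Bool,
          δ ≤ ∑ p, ((splitMatrix γ A B) ^ m) p x * ((splitMatrix γ A B) ^ m) p y := by
  obtain ⟨hγ0, hγ1⟩ := hγ
  obtain ⟨π, hπ, R, ρ, hR, hρ, herg⟩ := hAerg
  set t₀ := ⌈Real.log (4 * R) / ρ⌉₊ with ht₀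
  have hdecay : R * Real.exp (-ρ * t₀) ≤ 1 / 4 := by
    have h4R : (0 : ℝ) < 4 * R := by linarith
    have h1 : Real.log (4 * R) / ρ ≤ (t₀ : ℝ) := Nat.le_ceil _
    have h2 : Real.log (4 * R) ≤ ρ * t₀ := by
      rw [div_le_iff₀ hρ] at h1; linarith
    have h3 : Real.exp (-ρ * t₀) ≤ Real.exp (-(Real.log (4 * R))) :=
      Real.exp_le_exp.2 (by linarith)
    have h4 : Real.exp (-(Real.log (4 * R))) = (4 * R)⁻¹ := by
      rw [Real.exp_neg, Real.exp_log h4R]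
    calc R * Real.exp (-ρ * t₀) ≤ R * (4 * R)⁻¹ := by
          exact mul_le_mul_of_nonneg_left (h4 ▸ h3) (le_of_lt hR)
      _ = 1 / 4 := by field_simp
  refine ⟨t₀ + 1, Nat.succ_pos _, γ ^ (2 * (t₀ + 1)) / (4 * N), by positivity, ?_, ?_⟩
  · have hpow : γ ^ (2 * (t₀ + 1)) ≤ 1 := pow_le_one₀ (le_of_lt hγ0) (le_of_lt hγ1)
    have h4N : (4 : ℝ) ≤ 4 * N := by
      have : (1 : ℝ) ≤ N := by exact_mod_cast hN
      linarith
    calc γ ^ (2 * (t₀ + 1)) / (4 * N) ≤ 1 / 4 :=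
          div_le_div₀ (by norm_num) hpow (by norm_num) h4N
      _ ≤ 1 / 2 := by norm_num
  · intro B hB hBγ x y
    set P := splitMatrix γ A B with hPdef
    set m := t₀ + 1 with hm
    have hPt := isTransMat_splitMatrix hA hB ⟨hγ0, hγ1⟩ hBγ
    have hPm := hPt.pow m
    have hKx := isProbVec_baseCol hA hB ⟨hγ0, hγ1⟩ hBγ x
    have hKy := isProbVec_baseCol hA hB ⟨hγ0, hγ1⟩ hBγ y
    set u := (A ^ t₀).mulVec (baseCol γ A B x) with hu'
    set v := (A ^ t₀).mulVec (baseCol γ A B y) with hv'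
    have hu : IsProbVec u := (hA.pow t₀).mulVec_prob hKx
    have hv : IsProbVec v := (hA.pow t₀).mulVec_prob hKy
    have htvu : tvDist u π ≤ 1 / 4 := le_trans (herg t₀ _ hKx) hdecay
    have htvv : tvDist v π ≤ 1 / 4 := le_trans (herg t₀ _ hKy) hdecay
    have htvuv : tvDist u v ≤ 1 / 2 :=
      le_trans (tvDist_triangle u v π) (by linarith)
    have hover : 1 / (4 * (N : ℝ)) ≤ ∑ i, u i * v i := overlap_of_tv hN hu hv htvuv
    have hlow : ∀ i : Fin N, γ ^ m * u i ≤ (P ^ m) (i, true) x ∧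
        γ ^ m * v i ≤ (P ^ m) (i, true) y := fun i =>
      ⟨split_pow_lower hA hB ⟨hγ0, hγ1⟩ hBγ x t₀ i,
       split_pow_lower hA hB ⟨hγ0, hγ1⟩ hBγ y t₀ i⟩
    calc γ ^ (2 * m) / (4 * (N : ℝ))
        = γ ^ m * γ ^ m * (1 / (4 * (N : ℝ))) := by
          rw [two_mul, pow_add]; ring
      _ ≤ γ ^ m * γ ^ m * ∑ i, u i * v i := by
          refine mul_le_mul_of_nonneg_left hover (by positivity)
      _ = ∑ i, (γ ^ m * u i) * (γ ^ m * v i) := by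
          rw [Finset.mul_sum]; exact Finset.sum_congr rfl fun i _ => by ring
      _ ≤ ∑ i, (P ^ m) (i, true) x * (P ^ m) (i, true) y := by
          refine Finset.sum_le_sum fun i _ => ?_
          exact mul_le_mul (hlow i).1 (hlow i).2
            (mul_nonneg (by positivity) (hv.1 i)) (hPm.1 _ _)
      _ ≤ ∑ p : Fin N × Bool, (P ^ m) p x * (P ^ m) p y := by
          rw [Fintype.sum_prod_type]
          refine Finset.sum_le_sum fun i _ => ?_
          rw [Fintype.sum_bool]
          have h0 : 0 ≤ (P ^ m) (i, false) x * (P ^ m) (i, false) y :=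
            mul_nonneg (hPm.1 _ _) (hPm.1 _ _)
          linarith

end SplitAux

/-! ### Markov-chain events -/

section ChainAux

variable {E : Type*} [Fintype E] [DecidableEq E] {Ω : Type*} [MeasurableSpace Ω]
  (X Y : ℕ → Ω → E)

/-- The cylinder event: the pair of chains follows `(w, v)` up to time `n`. -/
def cylEvent (n : ℕ) (w v : ℕ → E) : Set Ω :=
  {ω | ∀ s ≤ n, X s ω = w s ∧ Y s ω = v s}

/-- The event that the chains have not met up to time `n` and are at `(p, q)` at time
`n`. -/
def noMeet (n : ℕ) (p q : E) : Set Ω :=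
  {ω | (∀ s ≤ n, X s ω ≠ Y s ω) ∧ X n ω = p ∧ Y n ω = q}

/-- Extension of a finite path to `ℕ`. -/
def pathExt {E : Type*} (n : ℕ) (f : Fin (n + 1) → E) : ℕ → E :=
  fun s => f ⟨min s n, by omega⟩

lemma pathExt_of_le {E : Type*} {n s : ℕ} (h : s ≤ n) (f : Fin (n + 1) → E) :
    pathExt n f s = f ⟨s, by omega⟩ := by
  simp [pathExt, Nat.min_eq_left h]

variable {X Y}

lemma measurableSet_cylEvent (hX : ∀ t p, MeasurableSet {ω | X t ω = p})
    (hY : ∀ t p, MeasurableSet {ω | Y t ω = p}) (n : ℕ) (w v : ℕ → E) :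
    MeasurableSet (cylEvent X Y n w v) := by
  have : cylEvent X Y n w v
      = ⋂ s, ⋂ (_ : s ≤ n), ({ω | X s ω = w s} ∩ {ω | Y s ω = v s}) := by
    ext ω; simp [cylEvent]
  rw [this]
  exact MeasurableSet.iInter fun s => MeasurableSet.iInter fun _ =>
    (hX s (w s)).inter (hY s (v s))

lemma measurableSet_neq (hX : ∀ t p, MeasurableSet {ω | X t ω = p})
    (hY : ∀ t p, MeasurableSet {ω | Y t ω = p}) (s : ℕ) :
    MeasurableSet {ω | X s ω ≠ Y s ω} := by
  have : {ω | X s ω ≠ Y s ω} = (⋃ p : E, ({ω | X s ω = p} ∩ {ω | Y s ω = p}))ᶜ := by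
    ext ω
    simp only [Set.mem_compl_iff, Set.mem_iUnion, Set.mem_inter_iff, Set.mem_setOf_eq]
    constructor
    · rintro h ⟨p, hp, hq⟩; exact h (hp.trans hq.symm)
    · intro h heq; exact h ⟨X s ω, rfl, heq.symm⟩
  rw [this]
  exact (MeasurableSet.iUnion fun p => (hX s p).inter (hY s p)).compl

lemma measurableSet_noMeetAll (hX : ∀ t p, MeasurableSet {ω | X t ω = p})
    (hY : ∀ t p, MeasurableSet {ω | Y t ω = p}) (n : ℕ) :
    MeasurableSet {ω | ∀ s ≤ n, X s ω ≠ Y s ω} := by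
  have : {ω | ∀ s ≤ n, X s ω ≠ Y s ω}
      = ⋂ s, ⋂ (_ : s ≤ n), {ω | X s ω ≠ Y s ω} := by
    ext ω; simp
  rw [this]
  exact MeasurableSet.iInter fun s => MeasurableSet.iInter fun _ =>
    measurableSet_neq hX hY s

lemma measurableSet_noMeet (hX : ∀ t p, MeasurableSet {ω | X t ω = p})
    (hY : ∀ t p, MeasurableSet {ω | Y t ω = p}) (n : ℕ) (p q : E) :
    MeasurableSet (noMeet X Y n p q) := by
  have : noMeet X Y n p q
      = {ω | ∀ s ≤ n, X s ω ≠ Y s ω} ∩ ({ω | X n ω = p} ∩ {ω | Y n ω = q}) := by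
    ext ω; simp [noMeet, and_assoc]
  rw [this]
  exact (measurableSet_noMeetAll hX hY n).inter ((hX n p).inter (hY n q))

lemma noMeet_eq_iUnion (n : ℕ) (p q : E) :
    noMeet X Y n p q = ⋃ fg : (Fin (n + 1) → E) × (Fin (n + 1) → E),
      (cylEvent X Y n (pathExt n fg.1) (pathExt n fg.2) ∩ noMeet X Y n p q) := by
  ext ω
  constructor
  · intro hω
    refine Set.mem_iUnion.2 ⟨(fun t => X t ω, fun t => Y t ω), ?_, hω⟩
    intro s hs
    rw [pathExt_of_le hs, pathExt_of_le hs]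
    exact ⟨rfl, rfl⟩
  · intro hω
    obtain ⟨fg, _, h2⟩ := Set.mem_iUnion.1 hω
    exact h2

lemma cyl_inter_disjoint (n : ℕ) (p q : E) :
    Pairwise (Function.onFun Disjoint fun fg : (Fin (n + 1) → E) × (Fin (n + 1) → E) =>
      cylEvent X Y n (pathExt n fg.1) (pathExt n fg.2) ∩ noMeet X Y n p q) := by
  intro fg fg' hne
  rw [Function.onFun]
  rw [Set.disjoint_left]
  rintro ω ⟨h1, _⟩ ⟨h1', _⟩
  apply hne
  have key : ∀ t : Fin (n + 1), fg.1 t = fg'.1 t ∧ fg.2 t = fg'.2 t := by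
    intro t
    have hle : (t : ℕ) ≤ n := Nat.lt_succ_iff.1 t.2
    have ht := h1 t.1 hle
    have ht' := h1' t.1 hle
    rw [pathExt_of_le hle, pathExt_of_le hle] at ht ht'
    constructor
    · have h := ht.1.symm.trans ht'.1; simpa using h
    · have h := ht.2.symm.trans ht'.2; simpa using h
  exact Prod.ext (funext fun t => (key t).1) (funext fun t => (key t).2)

/-- One-step Markov property over the no-meet events. -/
lemma chain_step {P : Matrix E E ℝ} (μ : Measure Ω) (hchain : IsPairChain P μ X Y)
    (hX : ∀ t p, MeasurableSet {ω | X t ω = p})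
    (hY : ∀ t p, MeasurableSet {ω | Y t ω = p}) (n : ℕ) (p q p' q' : E) :
    μ ({ω | X (n + 1) ω = p ∧ Y (n + 1) ω = q} ∩ noMeet X Y n p' q')
      = ENNReal.ofReal (P p p' * P q q') * μ (noMeet X Y n p' q') := by
  classical
  set D : (Fin (n + 1) → E) × (Fin (n + 1) → E) → Set Ω := fun fg =>
    cylEvent X Y n (pathExt n fg.1) (pathExt n fg.2) ∩ noMeet X Y n p' q' with hD
  have hDmeas : ∀ fg, MeasurableSet (D fg) := fun fg =>
    (measurableSet_cylEvent hX hY n _ _).inter (measurableSet_noMeet hX hY n p' q')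
  have hDdisj := cyl_inter_disjoint (X := X) (Y := Y) n p' q'
  have hterm : ∀ fg, μ ({ω | X (n + 1) ω = p ∧ Y (n + 1) ω = q} ∩ D fg)
      = ENNReal.ofReal (P p p' * P q q') * μ (D fg) := by
    intro fg
    rcases Set.eq_empty_or_nonempty (D fg) with hemp | ⟨ω₀, hω₀⟩
    · rw [hemp, Set.inter_empty]; simp
    · -- the cylinder is "good": it is contained in the no-meet event
      obtain ⟨hcyl₀, hnm₀⟩ := hω₀
      have hgood : ∀ s ≤ n, pathExt n fg.1 s ≠ pathExt n fg.2 s := by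
        intro s hs heq
        have h1 := hcyl₀ s hs
        exact hnm₀.1 s hs (h1.1.trans (heq.trans h1.2.symm))
      have hlast1 : pathExt n fg.1 n = p' := by
        have h1 := hcyl₀ n le_rfl
        rw [← h1.1]; exact hnm₀.2.1
      have hlast2 : pathExt n fg.2 n = q' := by
        have h1 := hcyl₀ n le_rfl
        rw [← h1.2]; exact hnm₀.2.2
      have hDeq : D fg = cylEvent X Y n (pathExt n fg.1) (pathExt n fg.2) := by
        rw [hD]
        refine Set.inter_eq_left.2 fun ω hω => ?_
        refine ⟨fun s hs heq => hgood s hs ?_, ?_, ?_⟩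
        · have h1 := hω s hs
          rw [← h1.1, ← h1.2]; exact heq
        · rw [(hω n le_rfl).1, hlast1]
        · rw [(hω n le_rfl).2, hlast2]
      rw [hDeq]
      have := hchain n (pathExt n fg.1) (pathExt n fg.2) p q
      rw [hlast1, hlast2] at this
      exact this
  have hcover : noMeet X Y n p' q' = ⋃ fg, D fg := noMeet_eq_iUnion n p' q'
  calc μ ({ω | X (n + 1) ω = p ∧ Y (n + 1) ω = q} ∩ noMeet X Y n p' q')
      = μ (⋃ fg, ({ω | X (n + 1) ω = p ∧ Y (n + 1) ω = q} ∩ D fg)) := by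
        rw [hcover, Set.inter_iUnion]
    _ = ∑' fg, μ ({ω | X (n + 1) ω = p ∧ Y (n + 1) ω = q} ∩ D fg) := by
        refine measure_iUnion ?_ fun fg => ?_
        · intro a b hab
          exact (hDdisj hab).mono Set.inter_subset_right Set.inter_subset_right
        · have hE1 : MeasurableSet {ω | X (n + 1) ω = p ∧ Y (n + 1) ω = q} := by
            have : {ω | X (n + 1) ω = p ∧ Y (n + 1) ω = q}
                = {ω | X (n + 1) ω = p} ∩ {ω | Y (n + 1) ω = q} := rfl
            rw [this]; exact (hX _ _).inter (hY _ _)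
          exact hE1.inter (hDmeas fg)
    _ = ∑' fg, ENNReal.ofReal (P p p' * P q q') * μ (D fg) := by
        exact tsum_congr hterm
    _ = ENNReal.ofReal (P p p' * P q q') * ∑' fg, μ (D fg) := ENNReal.tsum_mul_left
    _ = ENNReal.ofReal (P p p' * P q q') * μ (noMeet X Y n p' q') := by
        rw [← measure_iUnion hDdisj hDmeas, ← hcover]

/-- The recursion for the no-meet measures. -/
lemma noMeet_succ_measure {P : Matrix E E ℝ} (μ : Measure Ω)
    (hchain : IsPairChain P μ X Y)
    (hX : ∀ t p, MeasurableSet {ω | X t ω = p})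
    (hY : ∀ t p, MeasurableSet {ω | Y t ω = p}) (n : ℕ) (p q : E) :
    μ (noMeet X Y (n + 1) p q) = if p = q then 0 else
      ∑ p', ∑ q', ENNReal.ofReal (P p p' * P q q') * μ (noMeet X Y n p' q') := by
  classical
  by_cases hpq : p = q
  · rw [if_pos hpq]
    subst hpq
    have : noMeet X Y (n + 1) p p = ∅ := by
      ext ω
      constructor
      · rintro ⟨hne, hp, hq⟩
        exact absurd (hp.trans hq.symm) (hne (n + 1) le_rfl)
      · intro h; exact h.elim
    rw [this, measure_empty]
  · rw [if_neg hpq]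
    have hdec : noMeet X Y (n + 1) p q = ⋃ r : E × E,
        ({ω | X (n + 1) ω = p ∧ Y (n + 1) ω = q} ∩ noMeet X Y n r.1 r.2) := by
      ext ω
      constructor
      · rintro ⟨hne, hXp, hYq⟩
        refine Set.mem_iUnion.2 ⟨(X n ω, Y n ω), ⟨hXp, hYq⟩,
          fun s hs => hne s (hs.trans (Nat.le_succ n)), rfl, rfl⟩
      · intro hω
        obtain ⟨r, ⟨hXp, hYq⟩, hne, _, _⟩ := Set.mem_iUnion.1 hω
        refine ⟨fun s hs => ?_, hXp, hYq⟩
        rcases eq_or_lt_of_le hs with h | h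
        · subst h
          intro heq
          exact hpq ((hXp.symm.trans heq).trans hYq)
        · exact hne s (Nat.lt_succ_iff.1 h)
    have hdisj : Pairwise (Function.onFun Disjoint fun r : E × E =>
        {ω | X (n + 1) ω = p ∧ Y (n + 1) ω = q} ∩ noMeet X Y n r.1 r.2) := by
      intro r r' hne
      rw [Function.onFun, Set.disjoint_left]
      rintro ω ⟨_, _, h1, h2⟩ ⟨_, _, h1', h2'⟩
      exact hne (Prod.ext (h1.symm.trans h1') (h2.symm.trans h2'))
    have hmeas : ∀ r : E × E, MeasurableSet
        ({ω | X (n + 1) ω = p ∧ Y (n + 1) ω = q} ∩ noMeet X Y n r.1 r.2) := by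
      intro r
      have hE1 : MeasurableSet {ω | X (n + 1) ω = p ∧ Y (n + 1) ω = q} := by
        have : {ω | X (n + 1) ω = p ∧ Y (n + 1) ω = q}
            = {ω | X (n + 1) ω = p} ∩ {ω | Y (n + 1) ω = q} := rfl
        rw [this]; exact (hX _ _).inter (hY _ _)
      exact hE1.inter (measurableSet_noMeet hX hY n r.1 r.2)
    rw [hdec, measure_iUnion hdisj hmeas, tsum_fintype]
    rw [Fintype.sum_prod_type]
    refine Finset.sum_congr rfl fun p' _ => Finset.sum_congr rfl fun q' _ => ?_
    exact chain_step μ hchain hX hY n p q p' q'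

lemma noMeet_diag (n : ℕ) (p : E) : noMeet X Y n p p = ∅ := by
  ext ω
  constructor
  · rintro ⟨hne, hp, hq⟩
    exact absurd (hp.trans hq.symm) (hne n le_rfl)
  · intro h; exact h.elim

/-- Iterated form of the recursion, bounding the no-meet measures by `s`-step
transition probabilities. -/
lemma noMeet_iterate {P : Matrix E E ℝ} (hP : IsTransMat P) (μ : Measure Ω)
    (hchain : IsPairChain P μ X Y)
    (hX : ∀ t p, MeasurableSet {ω | X t ω = p})
    (hY : ∀ t p, MeasurableSet {ω | Y t ω = p}) (n : ℕ) :
    ∀ (s : ℕ) (p q : E), μ (noMeet X Y (n + s) p q) ≤ ∑ r : E × E,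
      ENNReal.ofReal ((P ^ s) p r.1) * ENNReal.ofReal ((P ^ s) q r.2)
        * μ (noMeet X Y n r.1 r.2) := by
  intro s
  induction s with
  | zero =>
    intro p q
    apply le_of_eq
    rw [pow_zero]
    rw [show ∑ r : E × E, ENNReal.ofReal ((1 : Matrix E E ℝ) p r.1)
          * ENNReal.ofReal ((1 : Matrix E E ℝ) q r.2) * μ (noMeet X Y n r.1 r.2)
        = ∑ r : E × E, (if r = (p, q) then μ (noMeet X Y n r.1 r.2) else 0) from ?_]
    · rw [Finset.sum_ite_eq' Finset.univ (p, q)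
        (fun r => μ (noMeet X Y n r.1 r.2)), if_pos (Finset.mem_univ _)]
      rfl
    · refine Finset.sum_congr rfl fun r _ => ?_
      by_cases h : r = (p, q)
      · subst h
        simp [Matrix.one_apply]
      · rw [if_neg h]
        have h' : p ≠ r.1 ∨ q ≠ r.2 := by
          by_contra hc
          push_neg at hc
          exact h (Prod.ext hc.1.symm hc.2.symm)
        rcases h' with h' | h'
        · rw [Matrix.one_apply_ne h']; simp
        · rw [Matrix.one_apply_ne h']; simp
  | succ s ih =>
    intro p q
    have hstep := noMeet_succ_measure μ hchain hX hY (n + s) p q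
    have hkey : ∀ a b : E, ENNReal.ofReal ((P ^ (s + 1)) a b)
        = ∑ c : E, ENNReal.ofReal (P a c) * ENNReal.ofReal ((P ^ s) c b) := by
      intro a b
      rw [pow_succ', Matrix.mul_apply, ENNReal.ofReal_sum_of_nonneg
        (fun c _ => mul_nonneg (hP.1 a c) ((hP.pow s).1 c b))]
      exact Finset.sum_congr rfl fun c _ => ENNReal.ofReal_mul (hP.1 a c)
    have hmain : μ (noMeet X Y (n + s + 1) p q) ≤ ∑ t : E × E,
        ENNReal.ofReal (P p t.1 * P q t.2) * μ (noMeet X Y (n + s) t.1 t.2) := by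
      rw [hstep]
      split_ifs with h
      · exact zero_le
      · rw [Fintype.sum_prod_type]
    refine le_trans hmain (le_trans (Finset.sum_le_sum fun t _ =>
      mul_le_mul_right (ih t.1 t.2) _) (le_of_eq ?_))
    -- now pure algebra
    have hsplit : ∀ t : E × E, ENNReal.ofReal (P p t.1 * P q t.2)
        = ENNReal.ofReal (P p t.1) * ENNReal.ofReal (P q t.2) :=
      fun t => ENNReal.ofReal_mul (hP.1 p t.1)
    calc ∑ t : E × E, ENNReal.ofReal (P p t.1 * P q t.2) * (∑ r : E × E,
            ENNReal.ofReal ((P ^ s) t.1 r.1) * ENNReal.ofReal ((P ^ s) t.2 r.2)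
              * μ (noMeet X Y n r.1 r.2))
        = ∑ t : E × E, ∑ r : E × E, (ENNReal.ofReal (P p t.1)
            * ENNReal.ofReal ((P ^ s) t.1 r.1))
            * (ENNReal.ofReal (P q t.2) * ENNReal.ofReal ((P ^ s) t.2 r.2))
            * μ (noMeet X Y n r.1 r.2) := by
          refine Finset.sum_congr rfl fun t _ => ?_
          rw [hsplit t, Finset.mul_sum]
          refine Finset.sum_congr rfl fun r _ => by ring
      _ = ∑ r : E × E, (∑ t : E × E, (ENNReal.ofReal (P p t.1)
            * ENNReal.ofReal ((P ^ s) t.1 r.1))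
            * (ENNReal.ofReal (P q t.2) * ENNReal.ofReal ((P ^ s) t.2 r.2)))
            * μ (noMeet X Y n r.1 r.2) := by
          rw [Finset.sum_comm]
          exact Finset.sum_congr rfl fun r _ => by rw [Finset.sum_mul]
      _ = ∑ r : E × E, ENNReal.ofReal ((P ^ (s + 1)) p r.1)
            * ENNReal.ofReal ((P ^ (s + 1)) q r.2) * μ (noMeet X Y n r.1 r.2) := by
          refine Finset.sum_congr rfl fun r _ => ?_
          congr 1
          rw [hkey p r.1, hkey q r.2, Finset.sum_mul_sum, Fintype.sum_prod_type]

/-- The contraction step: if the `m`-step meeting probability is at least `δ` from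
every pair of states, the total no-meet mass contracts by `1 - δ` every `m` steps. -/
lemma noMeet_contract {P : Matrix E E ℝ} (hP : IsTransMat P) (μ : Measure Ω)
    (hchain : IsPairChain P μ X Y)
    (hX : ∀ t p, MeasurableSet {ω | X t ω = p})
    (hY : ∀ t p, MeasurableSet {ω | Y t ω = p}) {m : ℕ} {δ : ℝ} (hδ0 : 0 ≤ δ)
    (hcoup : ∀ x y : E, δ ≤ ∑ p, (P ^ m) p x * (P ^ m) p y) (n : ℕ) :
    ∑ r : E × E, μ (noMeet X Y (n + m) r.1 r.2)
      ≤ ENNReal.ofReal (1 - δ) * ∑ r : E × E, μ (noMeet X Y n r.1 r.2) := by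
  classical
  have hPm := hP.pow m
  have hiter := noMeet_iterate hP μ hchain hX hY n m
  -- the sum, with the diagonal removed using `noMeet_diag`
  have hdiag0 : ∀ r : E × E, μ (noMeet X Y (n + m) r.1 r.2)
      = if r.1 = r.2 then 0 else μ (noMeet X Y (n + m) r.1 r.2) := by
    intro r
    by_cases h : r.1 = r.2
    · rw [if_pos h, h, noMeet_diag, measure_empty]
    · rw [if_neg h]
  have hbound : ∀ t : E × E, (∑ r : E × E, if r.1 = r.2 then 0 else
      ENNReal.ofReal ((P ^ m) r.1 t.1) * ENNReal.ofReal ((P ^ m) r.2 t.2))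
      ≤ ENNReal.ofReal (1 - δ) := by
    intro t
    set F : E × E → ℝ≥0∞ := fun r =>
      ENNReal.ofReal ((P ^ m) r.1 t.1) * ENNReal.ofReal ((P ^ m) r.2 t.2) with hF
    have htot : ∑ r : E × E, F r = 1 := by
      rw [Fintype.sum_prod_type]
      have : ∀ a : E, ∑ b : E, F (a, b)
          = ENNReal.ofReal ((P ^ m) a t.1) * ∑ b, ENNReal.ofReal ((P ^ m) b t.2) := by
        intro a; rw [Finset.mul_sum]
      simp only [this]
      rw [← Finset.sum_mul]
      have h1 : ∑ a : E, ENNReal.ofReal ((P ^ m) a t.1) = 1 := by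
        rw [← ENNReal.ofReal_sum_of_nonneg (fun a _ => hPm.1 a t.1), hPm.2 t.1,
          ENNReal.ofReal_one]
      have h2 : ∑ b : E, ENNReal.ofReal ((P ^ m) b t.2) = 1 := by
        rw [← ENNReal.ofReal_sum_of_nonneg (fun a _ => hPm.1 a t.2), hPm.2 t.2,
          ENNReal.ofReal_one]
      rw [h1, h2, one_mul]
    have hdiagsum : (∑ r : E × E, if r.1 = r.2 then F r else 0)
        = ∑ a : E, F (a, a) := by
      rw [Fintype.sum_prod_type]
      refine Finset.sum_congr rfl fun a _ => ?_
      have : ∀ b : E, (if (a, b).1 = (a, b).2 then F (a, b) else 0)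
          = if a = b then F (a, b) else 0 := fun b => rfl
      simp only [this]
      rw [Finset.sum_ite_eq Finset.univ a (fun b => F (a, b)), if_pos (Finset.mem_univ _)]
    have hdiag_ge : ENNReal.ofReal δ ≤ ∑ a : E, F (a, a) := by
      have : ∑ a : E, F (a, a) = ENNReal.ofReal (∑ a, (P ^ m) a t.1 * (P ^ m) a t.2) := by
        rw [ENNReal.ofReal_sum_of_nonneg (fun a _ => mul_nonneg (hPm.1 a t.1) (hPm.1 a t.2))]
        exact Finset.sum_congr rfl fun a _ => (ENNReal.ofReal_mul (hPm.1 a t.1)).symm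
      rw [this]
      exact ENNReal.ofReal_le_ofReal (hcoup t.1 t.2)
    have hsplitsum : (∑ r : E × E, if r.1 = r.2 then 0 else F r)
        + (∑ r : E × E, if r.1 = r.2 then F r else 0) = 1 := by
      rw [← Finset.sum_add_distrib, ← htot]
      refine Finset.sum_congr rfl fun r _ => ?_
      by_cases h : r.1 = r.2 <;> simp [h]
    have h1δ : (1 : ℝ≥0∞) - ENNReal.ofReal δ = ENNReal.ofReal (1 - δ) := by
      rw [ENNReal.ofReal_sub 1 hδ0, ENNReal.ofReal_one]
    rw [← h1δ]
    refine ENNReal.le_sub_of_add_le_right ENNReal.ofReal_ne_top ?_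
    calc (∑ r : E × E, if r.1 = r.2 then 0 else F r) + ENNReal.ofReal δ
        ≤ (∑ r : E × E, if r.1 = r.2 then 0 else F r)
          + (∑ r : E × E, if r.1 = r.2 then F r else 0) := by
          rw [hdiagsum]; exact add_le_add le_rfl hdiag_ge
      _ = 1 := hsplitsum
  calc ∑ r : E × E, μ (noMeet X Y (n + m) r.1 r.2)
      = ∑ r : E × E, (if r.1 = r.2 then 0 else μ (noMeet X Y (n + m) r.1 r.2)) :=
        Finset.sum_congr rfl fun r _ => hdiag0 r
    _ ≤ ∑ r : E × E, (if r.1 = r.2 then 0 else ∑ t : E × E,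
          ENNReal.ofReal ((P ^ m) r.1 t.1) * ENNReal.ofReal ((P ^ m) r.2 t.2)
            * μ (noMeet X Y n t.1 t.2)) := by
        refine Finset.sum_le_sum fun r _ => ?_
        by_cases h : r.1 = r.2
        · rw [if_pos h, if_pos h]
        · rw [if_neg h, if_neg h]; exact hiter r.1 r.2
    _ = ∑ t : E × E, (∑ r : E × E, if r.1 = r.2 then 0 else
          ENNReal.ofReal ((P ^ m) r.1 t.1) * ENNReal.ofReal ((P ^ m) r.2 t.2))
          * μ (noMeet X Y n t.1 t.2) := by
        calc ∑ r : E × E, (if r.1 = r.2 then 0 else ∑ t : E × E,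
              ENNReal.ofReal ((P ^ m) r.1 t.1) * ENNReal.ofReal ((P ^ m) r.2 t.2)
                * μ (noMeet X Y n t.1 t.2))
            = ∑ r : E × E, ∑ t : E × E, (if r.1 = r.2 then 0 else
              ENNReal.ofReal ((P ^ m) r.1 t.1) * ENNReal.ofReal ((P ^ m) r.2 t.2)
                * μ (noMeet X Y n t.1 t.2)) := by
              refine Finset.sum_congr rfl fun r _ => ?_
              by_cases h : r.1 = r.2 <;> simp [h]
          _ = ∑ t : E × E, ∑ r : E × E, (if r.1 = r.2 then 0 else
              ENNReal.ofReal ((P ^ m) r.1 t.1) * ENNReal.ofReal ((P ^ m) r.2 t.2)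
                * μ (noMeet X Y n t.1 t.2)) := Finset.sum_comm
          _ = ∑ t : E × E, (∑ r : E × E, if r.1 = r.2 then 0 else
              ENNReal.ofReal ((P ^ m) r.1 t.1) * ENNReal.ofReal ((P ^ m) r.2 t.2))
                * μ (noMeet X Y n t.1 t.2) := by
              refine Finset.sum_congr rfl fun t _ => ?_
              rw [Finset.sum_mul]
              refine Finset.sum_congr rfl fun r _ => ?_
              by_cases h : r.1 = r.2 <;> simp [h]
    _ ≤ ∑ t : E × E, ENNReal.ofReal (1 - δ) * μ (noMeet X Y n t.1 t.2) := by
        exact Finset.sum_le_sum fun t _ => mul_le_mul_left (hbound t) _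
    _ = ENNReal.ofReal (1 - δ) * ∑ r : E × E, μ (noMeet X Y n r.1 r.2) := by
        rw [Finset.mul_sum]

/-- `meetTime X Y 0 > k` iff the chains have not met up to time `k`. -/
lemma meetTime_gt_iff (k : ℕ) (ω : Ω) :
    ((k : ℕ∞) < meetTime X Y 0 ω) ↔ ∀ s ≤ k, X s ω ≠ Y s ω := by
  unfold meetTime
  constructor
  · intro h s hs heq
    have hmem : ((s : ℕ∞)) ∈ {n : ℕ∞ | ∃ t : ℕ, n = (t : ℕ∞) ∧ 0 ≤ t ∧ X t ω = Y t ω} :=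
      ⟨s, rfl, Nat.zero_le _, heq⟩
    have h1 := sInf_le hmem
    have hsk : ((s : ℕ∞)) ≤ (k : ℕ∞) := by exact_mod_cast hs
    exact absurd h (not_lt.2 (h1.trans hsk))
  · intro h
    have h1 : ((k : ℕ∞) + 1)
        ≤ sInf {n : ℕ∞ | ∃ t : ℕ, n = (t : ℕ∞) ∧ 0 ≤ t ∧ X t ω = Y t ω} := by
      refine le_sInf fun n hn => ?_
      obtain ⟨t, rfl, _, heq⟩ := hn
      have hkt : k + 1 ≤ t := by
        by_contra hc
        push_neg at hc
        exact h t (Nat.lt_succ_iff.1 hc) heq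
      exact_mod_cast hkt
    refine lt_of_lt_of_le ?_ h1
    exact ENat.lt_add_one_iff (ENat.coe_ne_top k) |>.2 le_rfl

end ChainAux

/-- Pointwise exponential bound through the layered tail decomposition. -/
lemma expVal_le_one_add {β : ℝ} (hβ : 0 ≤ β) {m : ℕ} (hm : 0 < m) (t : ℕ)
    (f : ℕ → ℝ≥0∞)
    (hf : ∀ K, m * K < t →
      ENNReal.ofReal ((Real.exp (β * m) - 1) * Real.exp (β * m) ^ K) ≤ f K) :
    expVal β (t : ℕ∞) ≤ 1 + ∑' K, f K := by
  set c := Real.exp (β * (m : ℝ)) with hc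
  have hc1 : 1 ≤ c := Real.one_le_exp (mul_nonneg hβ (Nat.cast_nonneg m))
  have hev : expVal β (t : ℕ∞) = ENNReal.ofReal (Real.exp (β * t)) := rfl
  rcases Nat.eq_zero_or_pos t with ht | ht
  · subst ht
    rw [hev]
    simp only [Nat.cast_zero, mul_zero, Real.exp_zero, ENNReal.ofReal_one]
    exact le_add_right le_rfl
  · set q := (t - 1) / m + 1 with hq
    have hq1 : ∀ K, K < q → m * K < t := by
      intro K hK
      have h1 : K ≤ (t - 1) / m := Nat.lt_succ_iff.1 hK
      have h2 : K * m ≤ t - 1 := (Nat.le_div_iff_mul_le hm).1 h1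
      have h3 : m * K ≤ t - 1 := by rw [Nat.mul_comm]; exact h2
      exact lt_of_le_of_lt h3 (Nat.sub_lt ht Nat.one_pos)
    have hq2 : t ≤ m * q := by
      have hlt : t - 1 < m * q := by
        calc t - 1 = m * ((t - 1) / m) + (t - 1) % m := (Nat.div_add_mod _ _).symm
          _ < m * ((t - 1) / m) + m := Nat.add_lt_add_left (Nat.mod_lt _ hm) _
          _ = m * q := (Nat.mul_succ m _).symm
      exact Nat.le_of_pred_lt hlt
    have hexp : Real.exp (β * t) ≤ c ^ q := by
      have h1 : Real.exp (β * t) ≤ Real.exp (β * (m * q : ℕ)) := by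
        refine Real.exp_le_exp.2 (mul_le_mul_of_nonneg_left ?_ hβ)
        exact_mod_cast hq2
      refine le_trans h1 (le_of_eq ?_)
      have : β * ((m * q : ℕ) : ℝ) = (q : ℝ) * (β * m) := by push_cast; ring
      rw [this, Real.exp_nat_mul]
    have hgeom : c ^ q - 1 = ∑ K ∈ Finset.range q, c ^ K * (c - 1) := by
      rw [← Finset.sum_mul, geom_sum_mul]
    calc expVal β (t : ℕ∞) = ENNReal.ofReal (Real.exp (β * t)) := hev
      _ ≤ ENNReal.ofReal (c ^ q) := ENNReal.ofReal_le_ofReal hexp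
      _ = 1 + ENNReal.ofReal (c ^ q - 1) := by
          have h1q : (1 : ℝ) ≤ c ^ q := one_le_pow₀ hc1
          rw [← ENNReal.ofReal_one, ← ENNReal.ofReal_add (by norm_num) (by linarith)]
          norm_num
      _ = 1 + ∑ K ∈ Finset.range q, ENNReal.ofReal ((c - 1) * c ^ K) := by
          rw [hgeom, ENNReal.ofReal_sum_of_nonneg (fun K _ =>
            mul_nonneg (pow_nonneg (by linarith) K) (by linarith))]
          congr 1
          exact Finset.sum_congr rfl fun K _ => by rw [mul_comm]
      _ ≤ 1 + ∑ K ∈ Finset.range q, f K := by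
          refine add_le_add le_rfl (Finset.sum_le_sum fun K hK => ?_)
          exact hf K (hq1 K (Finset.mem_range.1 hK))
      _ ≤ 1 + ∑' K, f K := add_le_add le_rfl (ENNReal.sum_le_tsum _)

/-- **Exponential moments for the split chains, uniformly in the perturbation.** -/
theorem split_chain_exponential_moments {N : ℕ}
    (A : Matrix (Fin N) (Fin N) ℝ) (hA : IsTransMat A) (hAerg : UniformlyErgodic A)
    (γ : ℝ) (hγ : γ ∈ Set.Ioo (0 : ℝ) 1) :
    ∀ ε : ℝ, 0 < ε → ∃ βt : ℝ, 0 < βt ∧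
      ∀ B : Matrix (Fin N) (Fin N) ℝ, IsTransMat B → (∀ i j, γ * A i j ≤ B i j) →
        ∀ (Ω : Type) [MeasurableSpace Ω]
          (μ : Fin N × Bool → Fin N × Bool → Measure Ω)
          (X Y : ℕ → Ω → Fin N × Bool),
          (∀ x y, IsProbabilityMeasure (μ x y)) →
          (∀ (t : ℕ) (p : Fin N × Bool), MeasurableSet {ω | X t ω = p}) →
          (∀ (t : ℕ) (p : Fin N × Bool), MeasurableSet {ω | Y t ω = p}) →
          (∀ x y, μ x y {ω | X 0 ω = x ∧ Y 0 ω = y} = 1) →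
          (∀ x y, IsPairChain (splitMatrix γ A B) (μ x y) X Y) →
          ∀ β : ℝ, 0 ≤ β → β ≤ βt → ∀ x y : Fin N × Bool,
            ∫⁻ ω, expVal β (meetTime X Y 0 ω) ∂(μ x y) ≤ ENNReal.ofReal (1 + ε) := by
  intro ε hε
  rcases Nat.eq_zero_or_pos N with hN0 | hN
  · subst hN0
    exact ⟨1, one_pos, fun B _ _ Ω _ μ X Y _ _ _ _ _ β _ _ x y => x.1.elim0⟩
  obtain ⟨m, hm, δ, hδ0, hδ12, hcoup⟩ := exists_coupling hN A hA hAerg hγ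
  have hmin : (0 : ℝ) < min 1 ε := lt_min one_pos hε
  set s : ℝ := δ * min 1 ε / 2 with hs
  have hs0 : 0 < s := div_pos (mul_pos hδ0 hmin) two_pos
  have hsδ : s ≤ δ / 2 := by
    have h1 : min 1 ε ≤ 1 := min_le_left _ _
    rw [hs, div_le_div_iff_of_pos_right two_pos]
    nlinarith
  refine ⟨Real.log (1 + s) / m, div_pos (Real.log_pos (by linarith)) (by exact_mod_cast hm), ?_⟩
  intro B hB hBγ Ω _ μ X Y hprob hX hY hinit hchain β hβ0 hββt x y
  have hprobxy := hprob x y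
  set P := splitMatrix γ A B with hPdef
  have hPt : IsTransMat P := isTransMat_splitMatrix hA hB hγ hBγ
  have hchainxy := hchain x y
  set c : ℝ := Real.exp (β * m) with hc
  have hc1 : 1 ≤ c := Real.one_le_exp (mul_nonneg hβ0 (Nat.cast_nonneg m))
  have hcs : c ≤ 1 + s := by
    have hβtm : Real.log (1 + s) / m * m = Real.log (1 + s) :=
      div_mul_cancel₀ _ (by exact_mod_cast hm.ne')
    have h1 : β * m ≤ Real.log (1 + s) := by
      calc β * (m : ℝ) ≤ Real.log (1 + s) / m * m :=
            mul_le_mul_of_nonneg_right hββt (Nat.cast_nonneg m)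
        _ = Real.log (1 + s) := hβtm
    calc c ≤ Real.exp (Real.log (1 + s)) := Real.exp_le_exp.2 h1
      _ = 1 + s := Real.exp_log (by linarith)
  -- tail bounds
  have hzero : ∀ p q : Fin N × Bool,
      μ x y (noMeet X Y 0 p q) ≤ (if p = x ∧ q = y then 1 else 0) := by
    intro p q
    by_cases h : p = x ∧ q = y
    · rw [if_pos h]; exact prob_le_one
    · rw [if_neg h]
      have hsub : noMeet X Y 0 p q ⊆ {ω | X 0 ω = x ∧ Y 0 ω = y}ᶜ := by
        rintro ω ⟨_, hp, hq⟩ ⟨hx', hy'⟩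
        exact h ⟨hp.symm.trans hx', hq.symm.trans hy'⟩
      refine le_trans (measure_mono hsub) ?_
      have hms : MeasurableSet {ω | X 0 ω = x ∧ Y 0 ω = y} := by
        have : {ω | X 0 ω = x ∧ Y 0 ω = y} = {ω | X 0 ω = x} ∩ {ω | Y 0 ω = y} := rfl
        rw [this]; exact (hX 0 x).inter (hY 0 y)
      rw [measure_compl hms (measure_ne_top _ _), hinit x y, measure_univ]
      simp
  have htail0 : ∑ r : (Fin N × Bool) × (Fin N × Bool), μ x y (noMeet X Y 0 r.1 r.2) ≤ 1 := by
    refine le_trans (Finset.sum_le_sum fun r _ => hzero r.1 r.2) (le_of_eq ?_)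
    have : ∀ r : (Fin N × Bool) × (Fin N × Bool),
        (if r.1 = x ∧ r.2 = y then (1 : ℝ≥0∞) else 0)
          = (if r = (x, y) then (1 : ℝ≥0∞) else 0) := by
      intro r
      congr 1
      rw [eq_iff_iff]
      constructor
      · rintro ⟨h1, h2⟩; exact Prod.ext h1 h2
      · rintro rfl; exact ⟨rfl, rfl⟩
    simp only [this]
    rw [Finset.sum_ite_eq' Finset.univ ((x, y) : (Fin N × Bool) × (Fin N × Bool))
      (fun _ => (1 : ℝ≥0∞)), if_pos (Finset.mem_univ _)]
  have htailm : ∀ K : ℕ, ∑ r : (Fin N × Bool) × (Fin N × Bool),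
      μ x y (noMeet X Y (m * K) r.1 r.2) ≤ ENNReal.ofReal (1 - δ) ^ K := by
    intro K
    induction K with
    | zero => simpa using htail0
    | succ K ih =>
      have hmul : m * (K + 1) = m * K + m := Nat.mul_succ m K
      rw [hmul]
      calc ∑ r : (Fin N × Bool) × (Fin N × Bool), μ x y (noMeet X Y (m * K + m) r.1 r.2)
          ≤ ENNReal.ofReal (1 - δ) * ∑ r : (Fin N × Bool) × (Fin N × Bool),
              μ x y (noMeet X Y (m * K) r.1 r.2) :=
            noMeet_contract hPt (μ x y) hchainxy hX hY (le_of_lt hδ0)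
              (hcoup B hB hBγ) (m * K)
        _ ≤ ENNReal.ofReal (1 - δ) * ENNReal.ofReal (1 - δ) ^ K :=
            mul_le_mul_right ih _
        _ = ENNReal.ofReal (1 - δ) ^ (K + 1) := (pow_succ' _ _).symm
  have hgt : ∀ k : ℕ, {ω | ((k : ℕ∞)) < meetTime X Y 0 ω}
      = {ω | ∀ s ≤ k, X s ω ≠ Y s ω} := by
    intro k; ext ω; exact meetTime_gt_iff k ω
  have hmeasgt : ∀ k : ℕ, MeasurableSet {ω | ((k : ℕ∞)) < meetTime X Y 0 ω} := by
    intro k; rw [hgt k]; exact measurableSet_noMeetAll hX hY k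
  have htailbound : ∀ K : ℕ, μ x y {ω | (((m * K : ℕ) : ℕ∞)) < meetTime X Y 0 ω}
      ≤ ENNReal.ofReal ((1 - δ) ^ K) := by
    intro K
    rw [hgt (m * K)]
    have hsub : {ω | ∀ s ≤ m * K, X s ω ≠ Y s ω}
        ⊆ ⋃ r : (Fin N × Bool) × (Fin N × Bool), noMeet X Y (m * K) r.1 r.2 := by
      intro ω hω
      exact Set.mem_iUnion.2 ⟨(X (m * K) ω, Y (m * K) ω), hω, rfl, rfl⟩
    calc μ x y {ω | ∀ s ≤ m * K, X s ω ≠ Y s ω}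
        ≤ μ x y (⋃ r : (Fin N × Bool) × (Fin N × Bool), noMeet X Y (m * K) r.1 r.2) :=
          measure_mono hsub
      _ ≤ ∑ r : (Fin N × Bool) × (Fin N × Bool), μ x y (noMeet X Y (m * K) r.1 r.2) :=
          measure_iUnion_fintype_le _ _
      _ ≤ ENNReal.ofReal (1 - δ) ^ K := htailm K
      _ = ENNReal.ofReal ((1 - δ) ^ K) := (ENNReal.ofReal_pow (by linarith) K).symm
  have hTtop : μ x y {ω | meetTime X Y 0 ω = ⊤} = 0 := by
    have hK : ∀ K : ℕ, μ x y {ω | meetTime X Y 0 ω = ⊤} ≤ ENNReal.ofReal ((1 - δ) ^ K) := by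
      intro K
      refine le_trans (measure_mono ?_) (htailbound K)
      intro ω hω
      rw [Set.mem_setOf_eq] at hω ⊢
      rw [hω]
      exact_mod_cast WithTop.coe_lt_top (m * K : ℕ)
    have hlim : Filter.Tendsto (fun K : ℕ => ENNReal.ofReal ((1 - δ) ^ K))
        Filter.atTop (nhds 0) := by
      have h1 : Filter.Tendsto (fun K : ℕ => (1 - δ) ^ K) Filter.atTop (nhds 0) :=
        tendsto_pow_atTop_nhds_zero_of_lt_one (by linarith) (by linarith)
      have h2 := (ENNReal.tendsto_ofReal h1)
      simpa using h2
    have := ge_of_tendsto hlim (Filter.Eventually.of_forall hK)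
    exact le_antisymm this zero_le
  -- the dominating function
  have hae : ∀ᵐ ω ∂(μ x y), expVal β (meetTime X Y 0 ω) ≤ (fun ω => 1 + ∑' K : ℕ,
      Set.indicator {ω' | (((m * K : ℕ) : ℕ∞)) < meetTime X Y 0 ω'}
        (fun _ => ENNReal.ofReal ((c - 1) * c ^ K)) ω) ω := by
    rw [MeasureTheory.ae_iff]
    refine measure_mono_null ?_ hTtop
    intro ω hω
    rw [Set.mem_setOf_eq] at hω ⊢
    by_contra hT
    apply hω
    obtain ⟨t, hteq⟩ : ∃ t : ℕ, meetTime X Y 0 ω = ((t : ℕ) : ℕ∞) := by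
      lift meetTime X Y 0 ω to ℕ using hT with t' ht'
      exact ⟨t', rfl⟩
    rw [hteq]
    refine expVal_le_one_add hβ0 hm t _ fun K hK => ?_
    exact le_of_eq (Set.indicator_of_mem
      (show ω ∈ {ω' | (((m * K : ℕ) : ℕ∞)) < meetTime X Y 0 ω'} by
        rw [Set.mem_setOf_eq, hteq]; exact_mod_cast hK)
      (fun _ => ENNReal.ofReal ((c - 1) * c ^ K))).symm
  -- integrate
  have hint : ∫⁻ ω, (fun ω => 1 + ∑' K : ℕ,
      Set.indicator {ω' | (((m * K : ℕ) : ℕ∞)) < meetTime X Y 0 ω'}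
        (fun _ => ENNReal.ofReal ((c - 1) * c ^ K)) ω) ω ∂(μ x y) = 1 + ∑' K : ℕ,
      ENNReal.ofReal ((c - 1) * c ^ K)
        * μ x y {ω | (((m * K : ℕ) : ℕ∞)) < meetTime X Y 0 ω} := by
    rw [MeasureTheory.lintegral_add_left measurable_const]
    rw [MeasureTheory.lintegral_one, measure_univ]
    congr 1
    rw [MeasureTheory.lintegral_tsum fun K =>
      (measurable_const.indicator (hmeasgt (m * K))).aemeasurable]
    exact tsum_congr fun K => MeasureTheory.lintegral_indicator_const (hmeasgt (m * K)) _
  have hfinal : ∑' K : ℕ, ENNReal.ofReal ((c - 1) * c ^ K)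
      * μ x y {ω | (((m * K : ℕ) : ℕ∞)) < meetTime X Y 0 ω} ≤ ENNReal.ofReal ε := by
    have hterm : ∀ K : ℕ, ENNReal.ofReal ((c - 1) * c ^ K)
        * μ x y {ω | (((m * K : ℕ) : ℕ∞)) < meetTime X Y 0 ω}
        ≤ ENNReal.ofReal (c - 1) * ENNReal.ofReal (c * (1 - δ)) ^ K := by
      intro K
      calc ENNReal.ofReal ((c - 1) * c ^ K)
          * μ x y {ω | (((m * K : ℕ) : ℕ∞)) < meetTime X Y 0 ω}
          ≤ ENNReal.ofReal ((c - 1) * c ^ K) * ENNReal.ofReal ((1 - δ) ^ K) :=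
            mul_le_mul_right (htailbound K) _
        _ = ENNReal.ofReal ((c - 1) * c ^ K * (1 - δ) ^ K) :=
            (ENNReal.ofReal_mul (mul_nonneg (by linarith)
              (pow_nonneg (by linarith) K))).symm
        _ = ENNReal.ofReal ((c - 1) * (c * (1 - δ)) ^ K) := by
            rw [mul_pow, mul_assoc]
        _ = ENNReal.ofReal (c - 1) * ENNReal.ofReal ((c * (1 - δ)) ^ K) :=
            ENNReal.ofReal_mul (by linarith)
        _ = ENNReal.ofReal (c - 1) * ENNReal.ofReal (c * (1 - δ)) ^ K := by
            rw [ENNReal.ofReal_pow (mul_nonneg (by linarith) (by linarith))]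
    calc ∑' K : ℕ, ENNReal.ofReal ((c - 1) * c ^ K)
        * μ x y {ω | (((m * K : ℕ) : ℕ∞)) < meetTime X Y 0 ω}
        ≤ ∑' K : ℕ, ENNReal.ofReal (c - 1) * ENNReal.ofReal (c * (1 - δ)) ^ K :=
          ENNReal.tsum_le_tsum hterm
      _ = ENNReal.ofReal (c - 1) * (1 - ENNReal.ofReal (c * (1 - δ)))⁻¹ := by
          rw [ENNReal.tsum_mul_left, ENNReal.tsum_geometric]
      _ ≤ ENNReal.ofReal (c - 1) * (ENNReal.ofReal (δ / 2))⁻¹ := by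
          refine mul_le_mul_right (ENNReal.inv_le_inv.2 ?_) _
          have hr : ENNReal.ofReal (c * (1 - δ)) ≤ ENNReal.ofReal (1 - δ / 2) := by
            refine ENNReal.ofReal_le_ofReal ?_
            nlinarith
          have h1 : ENNReal.ofReal (δ / 2) = 1 - ENNReal.ofReal (1 - δ / 2) := by
            rw [← ENNReal.ofReal_one, ← ENNReal.ofReal_sub _ (by linarith)]
            norm_num
          rw [h1]
          exact tsub_le_tsub_left hr 1
      _ = ENNReal.ofReal ((c - 1) * (δ / 2)⁻¹) := by
          rw [← ENNReal.ofReal_inv_of_pos (by linarith), ← ENNReal.ofReal_mul (by linarith)]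
      _ ≤ ENNReal.ofReal ε := by
          refine ENNReal.ofReal_le_ofReal ?_
          have h1 : (δ / 2)⁻¹ = 2 / δ := by
            rw [inv_div]
          rw [h1]
          have h2 : (c - 1) * (2 / δ) = 2 * (c - 1) / δ := by ring
          rw [h2, div_le_iff₀ hδ0]
          have h3 : min 1 ε ≤ ε := min_le_right _ _
          nlinarith
  calc ∫⁻ ω, expVal β (meetTime X Y 0 ω) ∂(μ x y)
      ≤ ∫⁻ ω, (fun ω => 1 + ∑' K : ℕ,
      Set.indicator {ω' | (((m * K : ℕ) : ℕ∞)) < meetTime X Y 0 ω'}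
        (fun _ => ENNReal.ofReal ((c - 1) * c ^ K)) ω) ω ∂(μ x y) := MeasureTheory.lintegral_mono_ae hae
    _ = 1 + ∑' K : ℕ, ENNReal.ofReal ((c - 1) * c ^ K)
        * μ x y {ω | (((m * K : ℕ) : ℕ∞)) < meetTime X Y 0 ω} := hint
    _ ≤ 1 + ENNReal.ofReal ε := add_le_add le_rfl hfinal
    _ = ENNReal.ofReal (1 + ε) := by
        rw [ENNReal.ofReal_add (by norm_num) (le_of_lt hε), ENNReal.ofReal_one]
end DiscreteEBSDE
end
end
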